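/- arXiv:2108.04399 — 4 statements merged into one kernel-verified Lean document; each statement's English description precedes it below -/
import Mathlib

section
/- Let Δ ≥ 4, 3 ≤ n₁ ≤ Δ−1, with n₁ + (Δ−2) odd. Let G be obtained from a 2-regular graph H₁ on n₁ vertices and a (Δ−1−n₁)-regular graph H₂ on Δ−2 vertices by adding all edges between V(H₁) and V(H₂). Then G is overfull, i.e., |E(G)| > Δ·⌊|V(G)|/2⌋. -/
open SimpleGraph

/-- A proper edge `k`-coloring of `G` with colors in `[1, k]`. -/
def IsProperEdgeColoring {V : Type*} (G : SimpleGraph V) (k : ℕ) (c : Sym2 V → ℕ) : Prop :=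
  (∀ e ∈ G.edgeSet, c e ∈ Finset.Icc 1 k) ∧
  ∀ e ∈ G.edgeSet, ∀ f ∈ G.edgeSet, e ≠ f → (∃ v : V, v ∈ e ∧ v ∈ f) → c e ≠ c f

/-- `G` has a proper edge coloring with `k` colors. -/
def EdgeColorable {V : Type*} (G : SimpleGraph V) (k : ℕ) : Prop :=
  ∃ c : Sym2 V → ℕ, IsProperEdgeColoring G k c

/-- The set of colors of `[1, k]` missing at `v`. -/
def missingColors {V : Type*} (G : SimpleGraph V) (k : ℕ) (c : Sym2 V → ℕ) (v : V) : Set ℕ :=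
  {α | α ∈ Finset.Icc 1 k ∧ ¬ ∃ e ∈ G.edgeSet, v ∈ e ∧ c e = α}

/-- The subgraph of `G` consisting of the edges colored `α` or `β`;
its components are the `(α, β)`-chains. -/
def chainGraph {V : Type*} (G : SimpleGraph V) (c : Sym2 V → ℕ) (α β : ℕ) : SimpleGraph V :=
  SimpleGraph.fromEdgeSet {e ∈ G.edgeSet | c e = α ∨ c e = β}

/-- The join of two graphs on disjoint vertex sets: the disjoint union of `H₁` and `H₂`
together with all edges between `V(H₁)` and `V(H₂)`. -/
def joinGraph {V₁ V₂ : Type*} (H₁ : SimpleGraph V₁) (H₂ : SimpleGraph V₂) :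
    SimpleGraph (V₁ ⊕ V₂) where
  Adj x y :=
    (∃ a b, x = Sum.inl a ∧ y = Sum.inl b ∧ H₁.Adj a b) ∨
    (∃ a b, x = Sum.inr a ∧ y = Sum.inr b ∧ H₂.Adj a b) ∨
    (∃ a b, x = Sum.inl a ∧ y = Sum.inr b) ∨
    (∃ a b, x = Sum.inr a ∧ y = Sum.inl b)
  symm := by
    constructor
    rintro x y (⟨a, b, hx, hy, h⟩ | ⟨a, b, hx, hy, h⟩ | ⟨a, b, hx, hy⟩ | ⟨a, b, hx, hy⟩)
    · exact Or.inl ⟨b, a, hy, hx, h.symm⟩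
    · exact Or.inr (Or.inl ⟨b, a, hy, hx, h.symm⟩)
    · exact Or.inr (Or.inr (Or.inr ⟨b, a, hy, hx⟩))
    · exact Or.inr (Or.inr (Or.inl ⟨b, a, hy, hx⟩))
  loopless := by
    constructor
    rintro x (⟨a, b, hx, hy, h⟩ | ⟨a, b, hx, hy, h⟩ | ⟨a, b, hx, hy⟩ | ⟨a, b, hx, hy⟩) <;>
      subst hx <;> simp_all


-- With `Δ ≥ 4`, `3 ≤ n₁ ≤ Δ − 1` and `n₁ + (Δ − 2)` odd, the join `G` of a 2-regular
-- graph `H₁` on `n₁` vertices and a `(Δ−1−n₁)`-regular graph `H₂` on `Δ−2` vertices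
-- is overfull: `|E(G)| > Δ * ⌊|V(G)| / 2⌋`.
open Classical in
theorem stmt_4 {V₁ V₂ : Type*} [Fintype V₁] [Fintype V₂]
    (Δ n₁ : ℕ) (hΔ : 4 ≤ Δ) (hn₁ : 3 ≤ n₁) (hn₁' : n₁ ≤ Δ - 1)
    (hodd : Odd (n₁ + (Δ - 2)))
    (H₁ : SimpleGraph V₁) (H₂ : SimpleGraph V₂)
    (hc₁ : Fintype.card V₁ = n₁) (hc₂ : Fintype.card V₂ = Δ - 2)
    (hr₁ : H₁.IsRegularOfDegree 2) (hr₂ : H₂.IsRegularOfDegree (Δ - 1 - n₁)) :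
    Δ * (Fintype.card (V₁ ⊕ V₂) / 2) < (joinGraph H₁ H₂).edgeFinset.card := by
  classical
  -- neighbor finsets
  have hadj_l : ∀ a : V₁, ∀ y, (joinGraph H₁ H₂).Adj (Sum.inl a) y ↔
      y ∈ (H₁.neighborFinset a).disjSum (Finset.univ : Finset V₂) := by
    intro a y
    cases y with
    | inl b => simp [joinGraph, SimpleGraph.mem_neighborFinset]
    | inr b => simp [joinGraph]
  have hadj_r : ∀ a : V₂, ∀ y, (joinGraph H₁ H₂).Adj (Sum.inr a) y ↔
      y ∈ (Finset.univ : Finset V₁).disjSum (H₂.neighborFinset a) := by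
    intro a y
    cases y with
    | inl b => simp [joinGraph]
    | inr b => simp [joinGraph, SimpleGraph.mem_neighborFinset]
  have hdeg_l : ∀ a : V₁, (joinGraph H₁ H₂).degree (Sum.inl a) = 2 + (Δ - 2) := by
    intro a
    have : (joinGraph H₁ H₂).neighborFinset (Sum.inl a)
        = (H₁.neighborFinset a).disjSum (Finset.univ : Finset V₂) := by
      ext y; rw [SimpleGraph.mem_neighborFinset]; exact hadj_l a y
    rw [SimpleGraph.degree, this, Finset.card_disjSum]
    rw [show (H₁.neighborFinset a).card = H₁.degree a from rfl, hr₁ a]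
    simp [hc₂]
  have hdeg_r : ∀ a : V₂, (joinGraph H₁ H₂).degree (Sum.inr a) = n₁ + (Δ - 1 - n₁) := by
    intro a
    have : (joinGraph H₁ H₂).neighborFinset (Sum.inr a)
        = (Finset.univ : Finset V₁).disjSum (H₂.neighborFinset a) := by
      ext y; rw [SimpleGraph.mem_neighborFinset]; exact hadj_r a y
    rw [SimpleGraph.degree, this, Finset.card_disjSum]
    rw [show (H₂.neighborFinset a).card = H₂.degree a from rfl, hr₂ a]
    simp [hc₁]
  have hsum := SimpleGraph.sum_degrees_eq_twice_card_edges (joinGraph H₁ H₂)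
  rw [Fintype.sum_sum_type] at hsum
  simp only [hdeg_l, hdeg_r, Finset.sum_const, Finset.card_univ, smul_eq_mul, hc₁, hc₂] at hsum
  have h2E : 2 * (joinGraph H₁ H₂).edgeFinset.card = n₁ * Δ + (Δ - 2) * (Δ - 1) := by
    rw [← hsum]
    have e1 : 2 + (Δ - 2) = Δ := by omega
    have e2 : n₁ + (Δ - 1 - n₁) = Δ - 1 := by omega
    rw [e1, e2]
  have hcard : Fintype.card (V₁ ⊕ V₂) = n₁ + (Δ - 2) := by
    simp [Fintype.card_sum, hc₁, hc₂]
  obtain ⟨k, hk⟩ := hodd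
  have hdiv : Fintype.card (V₁ ⊕ V₂) / 2 = k := by omega
  rw [hdiv]
  obtain ⟨b, rfl⟩ : ∃ b, Δ = b + 2 := ⟨Δ - 2, by omega⟩
  have hb1 : b + 2 - 2 = b := by omega
  have hb2 : b + 2 - 1 = b + 1 := by omega
  rw [hb1] at h2E hk
  rw [hb2] at h2E
  nlinarith [h2E, hk, hn₁, hΔ]
end

section
/- If G is an HZ-graph with maximum degree Δ (a connected class 2 simple graph with Δ(G_Δ) ≤ 2), then the subgraph G_Δ induced on the vertices of degree Δ is 2-regular. -/
open SimpleGraph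

set_option linter.unusedSectionVars false

open SimpleGraph Finset

attribute [-instance] SimpleGraph.instDecidableRelAdjDeleteEdgesOfDecidablePredSym2MemSetOfDecidableEq

open scoped Classical in
noncomputable def colorsAt {V : Type*} [Fintype V] (H : SimpleGraph V) (c : Sym2 V → ℕ) (v : V) :
    Finset ℕ := (H.incidenceFinset v).image c

noncomputable def missF {V : Type*} [Fintype V] (H : SimpleGraph V) (k : ℕ) (c : Sym2 V → ℕ)
    (v : V) : Finset ℕ := (Finset.Icc 1 k) \ colorsAt H c v

section basics
open scoped Classical
variable {V : Type*} [Fintype V] {H : SimpleGraph V} {k : ℕ} {c : Sym2 V → ℕ} {v : V} {γ : ℕ}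

lemma mem_colorsAt : γ ∈ colorsAt H c v ↔ ∃ e ∈ H.edgeSet, v ∈ e ∧ c e = γ := by
  simp only [colorsAt, mem_image, SimpleGraph.mem_incidenceFinset]
  constructor
  · rintro ⟨e, he, rfl⟩; exact ⟨e, he.1, he.2, rfl⟩
  · rintro ⟨e, he, hv, rfl⟩; exact ⟨e, ⟨he, hv⟩, rfl⟩

lemma mem_missF : γ ∈ missF H k c v ↔ γ ∈ Finset.Icc 1 k ∧ ∀ e ∈ H.edgeSet, v ∈ e → c e ≠ γ := by
  simp only [missF, mem_sdiff, mem_colorsAt]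
  push_neg
  tauto

lemma missF_subset_Icc : missF H k c v ⊆ Finset.Icc 1 k := sdiff_subset

lemma not_mem_colorsAt_of_missF (h : γ ∈ missF H k c v) : γ ∉ colorsAt H c v :=
  (mem_sdiff.mp h).2

lemma IsProperEdgeColoring.eq_of_shared (hp : IsProperEdgeColoring H k c) {e f : Sym2 V}
    (he : e ∈ H.edgeSet) (hf : f ∈ H.edgeSet) (hv : v ∈ e) (hv' : v ∈ f) (hc : c e = c f) :
    e = f := by
  by_contra hne
  exact hp.2 e he f hf hne ⟨v, hv, hv'⟩ hc

lemma card_colorsAt (hp : IsProperEdgeColoring H k c) :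
    (colorsAt H c v).card = H.degree v := by
  rw [colorsAt, Finset.card_image_of_injOn, SimpleGraph.card_incidenceFinset_eq_degree]
  intro e he f hf hc
  rw [Finset.mem_coe, SimpleGraph.mem_incidenceFinset] at he hf
  exact hp.eq_of_shared he.1 hf.1 he.2 hf.2 hc

lemma colorsAt_subset_Icc (hp : IsProperEdgeColoring H k c) :
    colorsAt H c v ⊆ Finset.Icc 1 k := by
  intro γ hγ
  obtain ⟨e, he, _, rfl⟩ := mem_colorsAt.mp hγ
  exact hp.1 e he

lemma card_missF (hp : IsProperEdgeColoring H k c) (hd : H.degree v ≤ k) :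
    (missF H k c v).card = k - H.degree v := by
  rw [missF, Finset.card_sdiff_of_subset (colorsAt_subset_Icc hp), Nat.card_Icc, card_colorsAt hp]
  omega

lemma missF_nonempty (hp : IsProperEdgeColoring H k c) (hd : H.degree v < k) :
    (missF H k c v).Nonempty := by
  rw [← Finset.card_pos, card_missF hp hd.le]; omega

/-- extending a proper coloring of `H - xy` by a color missing at both endpoints -/
lemma extend1 {x y : V} (hxy : H.Adj x y)
    (hp : IsProperEdgeColoring (H.deleteEdges {s(x,y)}) k c)
    (hx : γ ∈ missF (H.deleteEdges {s(x,y)}) k c x)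
    (hy : γ ∈ missF (H.deleteEdges {s(x,y)}) k c y) :
    EdgeColorable H k := by
  set Γ := H.deleteEdges {s(x,y)} with hΓ
  refine ⟨fun e => if e = s(x,y) then γ else c e, ?_, ?_⟩
  · intro e he
    by_cases h : e = s(x,y)
    · simpa [h] using (missF_subset_Icc hx)
    · have : e ∈ Γ.edgeSet := by
        rw [hΓ, SimpleGraph.edgeSet_deleteEdges]; exact ⟨he, by simpa using h⟩
      simpa [h] using hp.1 e this
  · intro e he f hf hne hshare
    have hmem : ∀ g : Sym2 V, g ∈ H.edgeSet → g ≠ s(x,y) → g ∈ Γ.edgeSet := by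
      intro g hg hgne
      rw [hΓ, SimpleGraph.edgeSet_deleteEdges]; exact ⟨hg, by simpa using hgne⟩
    obtain ⟨w, hwe, hwf⟩ := hshare
    by_cases h1 : e = s(x,y) <;> by_cases h2 : f = s(x,y)
    · exact absurd (h1.trans h2.symm) hne
    · simp only [h1, if_pos rfl, if_neg h2]
      have hfΓ : f ∈ Γ.edgeSet := hmem f hf h2
      have hw : w = x ∨ w = y := by
        rw [h1] at hwe; simpa using hwe
      intro hcf
      rcases hw with rfl | rfl
      · exact (mem_missF.mp hx).2 f hfΓ hwf hcf.symm
      · exact (mem_missF.mp hy).2 f hfΓ hwf hcf.symm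
    · simp only [h2, if_pos rfl, if_neg h1]
      have heΓ : e ∈ Γ.edgeSet := hmem e he h1
      have hw : w = x ∨ w = y := by
        rw [h2] at hwf; simpa using hwf
      intro hce
      rcases hw with rfl | rfl
      · exact (mem_missF.mp hx).2 e heΓ hwe hce
      · exact (mem_missF.mp hy).2 e heΓ hwe hce
    · simp only [if_neg h1, if_neg h2]
      exact hp.2 e (hmem e he h1) f (hmem f hf h2) hne ⟨w, hwe, hwf⟩

end basics

section kempe
open scoped Classical
variable {V : Type*} [Fintype V] {Γ : SimpleGraph V} {k : ℕ} {c : Sym2 V → ℕ} {α β γ : ℕ}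
  {W : Set V} {z v₀ : V}

lemma chainGraph_adj {u w : V} :
    (chainGraph Γ c α β).Adj u w ↔ Γ.Adj u w ∧ (c s(u,w) = α ∨ c s(u,w) = β) := by
  rw [chainGraph, SimpleGraph.fromEdgeSet_adj]
  constructor
  · rintro ⟨⟨he, hc⟩, _⟩; exact ⟨(SimpleGraph.mem_edgeSet _).mp he, hc⟩
  · rintro ⟨ha, hc⟩; exact ⟨⟨(SimpleGraph.mem_edgeSet _).mpr ha, hc⟩, ha.ne⟩

lemma chain_degree_le_two (hp : IsProperEdgeColoring Γ k c) (z : V) :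
    (chainGraph Γ c α β).degree z ≤ 2 := by
  classical
  rw [← SimpleGraph.card_neighborFinset_eq_degree]
  have h2 : ({α, β} : Finset ℕ).card ≤ 2 := Finset.card_insert_le _ _ |>.trans (by simp)
  refine le_trans (Finset.card_le_card_of_injOn (fun w => c s(z,w)) ?_ ?_) h2
  · intro w hw
    rw [Finset.mem_coe, SimpleGraph.mem_neighborFinset, chainGraph_adj] at hw
    rcases hw.2 with h | h <;> simp [h]
  · intro w₁ h₁ w₂ h₂ hc
    rw [Finset.mem_coe, SimpleGraph.mem_neighborFinset, chainGraph_adj] at h₁ h₂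
    have := hp.eq_of_shared (v := z) ((SimpleGraph.mem_edgeSet _).mpr h₁.1)
      ((SimpleGraph.mem_edgeSet _).mpr h₂.1) (by simp) (by simp) hc
    exact Sym2.congr_right.mp this

lemma chain_degree_le_one_left (hp : IsProperEdgeColoring Γ k c)
    (h : α ∈ missF Γ k c z) : (chainGraph Γ c α β).degree z ≤ 1 := by
  classical
  rw [← SimpleGraph.card_neighborFinset_eq_degree]
  have h2 : ({β} : Finset ℕ).card ≤ 1 := by simp
  refine le_trans (Finset.card_le_card_of_injOn (fun w => c s(z,w)) ?_ ?_) h2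
  · intro w hw
    rw [Finset.mem_coe, SimpleGraph.mem_neighborFinset, chainGraph_adj] at hw
    have hne := (mem_missF.mp h).2 _ ((SimpleGraph.mem_edgeSet _).mpr hw.1) (by simp)
    rcases hw.2 with hc | hc
    · exact absurd hc hne
    · simp [hc]
  · intro w₁ h₁ w₂ h₂ hc
    rw [Finset.mem_coe, SimpleGraph.mem_neighborFinset, chainGraph_adj] at h₁ h₂
    have := hp.eq_of_shared (v := z) ((SimpleGraph.mem_edgeSet _).mpr h₁.1)
      ((SimpleGraph.mem_edgeSet _).mpr h₂.1) (by simp) (by simp) hc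
    exact Sym2.congr_right.mp this

lemma chainGraph_comm : chainGraph Γ c α β = chainGraph Γ c β α := by
  apply SimpleGraph.ext
  ext u w
  rw [chainGraph_adj, chainGraph_adj]
  tauto

lemma chain_degree_le_one_right (hp : IsProperEdgeColoring Γ k c)
    (h : β ∈ missF Γ k c z) : (chainGraph Γ c α β).degree z ≤ 1 := by
  rw [chainGraph_comm]; exact chain_degree_le_one_left hp h

/-- The Kempe swap of colors `α`, `β` on the edges touching `W`. -/
noncomputable def kSwap (Γ : SimpleGraph V) (c : Sym2 V → ℕ) (α β : ℕ) (W : Set V) :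
    Sym2 V → ℕ := fun e =>
  if (e ∈ Γ.edgeSet ∧ (c e = α ∨ c e = β) ∧ ∃ w ∈ e, w ∈ W) then
    (if c e = α then β else α) else c e

/-- hypothesis that `W` is closed under chain adjacency -/
def ChainClosed (Γ : SimpleGraph V) (c : Sym2 V → ℕ) (α β : ℕ) (W : Set V) : Prop :=
  ∀ ⦃u w : V⦄, (chainGraph Γ c α β).Adj u w → u ∈ W → w ∈ W

lemma chainComp_closed : ChainClosed Γ c α β {z | (chainGraph Γ c α β).Reachable v₀ z} := by
  intro u w hadj hu
  exact hu.trans hadj.reachable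

lemma ChainClosed.all_mem (hW : ChainClosed Γ c α β W) {e : Sym2 V} (he : e ∈ Γ.edgeSet)
    (hc : c e = α ∨ c e = β) (hw : ∃ w ∈ e, w ∈ W) : ∀ u ∈ e, u ∈ W := by
  induction e with
  | _ a b =>
    have hab : (chainGraph Γ c α β).Adj a b := by
      rw [chainGraph_adj]
      exact ⟨(SimpleGraph.mem_edgeSet _).mp he, hc⟩
    obtain ⟨w, hwe, hwW⟩ := hw
    intro u hu
    rw [Sym2.mem_iff] at hwe hu
    have hba := hab.symm
    rcases hwe with rfl | rfl <;> rcases hu with rfl | rfl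
    · exact hwW
    · exact hW hab hwW
    · exact hW hba hwW
    · exact hwW

lemma kSwap_eq_of_not_mem {e : Sym2 V} (hz : z ∈ e) (hzW : z ∉ W)
    (hW : ChainClosed Γ c α β W) : kSwap Γ c α β W e = c e := by
  rw [kSwap, if_neg]
  rintro ⟨he, hc, hw⟩
  exact hzW (hW.all_mem he hc hw z hz)

lemma kSwap_eq_of_not_chain {e : Sym2 V} (h1 : c e ≠ α) (h2 : c e ≠ β) :
    kSwap Γ c α β W e = c e := by
  rw [kSwap, if_neg]; rintro ⟨_, hc, _⟩; tauto

lemma kSwap_mem_triple (e : Sym2 V) :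
    kSwap Γ c α β W e = c e ∨ kSwap Γ c α β W e = α ∨ kSwap Γ c α β W e = β := by
  rw [kSwap]
  split_ifs with h1 h2 <;> tauto

lemma kSwap_proper (hp : IsProperEdgeColoring Γ k c) (hα : α ∈ Finset.Icc 1 k)
    (hβ : β ∈ Finset.Icc 1 k) (hW : ChainClosed Γ c α β W) :
    IsProperEdgeColoring Γ k (kSwap Γ c α β W) := by
  constructor
  · intro e he
    rcases kSwap_mem_triple (Γ := Γ) (c := c) (α := α) (β := β) (W := W) e with h | h | h
      <;> rw [h]
    · exact hp.1 e he
    · exact hα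
    · exact hβ
  · intro e he f hf hne hshare
    obtain ⟨w, hwe, hwf⟩ := hshare
    intro hc
    set P : Sym2 V → Prop :=
      fun e => (e ∈ Γ.edgeSet ∧ (c e = α ∨ c e = β) ∧ ∃ w ∈ e, w ∈ W) with hP
    have hswap : ∀ g, P g → kSwap Γ c α β W g = if c g = α then β else α := by
      intro g hg; rw [kSwap, if_pos hg]
    have hnswap : ∀ g, ¬ P g → kSwap Γ c α β W g = c g := by
      intro g hg; rw [kSwap, if_neg hg]
    have key : ∀ g, P g → ∀ u ∈ g, u ∈ W := fun g hg => hW.all_mem hg.1 hg.2.1 hg.2.2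
    by_cases h1 : P e <;> by_cases h2 : P f
    · rw [hswap e h1, hswap f h2] at hc
      have : c e = c f := by
        split_ifs at hc with he1 hf1 hf2
        · rw [he1, hf1]
        · rcases h2.2.1 with h | h
          · exact absurd h hf1
          · rw [he1, h, ← hc]
        · rcases h1.2.1 with h | h
          · exact absurd h he1
          · rw [h, hf2]; exact hc.symm
        · rcases h1.2.1 with h | h
          · exact absurd h he1
          · rcases h2.2.1 with h' | h'
            · exact absurd h' hf2
            · rw [h, h']
      exact hp.2 e he f hf hne ⟨w, hwe, hwf⟩ this
    · have : P f := by
        refine ⟨hf, ?_, ⟨w, hwf, key e h1 w hwe⟩⟩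
        rw [hnswap f h2] at hc
        rw [hswap e h1] at hc
        split_ifs at hc <;> [right; left] <;> exact hc.symm
      exact h2 this
    · have : P e := by
        refine ⟨he, ?_, ⟨w, hwe, key f h2 w hwf⟩⟩
        rw [hnswap e h1] at hc
        rw [hswap f h2] at hc
        split_ifs at hc <;> [right; left] <;> exact hc
      exact h1 this
    · rw [hnswap e h1, hnswap f h2] at hc
      exact hp.2 e he f hf hne ⟨w, hwe, hwf⟩ hc

lemma kSwap_colorsAt_of_not_mem (hW : ChainClosed Γ c α β W) (hzW : z ∉ W) :
    colorsAt Γ (kSwap Γ c α β W) z = colorsAt Γ c z := by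
  apply Finset.image_congr
  intro e he
  rw [Finset.mem_coe, SimpleGraph.mem_incidenceFinset] at he
  exact kSwap_eq_of_not_mem he.2 hzW hW

lemma kSwap_colorsAt_alpha (hW : ChainClosed Γ c α β W) (hzW : z ∈ W) :
    (α ∈ colorsAt Γ (kSwap Γ c α β W) z ↔ β ∈ colorsAt Γ c z) := by
  constructor
  · rw [mem_colorsAt, mem_colorsAt]
    rintro ⟨e, he, hze, hc⟩
    refine ⟨e, he, hze, ?_⟩
    by_cases hPe : (e ∈ Γ.edgeSet ∧ (c e = α ∨ c e = β) ∧ ∃ w ∈ e, w ∈ W)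
    · rw [kSwap, if_pos hPe] at hc
      split_ifs at hc with h
      · rw [h, hc]
      · rcases hPe.2.1 with h' | h'
        · exact absurd h' h
        · exact h'
    · rw [kSwap, if_neg hPe] at hc
      exact absurd ⟨he, Or.inl hc, ⟨z, hze, hzW⟩⟩ hPe
  · rw [mem_colorsAt, mem_colorsAt]
    rintro ⟨e, he, hze, hc⟩
    refine ⟨e, he, hze, ?_⟩
    have hPe : (e ∈ Γ.edgeSet ∧ (c e = α ∨ c e = β) ∧ ∃ w ∈ e, w ∈ W) :=
      ⟨he, Or.inr hc, ⟨z, hze, hzW⟩⟩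
    rw [kSwap, if_pos hPe]
    split_ifs with h
    · rw [← h, hc]
    · rfl

lemma kSwap_colorsAt_beta (hW : ChainClosed Γ c α β W) (hzW : z ∈ W) :
    (β ∈ colorsAt Γ (kSwap Γ c α β W) z ↔ α ∈ colorsAt Γ c z) := by
  constructor
  · rw [mem_colorsAt, mem_colorsAt]
    rintro ⟨e, he, hze, hc⟩
    refine ⟨e, he, hze, ?_⟩
    by_cases hPe : (e ∈ Γ.edgeSet ∧ (c e = α ∨ c e = β) ∧ ∃ w ∈ e, w ∈ W)
    · rw [kSwap, if_pos hPe] at hc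
      split_ifs at hc with h
      · exact h
      · rcases hPe.2.1 with h' | h'
        · exact absurd h' h
        · rw [h', ← hc]
    · rw [kSwap, if_neg hPe] at hc
      exact absurd ⟨he, Or.inr hc, ⟨z, hze, hzW⟩⟩ hPe
  · rw [mem_colorsAt, mem_colorsAt]
    rintro ⟨e, he, hze, hc⟩
    refine ⟨e, he, hze, ?_⟩
    have hPe : (e ∈ Γ.edgeSet ∧ (c e = α ∨ c e = β) ∧ ∃ w ∈ e, w ∈ W) :=
      ⟨he, Or.inl hc, ⟨z, hze, hzW⟩⟩
    rw [kSwap, if_pos hPe, if_pos hc]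

lemma kSwap_colorsAt_offdiag (hγα : γ ≠ α) (hγβ : γ ≠ β) (z : V) :
    (γ ∈ colorsAt Γ (kSwap Γ c α β W) z ↔ γ ∈ colorsAt Γ c z) := by
  rw [mem_colorsAt, mem_colorsAt]
  constructor
  · rintro ⟨e, he, hze, hc⟩
    refine ⟨e, he, hze, ?_⟩
    rcases kSwap_mem_triple (Γ := Γ) (c := c) (α := α) (β := β) (W := W) e with h | h | h
    · rw [← h, hc]
    · rw [hc] at h; exact absurd h hγα
    · rw [hc] at h; exact absurd h hγβ
  · rintro ⟨e, he, hze, hc⟩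
    exact ⟨e, he, hze, by rw [kSwap_eq_of_not_chain (by rw [hc]; exact hγα)
      (by rw [hc]; exact hγβ), hc]⟩

end kempe

section three
open scoped Classical
variable {V : Type*} [Fintype V] {Γ' : SimpleGraph V}

lemma good_aux (hdeg : ∀ v, Γ'.degree v ≤ 2) {u b : V} (q : Γ'.Walk u b) :
    q.IsPath → Γ'.degree b ≤ 1 → ∀ ban, Γ'.Adj ban u → ban ∉ q.support →
    ∀ v ∈ q.support, ∀ z, Γ'.Adj v z → z ∈ q.support ∨ z = ban := by
  induction q with
  | nil =>
    intro _ hb ban hadj _ v hv z hz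
    simp only [SimpleGraph.Walk.support_nil, List.mem_singleton] at hv
    subst hv
    right
    have h1 : z ∈ Γ'.neighborFinset v := by rwa [SimpleGraph.mem_neighborFinset]
    have h2 : ban ∈ Γ'.neighborFinset v := by
      rw [SimpleGraph.mem_neighborFinset]; exact hadj.symm
    exact Finset.card_le_one.mp hb z h1 ban h2
  | @cons u u₁ b h q ih =>
    intro hq hb ban hadj hnot v hv z hz
    rw [SimpleGraph.Walk.cons_isPath_iff] at hq
    rw [SimpleGraph.Walk.support_cons, List.mem_cons] at hnot hv
    push_neg at hnot
    rcases hv with rfl | hv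
    · -- v = u; neighbors of u are exactly {ban, u₁}
      have hsub : ({ban, u₁} : Finset V) ⊆ Γ'.neighborFinset v := by
        intro t ht
        rw [Finset.mem_insert, Finset.mem_singleton] at ht
        rw [SimpleGraph.mem_neighborFinset]
        rcases ht with rfl | rfl
        · exact hadj.symm
        · exact h
      have hne : ban ≠ u₁ := fun hbu => hnot.2 (hbu ▸ q.start_mem_support)
      have hcard : ({ban, u₁} : Finset V).card = 2 := by
        rw [Finset.card_insert_of_notMem (by simpa using hne), Finset.card_singleton]
      have heq : ({ban, u₁} : Finset V) = Γ'.neighborFinset v := by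
        apply Finset.eq_of_subset_of_card_le hsub
        rw [hcard]; exact hdeg v
      have hzmem : z ∈ ({ban, u₁} : Finset V) := by
        rw [heq, SimpleGraph.mem_neighborFinset]; exact hz
      rw [Finset.mem_insert, Finset.mem_singleton] at hzmem
      rcases hzmem with rfl | rfl
      · exact Or.inr rfl
      · rw [SimpleGraph.Walk.support_cons, List.mem_cons]
        exact Or.inl (Or.inr q.start_mem_support)
    · have := ih hq.1 hb u h hq.2 v hv z hz
      rw [SimpleGraph.Walk.support_cons, List.mem_cons]
      tauto

lemma reach_in_support (hdeg : ∀ v, Γ'.degree v ≤ 2) {a b : V} (p : Γ'.Walk a b)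
    (hp : p.IsPath) (ha : Γ'.degree a ≤ 1) (hb : Γ'.degree b ≤ 1) (hab : a ≠ b) :
    ∀ z, Γ'.Reachable a z → z ∈ p.support := by
  have hclo : ∀ v ∈ p.support, ∀ z, Γ'.Adj v z → z ∈ p.support := by
    cases p with
    | nil => exact absurd rfl hab
    | @cons a u₁ b h q =>
      intro v hv z hz
      rw [SimpleGraph.Walk.cons_isPath_iff] at hp
      rw [SimpleGraph.Walk.support_cons, List.mem_cons] at hv
      rcases hv with rfl | hv
      · have h1 : z ∈ Γ'.neighborFinset v := by rwa [SimpleGraph.mem_neighborFinset]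
        have h2 : u₁ ∈ Γ'.neighborFinset v := by rw [SimpleGraph.mem_neighborFinset]; exact h
        have : z = u₁ := Finset.card_le_one.mp ha z h1 u₁ h2
        rw [SimpleGraph.Walk.support_cons, List.mem_cons, this]
        exact Or.inr q.start_mem_support
      · have := good_aux hdeg q hp.1 hb a h hp.2 v hv z hz
        rw [SimpleGraph.Walk.support_cons, List.mem_cons]
        tauto
  have haux : ∀ {u z : V} (w : Γ'.Walk u z), u ∈ p.support → z ∈ p.support := by
    intro u z w
    induction w with
    | nil => exact id
    | cons h w ih => intro hu; exact ih (hclo _ hu _ h)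
  rintro z ⟨w⟩
  exact haux w p.start_mem_support

lemma three_impossible (hdeg : ∀ v, Γ'.degree v ≤ 2) {a b c₂ : V}
    (ha : Γ'.degree a ≤ 1) (hb : Γ'.degree b ≤ 1) (hc : Γ'.degree c₂ ≤ 1)
    (hab : a ≠ b) (hac : a ≠ c₂) (hbc : b ≠ c₂)
    (hrb : Γ'.Reachable a b) (hrc : Γ'.Reachable a c₂) : False := by
  obtain ⟨w⟩ := hrb
  obtain ⟨p, hp⟩ := w.toPath
  have hcmem : c₂ ∈ p.support := reach_in_support hdeg p hp ha hb hab c₂ hrc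
  have hp₁ : (p.takeUntil c₂ hcmem).IsPath := hp.takeUntil hcmem
  have hbmem : b ∈ (p.takeUntil c₂ hcmem).support :=
    reach_in_support hdeg _ hp₁ ha hc hac b ⟨w⟩
  have hbtail : b ∈ (p.dropUntil c₂ hcmem).support.tail := by
    have h1 : b ∈ (p.dropUntil c₂ hcmem).support := SimpleGraph.Walk.end_mem_support _
    rw [SimpleGraph.Walk.support_eq_cons, List.mem_cons] at h1
    rcases h1 with h1 | h1
    · exact absurd h1 hbc
    · exact h1
  have hnd : ((p.takeUntil c₂ hcmem).support ++ (p.dropUntil c₂ hcmem).support.tail).Nodup := by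
    rw [← SimpleGraph.Walk.support_append, SimpleGraph.Walk.take_spec]
    exact hp.support_nodup
  exact List.disjoint_of_nodup_append hnd hbmem hbtail

end three

section fan
open scoped Classical
variable {V : Type*} [Fintype V] {H : SimpleGraph V} {k : ℕ} {x y : V} {c : Sym2 V → ℕ}
  {v γ : ℕ}

/-- A (linear Vizing) fan at `x` based at the edge `xy`, encoded as a function. -/
def UFan (H : SimpleGraph V) [Fintype V] (k : ℕ) (x y : V) (c : Sym2 V → ℕ) (F : ℕ → V)
    (m : ℕ) : Prop :=
  F 0 = y ∧ (∀ i, i ≤ m → H.Adj x (F i)) ∧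
  (∀ i, i ≤ m → ∀ j, j ≤ m → i ≠ j → F i ≠ F j) ∧
  (∀ i, i < m → c s(x, F (i+1)) ∈ missF (H.deleteEdges {s(x,y)}) k c (F i))

/-- fan with stage-relative missing-color conditions (for rotation) -/
def RFan (H : SimpleGraph V) [Fintype V] (k : ℕ) (x : V) (c : Sym2 V → ℕ) (F : ℕ → V)
    (m : ℕ) : Prop :=
  (∀ i, i ≤ m → H.Adj x (F i)) ∧
  (∀ i, i ≤ m → ∀ j, j ≤ m → i ≠ j → F i ≠ F j) ∧
  (∀ i, i < m → c s(x, F (i+1)) ∈ missF (H.deleteEdges {s(x, F i)}) k c (F i))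

lemma colorsAt_update_not_mem {G : SimpleGraph V} {e₀ : Sym2 V} {γ₀ : ℕ} {u : V}
    (hu : u ∉ e₀) : colorsAt G (Function.update c e₀ γ₀) u = colorsAt G c u := by
  apply Finset.image_congr
  intro e he
  rw [Finset.mem_coe, SimpleGraph.mem_incidenceFinset] at he
  have : e ≠ e₀ := fun h => hu (h ▸ he.2)
  rw [Function.update_of_ne this]

lemma colorsAt_delx_subset {v : V} (hxv : H.Adj x v) (y : V) :
    colorsAt (H.deleteEdges {s(x,v)}) c v ⊆ colorsAt (H.deleteEdges {s(x,y)}) c v := by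
  intro γ hγ
  rw [mem_colorsAt] at hγ ⊢
  obtain ⟨e, he, hve, rfl⟩ := hγ
  rw [SimpleGraph.edgeSet_deleteEdges] at he
  refine ⟨e, ?_, hve, rfl⟩
  rw [SimpleGraph.edgeSet_deleteEdges]
  refine ⟨he.1, ?_⟩
  intro hexy
  rw [Set.mem_singleton_iff] at hexy
  subst hexy
  rcases Sym2.mem_iff.mp hve with rfl | rfl
  · exact hxv.ne rfl
  · exact he.2 rfl

lemma missF_delx_supset {v : V} (hxv : H.Adj x v) (y : V) :
    missF (H.deleteEdges {s(x,y)}) k c v ⊆ missF (H.deleteEdges {s(x,v)}) k c v :=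
  Finset.sdiff_subset_sdiff (Finset.Subset.refl _) (colorsAt_delx_subset hxv y)

lemma UFan.toRFan {F : ℕ → V} {m : ℕ} (h : UFan H k x y c F m) : RFan H k x c F m := by
  obtain ⟨h0, hadj, hinj, hchain⟩ := h
  refine ⟨hadj, hinj, fun i hi => ?_⟩
  exact missF_delx_supset (hadj i (le_of_lt hi)) y (hchain i hi)

lemma UFan.prefix {F : ℕ → V} {m i : ℕ} (h : UFan H k x y c F m) (hi : i ≤ m) :
    UFan H k x y c F i :=
  ⟨h.1, fun j hj => h.2.1 j (hj.trans hi), fun a ha b hb => h.2.2.1 a (ha.trans hi) b (hb.trans hi),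
    fun j hj => h.2.2.2 j (lt_of_lt_of_le hj hi)⟩

lemma sxy_eq_iff {a b : V} (hab : x ≠ a ∨ True) : (s(x,a) = s(x,b)) ↔ a = b := Sym2.congr_right

/-- single rotation step -/
lemma rot1 {F : ℕ → V} {m : ℕ} (hF : RFan H k x c F (m+1))
    (hp : IsProperEdgeColoring (H.deleteEdges {s(x, F 0)}) k c) :
    IsProperEdgeColoring (H.deleteEdges {s(x, F 1)}) k
      (Function.update c s(x, F 0) (c s(x, F 1))) ∧
    colorsAt (H.deleteEdges {s(x, F 1)}) (Function.update c s(x, F 0) (c s(x, F 1))) x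
      = colorsAt (H.deleteEdges {s(x, F 0)}) c x := by
  obtain ⟨hadj, hinj, hchain⟩ := hF
  set b := F 0 with hb
  set w := F 1 with hw
  have hbw : b ≠ w := hinj 0 (by omega) 1 (by omega) (by omega)
  have hxb : H.Adj x b := hadj 0 (by omega)
  have hxw : H.Adj x w := hadj 1 (by omega)
  have hsne : s(x,w) ≠ s(x,b) := fun h => hbw (Sym2.congr_right.mp h).symm
  have hγmiss : c s(x,w) ∈ missF (H.deleteEdges {s(x,b)}) k c b := hchain 0 (by omega)
  set γ₀ := c s(x,w) with hγ₀
  set c₁ := Function.update c s(x,b) γ₀ with hc₁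
  have hwΓb : s(x,w) ∈ (H.deleteEdges {s(x,b)}).edgeSet := by
    rw [SimpleGraph.edgeSet_deleteEdges]
    exact ⟨(SimpleGraph.mem_edgeSet _).mpr hxw, by simpa using hsne⟩
  have hbΓw : s(x,b) ∈ (H.deleteEdges {s(x,w)}).edgeSet := by
    rw [SimpleGraph.edgeSet_deleteEdges]
    exact ⟨(SimpleGraph.mem_edgeSet _).mpr hxb, by simpa using hsne.symm⟩
  have hmem : ∀ e : Sym2 V, e ∈ (H.deleteEdges {s(x,w)}).edgeSet → e ≠ s(x,b) →
      e ∈ (H.deleteEdges {s(x,b)}).edgeSet := by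
    intro e he hne
    rw [SimpleGraph.edgeSet_deleteEdges] at he ⊢
    exact ⟨he.1, by simpa using hne⟩
  constructor
  · constructor
    · intro e he
      by_cases hexb : e = s(x,b)
      · rw [hexb, hc₁, Function.update_self]
        exact hp.1 _ hwΓb
      · rw [hc₁, Function.update_of_ne hexb]
        exact hp.1 e (hmem e he hexb)
    · intro e he f hf hne hshare
      obtain ⟨u, hue, huf⟩ := hshare
      by_cases h1 : e = s(x,b) <;> by_cases h2 : f = s(x,b)
      · exact absurd (h1.trans h2.symm) hne
      · rw [hc₁, h1, Function.update_self, Function.update_of_ne h2]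
        have hfΓb : f ∈ (H.deleteEdges {s(x,b)}).edgeSet := hmem f hf h2
        have hu : u = x ∨ u = b := by rw [h1] at hue; simpa using hue
        intro hcf
        rcases hu with hux | hub
        · -- f shares x with s(x,w), same color
          have hfw : f ≠ s(x,w) := by
            rw [SimpleGraph.edgeSet_deleteEdges] at hf
            intro hh; exact hf.2 (by simpa using hh)
          exact hp.2 _ hwΓb f hfΓb (Ne.symm hfw) ⟨x, by simp, hux ▸ huf⟩ hcf
        · -- f is an edge at b colored γ₀, contradicting missingness
          exact (mem_missF.mp hγmiss).2 f hfΓb (hub ▸ huf) hcf.symm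
      · rw [hc₁, h2, Function.update_self, Function.update_of_ne h1]
        have heΓb : e ∈ (H.deleteEdges {s(x,b)}).edgeSet := hmem e he h1
        have hu : u = x ∨ u = b := by rw [h2] at huf; simpa using huf
        intro hce
        rcases hu with hux | hub
        · have hew : e ≠ s(x,w) := by
            rw [SimpleGraph.edgeSet_deleteEdges] at he
            intro hh; exact he.2 (by simpa using hh)
          exact hp.2 e heΓb _ hwΓb hew ⟨x, hux ▸ hue, by simp⟩ hce
        · exact (mem_missF.mp hγmiss).2 e heΓb (hub ▸ hue) hce
      · rw [hc₁, Function.update_of_ne h1, Function.update_of_ne h2]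
        exact hp.2 e (hmem e he h1) f (hmem f hf h2) hne ⟨u, hue, huf⟩
  · -- colorsAt at x preserved
    ext γ'
    simp only [mem_colorsAt]
    constructor
    · rintro ⟨e, he, hxe, hce⟩
      by_cases hexb : e = s(x,b)
      · rw [hexb, hc₁, Function.update_self] at hce
        exact ⟨s(x,w), hwΓb, by simp, hce⟩
      · rw [hc₁, Function.update_of_ne hexb] at hce
        exact ⟨e, hmem e he hexb, hxe, hce⟩
    · rintro ⟨e, he, hxe, hce⟩
      by_cases hexw : e = s(x,w)
      · refine ⟨s(x,b), hbΓw, by simp, ?_⟩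
        rw [hc₁, Function.update_self, hγ₀, ← hexw, hce]
      · have heΓw : e ∈ (H.deleteEdges {s(x,w)}).edgeSet := by
          rw [SimpleGraph.edgeSet_deleteEdges] at he ⊢
          exact ⟨he.1, by simpa using hexw⟩
        have hexb : e ≠ s(x,b) := by
          rw [SimpleGraph.edgeSet_deleteEdges] at he
          intro hh; exact he.2 (by simpa using hh)
        exact ⟨e, heΓw, hxe, by rw [hc₁, Function.update_of_ne hexb]; exact hce⟩

/-- full rotation along a fan -/
lemma rotate : ∀ (m : ℕ) (F : ℕ → V) (c : Sym2 V → ℕ), RFan H k x c F m →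
    IsProperEdgeColoring (H.deleteEdges {s(x, F 0)}) k c →
    ∃ c', IsProperEdgeColoring (H.deleteEdges {s(x, F m)}) k c' ∧
      colorsAt (H.deleteEdges {s(x, F m)}) c' x = colorsAt (H.deleteEdges {s(x, F 0)}) c x ∧
      colorsAt (H.deleteEdges {s(x, F m)}) c' (F m)
        ⊆ colorsAt (H.deleteEdges {s(x, F m)}) c (F m) := by
  intro m
  induction m with
  | zero => intro F c hF hp; exact ⟨c, hp, rfl, Finset.Subset.refl _⟩
  | succ n ih =>
    intro F c hF hp
    obtain ⟨hp₁, hx₁⟩ := rot1 hF hp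
    set c₁ := Function.update c s(x, F 0) (c s(x, F 1)) with hc₁
    set F' : ℕ → V := fun i => F (i+1) with hF'
    have hFne : ∀ i, i ≤ n + 1 → F i ≠ x := fun i hi => (hF.1 i hi).ne'
    have hRF' : RFan H k x c₁ F' n := by
      refine ⟨fun i hi => hF.1 (i+1) (by omega), fun i hi j hj hne =>
        hF.2.1 (i+1) (by omega) (j+1) (by omega) (by omega), fun i hi => ?_⟩
      have hchain := hF.2.2 (i+1) (by omega)
      have he1 : c₁ s(x, F (i+2)) = c s(x, F (i+2)) := by
        rw [hc₁, Function.update_of_ne]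
        intro hh
        exact hF.2.1 (i+2) (by omega) 0 (by omega) (by omega) (Sym2.congr_right.mp hh)
      have he2 : colorsAt (H.deleteEdges {s(x, F' i)}) c₁ (F' i)
          = colorsAt (H.deleteEdges {s(x, F' i)}) c (F' i) := by
        apply colorsAt_update_not_mem
        rw [Sym2.mem_iff]
        push_neg
        exact ⟨(hFne (i+1) (by omega)).symm ∘ Eq.symm,
          fun hh => hF.2.1 (i+1) (by omega) 0 (by omega) (by omega) hh⟩
      show c₁ s(x, F' (i+1)) ∈ missF (H.deleteEdges {s(x, F' i)}) k c₁ (F' i)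
      rw [missF, he2]
      have : F' (i+1) = F (i+2) := rfl
      rw [this, he1]
      exact hchain
    obtain ⟨c', hp', hx', hsub'⟩ := ih F' c₁ hRF' hp₁
    refine ⟨c', hp', ?_, ?_⟩
    · rw [show F (n+1) = F' n from rfl, hx', hx₁]
    · rw [show F (n+1) = F' n from rfl]
      refine hsub'.trans ?_
      have : colorsAt (H.deleteEdges {s(x, F' n)}) c₁ (F' n)
          = colorsAt (H.deleteEdges {s(x, F' n)}) c (F' n) := by
        apply colorsAt_update_not_mem
        rw [Sym2.mem_iff]
        push_neg
        exact ⟨(hFne (n+1) (by omega)).symm ∘ Eq.symm,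
          fun hh => hF.2.1 (n+1) (by omega) 0 (by omega) (by omega) hh⟩
      rw [this]

end fan

section fan2
open scoped Classical
variable {V : Type*} [Fintype V] {H : SimpleGraph V} {k : ℕ} {x y : V} {c c₀ : Sym2 V → ℕ}

/-- CL1: no color is missing at `x` and at a fan end simultaneously. -/
lemma cl1 (hnc : ¬ EdgeColorable H k) {F : ℕ → V} {m : ℕ} (hF : UFan H k x y c F m)
    (hp : IsProperEdgeColoring (H.deleteEdges {s(x,y)}) k c) (γ : ℕ)
    (hγx : γ ∈ missF (H.deleteEdges {s(x,y)}) k c x)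
    (hγv : γ ∈ missF (H.deleteEdges {s(x,y)}) k c (F m)) : False := by
  have h0 : F 0 = y := hF.1
  have hp0 : IsProperEdgeColoring (H.deleteEdges {s(x, F 0)}) k c := by rwa [h0]
  obtain ⟨c', hp', hx', hsub'⟩ := rotate m F c hF.toRFan hp0
  rw [h0] at hx'
  have hadjv : H.Adj x (F m) := hF.2.1 m le_rfl
  have hγx' : γ ∈ missF (H.deleteEdges {s(x, F m)}) k c' x := by
    rw [missF, hx']; exact hγx
  have hγv' : γ ∈ missF (H.deleteEdges {s(x, F m)}) k c' (F m) := by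
    rw [missF, Finset.mem_sdiff]
    refine ⟨missF_subset_Icc hγv, fun hmem => ?_⟩
    have := (hsub'.trans (colorsAt_delx_subset hadjv y)) hmem
    exact not_mem_colorsAt_of_missF hγv this
  exact hnc (extend1 hadjv hp' hγx' hγv')

/-- `v` is the end of some fan based at `xy`. -/
def FanEnd (H : SimpleGraph V) [Fintype V] (k : ℕ) (x y : V) (c : Sym2 V → ℕ) (v : V) : Prop :=
  ∃ F m, UFan H k x y c F m ∧ F m = v

lemma fanEnd_y (hxy : H.Adj x y) : FanEnd H k x y c y :=
  ⟨fun _ => y, 0, ⟨rfl, fun _ _ => hxy, fun i hi j hj hij => by omega, fun i hi => by omega⟩, rfl⟩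

lemma fanEnd_adj {v : V} (h : FanEnd H k x y c v) : H.Adj x v := by
  obtain ⟨F, m, hF, rfl⟩ := h
  exact hF.2.1 m le_rfl

lemma cl1' (hnc : ¬ EdgeColorable H k)
    (hp : IsProperEdgeColoring (H.deleteEdges {s(x,y)}) k c) {v : V}
    (hv : FanEnd H k x y c v) (γ : ℕ)
    (hγx : γ ∈ missF (H.deleteEdges {s(x,y)}) k c x)
    (hγv : γ ∈ missF (H.deleteEdges {s(x,y)}) k c v) : False := by
  obtain ⟨F, m, hF, rfl⟩ := hv
  exact cl1 hnc hF hp γ hγx hγv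

/-- CL2: a color missing at a fan end sits on a fan edge at `x`. -/
lemma cl2 (hnc : ¬ EdgeColorable H k)
    (hp : IsProperEdgeColoring (H.deleteEdges {s(x,y)}) k c) {v : V}
    (hv : FanEnd H k x y c v) {γ : ℕ}
    (hγ : γ ∈ missF (H.deleteEdges {s(x,y)}) k c v) :
    ∃ w, FanEnd H k x y c w ∧ w ≠ y ∧ c s(x,w) = γ := by
  have hγIcc : γ ∈ Finset.Icc 1 k := missF_subset_Icc hγ
  have hγx : γ ∉ missF (H.deleteEdges {s(x,y)}) k c x := fun h => cl1' hnc hp hv γ h hγ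
  have hγcol : γ ∈ colorsAt (H.deleteEdges {s(x,y)}) c x := by
    by_contra hcon
    exact hγx (Finset.mem_sdiff.mpr ⟨hγIcc, hcon⟩)
  rw [mem_colorsAt] at hγcol
  obtain ⟨e, he, hxe, hce⟩ := hγcol
  obtain ⟨w, rfl⟩ := Sym2.mem_iff_exists.mp hxe
  have hadjΓ : (H.deleteEdges {s(x,y)}).Adj x w := (SimpleGraph.mem_edgeSet _).mp he
  rw [SimpleGraph.deleteEdges_adj] at hadjΓ
  have hwy : w ≠ y := by
    rintro rfl
    exact hadjΓ.2 rfl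
  have hadjw : H.Adj x w := hadjΓ.1
  obtain ⟨F, m, hF, rfl⟩ := hv
  by_cases hin : ∃ j, j ≤ m ∧ F j = w
  · obtain ⟨j, hj, hFj⟩ := hin
    exact ⟨w, ⟨F, j, hF.prefix hj, hFj⟩, hwy, hce⟩
  · push_neg at hin
    set F' := Function.update F (m+1) w with hF'
    have hF'eq : ∀ i, i ≤ m → F' i = F i := by
      intro i hi
      rw [hF', Function.update_of_ne (by omega)]
    have hF'top : F' (m+1) = w := by rw [hF', Function.update_self]
    refine ⟨w, ⟨F', m+1, ⟨?_, ?_, ?_, ?_⟩, hF'top⟩, hwy, hce⟩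
    · rw [hF'eq 0 (by omega)]; exact hF.1
    · intro i hi
      rcases Nat.lt_or_ge i (m+1) with h | h
      · rw [hF'eq i (by omega)]; exact hF.2.1 i (by omega)
      · have : i = m + 1 := by omega
        rw [this, hF'top]; exact hadjw
    · intro i hi j hj hij
      rcases Nat.lt_or_ge i (m+1) with h1 | h1 <;> rcases Nat.lt_or_ge j (m+1) with h2 | h2
      · rw [hF'eq i (by omega), hF'eq j (by omega)]
        exact hF.2.2.1 i (by omega) j (by omega) hij
      · have hj' : j = m+1 := by omega
        rw [hF'eq i (by omega), hj', hF'top]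
        exact fun hh => (hin i (by omega)) hh
      · have hi' : i = m+1 := by omega
        rw [hF'eq j (by omega), hi', hF'top]
        exact fun hh => (hin j (by omega)) hh.symm
      · omega
    · intro i hi
      rcases Nat.lt_or_ge i m with h | h
      · rw [hF'eq (i+1) (by omega), hF'eq i (by omega)]
        exact hF.2.2.2 i h
      · have : i = m := by omega
        subst this
        rw [hF'top, hF'eq i (by omega), hce]
        exact hγ

/-- CL-A: a color missing at `x` and a color missing at a fan end lie on
a common Kempe chain through `x`. -/
lemma cla (hnc : ¬ EdgeColorable H k)
    (hp₀ : IsProperEdgeColoring (H.deleteEdges {s(x,y)}) k c₀) {α β : ℕ}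
    (hα : α ∈ missF (H.deleteEdges {s(x,y)}) k c₀ x) :
    ∀ m F, UFan H k x y c₀ F m → β ∈ missF (H.deleteEdges {s(x,y)}) k c₀ (F m) →
      (chainGraph (H.deleteEdges {s(x,y)}) c₀ α β).Reachable x (F m) := by
  intro m
  induction m using Nat.strong_induction_on with
  | _ m ih =>
    intro F hF hβ
    by_contra hreach
    set Γ := H.deleteEdges {s(x,y)} with hΓ
    set W := {z : V | (chainGraph Γ c₀ α β).Reachable (F m) z} with hWdef
    have hWc : ChainClosed Γ c₀ α β W := chainComp_closed
    have hxW : x ∉ W := fun hx => hreach (Set.mem_setOf_eq ▸ hx).symm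
    by_cases hbad : ∃ i, i < m ∧ F i ∈ W ∧ c₀ s(x, F (i+1)) = β
    · obtain ⟨i, him, hiW, hci⟩ := hbad
      have hβi : β ∈ missF Γ k c₀ (F i) := hci ▸ hF.2.2.2 i him
      have hri := ih i him F (hF.prefix (le_of_lt him)) hβi
      exact hreach (hri.trans ((Set.mem_setOf_eq ▸ hiW)).symm)
    · push_neg at hbad
      set c₁ := kSwap Γ c₀ α β W with hc₁
      have hp₁ : IsProperEdgeColoring Γ k c₁ :=
        kSwap_proper hp₀ (missF_subset_Icc hα) (missF_subset_Icc hβ) hWc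
      have hceq : ∀ e : Sym2 V, x ∈ e → c₁ e = c₀ e :=
        fun e he => kSwap_eq_of_not_mem he hxW hWc
      have hF₁ : UFan H k x y c₁ F m := by
        refine ⟨hF.1, hF.2.1, hF.2.2.1, fun i hi => ?_⟩
        have hch := hF.2.2.2 i hi
        rw [hceq s(x, F (i+1)) (by simp)]
        have hedge : s(x, F (i+1)) ∈ Γ.edgeSet := by
          rw [hΓ, SimpleGraph.edgeSet_deleteEdges]
          refine ⟨(SimpleGraph.mem_edgeSet _).mpr (hF.2.1 (i+1) (by omega)), ?_⟩
          intro hh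
          rw [Set.mem_singleton_iff] at hh
          have : F (i+1) = y := Sym2.congr_right.mp hh
          exact hF.2.2.1 (i+1) (by omega) 0 (by omega) (by omega) (this.trans hF.1.symm)
        have hγ'α : c₀ s(x, F (i+1)) ≠ α :=
          (mem_missF.mp hα).2 _ hedge (by simp)
        by_cases hiW : F i ∈ W
        · have hγ'β : c₀ s(x, F (i+1)) ≠ β := fun h => hbad i hi hiW h
          rw [missF, Finset.mem_sdiff] at hch ⊢
          refine ⟨hch.1, fun hmem => hch.2 ?_⟩
          rwa [kSwap_colorsAt_offdiag hγ'α hγ'β] at hmem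
        · rw [missF, kSwap_colorsAt_of_not_mem hWc hiW]
          exact hch
      have hαx₁ : α ∈ missF Γ k c₁ x := by
        rw [missF, kSwap_colorsAt_of_not_mem hWc hxW]
        exact hα
      have hmW : F m ∈ W := by rw [hWdef]; exact Set.mem_setOf_eq ▸ SimpleGraph.Reachable.refl _
      have hαv₁ : α ∈ missF Γ k c₁ (F m) := by
        rw [missF, Finset.mem_sdiff]
        refine ⟨missF_subset_Icc hα, fun hmem => ?_⟩
        rw [kSwap_colorsAt_alpha hWc hmW] at hmem
        exact not_mem_colorsAt_of_missF hβ hmem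
      exact cl1 hnc hF₁ hp₁ α hαx₁ hαv₁

/-- CL3: two distinct fan ends cannot miss a common color. -/
lemma cl3 (hnc : ¬ EdgeColorable H k)
    (hp₀ : IsProperEdgeColoring (H.deleteEdges {s(x,y)}) k c₀)
    (hdx : (H.deleteEdges {s(x,y)}).degree x < k) {v₁ v₂ : V} {β : ℕ}
    (h1 : FanEnd H k x y c₀ v₁) (h2 : FanEnd H k x y c₀ v₂) (hne : v₁ ≠ v₂)
    (hβ1 : β ∈ missF (H.deleteEdges {s(x,y)}) k c₀ v₁)
    (hβ2 : β ∈ missF (H.deleteEdges {s(x,y)}) k c₀ v₂) : False := by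
  obtain ⟨α, hα⟩ := missF_nonempty hp₀ hdx
  have hxv₁ : x ≠ v₁ := (fanEnd_adj h1).ne
  have hxv₂ : x ≠ v₂ := (fanEnd_adj h2).ne
  obtain ⟨F₁, m₁, hF₁, hFm₁⟩ := h1
  obtain ⟨F₂, m₂, hF₂, hFm₂⟩ := h2
  have hr1 := cla hnc hp₀ hα m₁ F₁ hF₁ (hFm₁ ▸ hβ1)
  have hr2 := cla hnc hp₀ hα m₂ F₂ hF₂ (hFm₂ ▸ hβ2)
  rw [hFm₁] at hr1
  rw [hFm₂] at hr2
  exact three_impossible (chain_degree_le_two hp₀)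
    (chain_degree_le_one_left hp₀ hα)
    (chain_degree_le_one_right hp₀ hβ1)
    (chain_degree_le_one_right hp₀ hβ2)
    hxv₁ hxv₂ hne hr1 hr2

end fan2

section count
open scoped Classical
variable {V : Type*} [Fintype V] {H : SimpleGraph V} {k : ℕ} {x y v : V} {c₀ : Sym2 V → ℕ}

lemma nbF_delete_x (hxy : H.Adj x y) :
    (H.deleteEdges {s(x,y)}).neighborFinset x = (H.neighborFinset x).erase y := by
  ext z
  rw [SimpleGraph.mem_neighborFinset, SimpleGraph.deleteEdges_adj, Finset.mem_erase,
    SimpleGraph.mem_neighborFinset]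
  constructor
  · rintro ⟨ha, hs⟩
    refine ⟨fun hh => hs ?_, ha⟩
    rw [hh]; rfl
  · rintro ⟨hz, ha⟩
    exact ⟨ha, fun hs => hz (Sym2.congr_right.mp (Set.mem_singleton_iff.mp hs))⟩

lemma deg_delete_x (hxy : H.Adj x y) :
    (H.deleteEdges {s(x,y)}).degree x + 1 = H.degree x := by
  rw [← SimpleGraph.card_neighborFinset_eq_degree, ← SimpleGraph.card_neighborFinset_eq_degree,
    nbF_delete_x hxy, Finset.card_erase_of_mem (by rwa [SimpleGraph.mem_neighborFinset])]
  have : 0 < (H.neighborFinset x).card := by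
    rw [Finset.card_pos]
    exact ⟨y, by rwa [SimpleGraph.mem_neighborFinset]⟩
  omega

lemma deg_delete_y (hxy : H.Adj x y) :
    (H.deleteEdges {s(x,y)}).degree y + 1 = H.degree y := by
  have h : H.deleteEdges {s(x,y)} = H.deleteEdges {s(y,x)} := by
    rw [Sym2.eq_swap]
  rw [h]
  exact deg_delete_x hxy.symm

lemma deg_delete_other (hvx : v ≠ x) (hvy : v ≠ y) :
    (H.deleteEdges {s(x,y)}).degree v = H.degree v := by
  rw [← SimpleGraph.card_neighborFinset_eq_degree, ← SimpleGraph.card_neighborFinset_eq_degree]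
  congr 1
  ext z
  rw [SimpleGraph.mem_neighborFinset, SimpleGraph.deleteEdges_adj,
    SimpleGraph.mem_neighborFinset]
  constructor
  · exact fun h => h.1
  · intro h
    refine ⟨h, fun hs => ?_⟩
    rw [Set.mem_singleton_iff] at hs
    have hv : v ∈ s(x,y) := hs ▸ Sym2.mem_mk_left v z
    rw [Sym2.mem_iff] at hv
    tauto

/-- The Vizing adjacency inequality. -/
theorem fanVAL (hdeg : ∀ u, H.degree u ≤ k) (hxy : H.Adj x y)
    (hnc : ¬ EdgeColorable H k) (hcol : EdgeColorable (H.deleteEdges {s(x,y)}) k) :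
    k + 1 ≤ H.degree y +
      ((H.neighborFinset x).filter (fun z => z ≠ y ∧ H.degree z = k)).card := by
  classical
  obtain ⟨c₀, hp⟩ := hcol
  set Γ := H.deleteEdges {s(x,y)} with hΓ
  have h1x : Γ.degree x + 1 = H.degree x := deg_delete_x hxy
  have hΓy : Γ.degree y + 1 = H.degree y := deg_delete_y hxy
  have hdx : Γ.degree x < k := by
    have h2 := hdeg x
    omega
  have hdy : Γ.degree y ≤ k := by
    have h2 := hdeg y
    omega
  set T : Finset V := Finset.univ.filter (fun u => FanEnd H k x y c₀ u) with hT
  have hyT : y ∈ T := by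
    rw [hT, Finset.mem_filter]
    exact ⟨Finset.mem_univ _, fanEnd_y hxy⟩
  have hTfe : ∀ u ∈ T, FanEnd H k x y c₀ u := by
    intro u hu; rw [hT, Finset.mem_filter] at hu; exact hu.2
  set f : V → Finset ℕ := fun u => missF Γ k c₀ u with hf
  -- disjointness
  have hdisj : ∀ u₁ ∈ T, ∀ u₂ ∈ T, u₁ ≠ u₂ → Disjoint (f u₁) (f u₂) := by
    intro u₁ h1 u₂ h2 hne
    rw [Finset.disjoint_left]
    intro β hβ1 hβ2
    exact cl3 hnc hp hdx (hTfe u₁ h1) (hTfe u₂ h2) hne hβ1 hβ2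
  have hcard : ∑ u ∈ T, (f u).card = (T.biUnion f).card := (Finset.card_biUnion hdisj).symm
  have hsub : T.biUnion f ⊆ (T.erase y).image (fun w => c₀ s(x,w)) := by
    intro β hβ
    rw [Finset.mem_biUnion] at hβ
    obtain ⟨u, hu, hβu⟩ := hβ
    obtain ⟨w, hwfe, hwy, hcw⟩ := cl2 hnc hp (hTfe u hu) hβu
    rw [Finset.mem_image]
    refine ⟨w, ?_, hcw⟩
    rw [Finset.mem_erase]
    exact ⟨hwy, by rw [hT, Finset.mem_filter]; exact ⟨Finset.mem_univ _, hwfe⟩⟩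
  have hbound : ∑ u ∈ T, (f u).card ≤ (T.erase y).card := by
    rw [hcard]
    exact le_trans (Finset.card_le_card hsub) Finset.card_image_le
  set A := T.erase y with hA
  set Big := A.filter (fun u => H.degree u = k) with hBig
  set Sm := A.filter (fun u => ¬ H.degree u = k) with hSm
  have hsplit : Big.card + Sm.card = A.card := Finset.card_filter_add_card_filter_not _
  have hAprops : ∀ u ∈ A, u ≠ y ∧ H.Adj x u := by
    intro u hu
    rw [hA, Finset.mem_erase] at hu
    exact ⟨hu.1, fanEnd_adj (hTfe u hu.2)⟩
  have hfA : ∀ u ∈ A, (f u).card = k - H.degree u := by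
    intro u hu
    obtain ⟨huy, hadj⟩ := hAprops u hu
    rw [hf, card_missF hp]
    · rw [deg_delete_other hadj.ne' huy]
    · rw [deg_delete_other hadj.ne' huy]; exact hdeg u
  have hSm1 : ∀ u ∈ Sm, 1 ≤ (f u).card := by
    intro u hu
    rw [hSm, Finset.mem_filter] at hu
    rw [hfA u hu.1]
    have := hdeg u
    have := hu.2
    omega
  have hsumA : Sm.card ≤ ∑ u ∈ A, (f u).card := by
    calc Sm.card = ∑ _u ∈ Sm, 1 := by rw [Finset.sum_const, smul_eq_mul, mul_one]
    _ ≤ ∑ u ∈ Sm, (f u).card := Finset.sum_le_sum hSm1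
    _ ≤ ∑ u ∈ A, (f u).card := Finset.sum_le_sum_of_subset (Finset.filter_subset _ _)
  have hsumT : ∑ u ∈ A, (f u).card + (f y).card = ∑ u ∈ T, (f u).card :=
    Finset.sum_erase_add T _ hyT
  have hfy : (f y).card = k - Γ.degree y := card_missF hp hdy
  have hky := hdeg y
  have hBigle : Big.card ≤
      ((H.neighborFinset x).filter (fun z => z ≠ y ∧ H.degree z = k)).card := by
    apply Finset.card_le_card
    intro u hu
    rw [hBig, Finset.mem_filter] at hu
    obtain ⟨huy, hadj⟩ := hAprops u hu.1
    rw [Finset.mem_filter, SimpleGraph.mem_neighborFinset]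
    exact ⟨hadj, huy, hu.2⟩
  -- final arithmetic
  rw [← hsumT] at hbound
  omega

end count

section app
open scoped Classical
variable {V : Type*} [Fintype V] {G H : SimpleGraph V} {k : ℕ}

lemma ec_mono (hle : H ≤ G) (h : EdgeColorable G k) : EdgeColorable H k := by
  obtain ⟨c, hc1, hc2⟩ := h
  have hsub : H.edgeSet ⊆ G.edgeSet := SimpleGraph.edgeSet_mono hle
  exact ⟨c, fun e he => hc1 e (hsub he), fun e he f hf => hc2 e (hsub he) f (hsub hf)⟩

lemma ec_of_no_edges (h : ∀ a b, ¬ H.Adj a b) : EdgeColorable H k := by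
  refine ⟨fun _ => 1, fun e he => absurd he ?_, fun e he => absurd he ?_⟩ <;>
  · intro he
    induction e with
    | _ a b => exact h a b ((SimpleGraph.mem_edgeSet _).mp he)

lemma exists_minimal (hnc : ¬ EdgeColorable G k) :
    ∃ H, H ≤ G ∧ ¬ EdgeColorable H k ∧
      ∀ e ∈ H.edgeSet, EdgeColorable (H.deleteEdges {e}) k := by
  classical
  have hex : ∃ n, ∃ H : SimpleGraph V, H ≤ G ∧ ¬ EdgeColorable H k ∧ H.edgeFinset.card = n :=
    ⟨G.edgeFinset.card, G, le_refl _, hnc, rfl⟩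
  obtain ⟨H, hle, hHnc, hcard⟩ := Nat.find_spec hex
  refine ⟨H, hle, hHnc, fun e he => ?_⟩
  by_contra hcon
  have hle' : H.deleteEdges {e} ≤ G := (SimpleGraph.deleteEdges_le _).trans hle
  have hcard' : (H.deleteEdges {e}).edgeFinset.card < Nat.find hex := by
    have h1 : (H.deleteEdges ({e} : Finset (Sym2 V))).edgeFinset = H.edgeFinset \ {e} :=
      SimpleGraph.edgeFinset_deleteEdges _
    have h2 : (H.deleteEdges ({e} : Finset (Sym2 V)) : SimpleGraph V)
        = H.deleteEdges ({e} : Set (Sym2 V)) := by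
      norm_cast
    rw [← h2 ]
    rw [h1]
    have he' : e ∈ H.edgeFinset := by rwa [SimpleGraph.mem_edgeFinset]
    have h3 : (H.edgeFinset \ {e}).card < H.edgeFinset.card := by
      apply Finset.card_lt_card
      constructor
      · exact Finset.sdiff_subset
      · intro hsub
        have := hsub he'
        simp at this
    omega
  exact Nat.find_min hex hcard' ⟨H.deleteEdges {e}, hle', hcon, rfl⟩

lemma deg_mono (hle : H ≤ G) (v : V) : H.degree v ≤ G.degree v := by
  rw [← SimpleGraph.card_neighborFinset_eq_degree, ← SimpleGraph.card_neighborFinset_eq_degree]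
  apply Finset.card_le_card
  intro z hz
  rw [SimpleGraph.mem_neighborFinset] at hz ⊢
  exact hle hz

lemma induce_degree_poly (G : SimpleGraph V) (s : Set V) (v : V) (hv : v ∈ s)
    [Fintype ((G.induce s).neighborSet ⟨v, hv⟩)] (t : Finset V)
    (ht : ∀ w : V, w ∈ t ↔ (G.Adj v w ∧ w ∈ s)) :
    (G.induce s).degree ⟨v, hv⟩ = t.card := by
  rw [← SimpleGraph.card_neighborFinset_eq_degree]
  apply Finset.card_bij (fun (w : ↥s) _ => (w : V))
  · intro w hw
    rw [SimpleGraph.mem_neighborFinset] at hw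
    rw [ht]
    exact ⟨hw, w.2⟩
  · intro w₁ _ w₂ _ h
    exact Subtype.ext h
  · intro z hz
    rw [ht] at hz
    refine ⟨⟨z, hz.2⟩, ?_, rfl⟩
    rw [SimpleGraph.mem_neighborFinset]
    exact hz.1

lemma cross_walk {Pr : V → Prop} : ∀ {a b : V}, G.Walk a b → Pr a → ¬ Pr b →
    ∃ s t, G.Adj s t ∧ Pr s ∧ ¬ Pr t := by
  intro a b w
  induction w with
  | nil => intro h h'; exact absurd h h'
  | @cons a m b h q ih =>
    intro ha hb
    by_cases hm : Pr m
    · exact ih hm hb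
    · exact ⟨a, m, h, ha, hm⟩

end app

-- If `G` is an HZ-graph with maximum degree `Δ` (a connected class-2 simple graph,
-- i.e. `χ'(G) = Δ + 1`, whose core `G_Δ` — the subgraph induced by the vertices of
-- degree `Δ` — has maximum degree at most 2), then the core `G_Δ` is 2-regular.
open Classical in
theorem stmt_5 {V : Type*} [Fintype V] (G : SimpleGraph V) (hconn : G.Connected)
    (hclass2a : EdgeColorable G (G.maxDegree + 1))
    (hclass2b : ¬ EdgeColorable G G.maxDegree)
    (hcore : ∀ v, (G.induce {v : V | G.degree v = G.maxDegree}).degree v ≤ 2) :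
    (G.induce {v : V | G.degree v = G.maxDegree}).IsRegularOfDegree 2 := by
  set k := G.maxDegree with hk
  have hbridge : ∀ (z : V) (hz : z ∈ {v : V | G.degree v = k}),
      (G.induce {v : V | G.degree v = k}).degree ⟨z, hz⟩
        = ((G.neighborFinset z).filter (fun w => G.degree w = k)).card := by
    intro z hz
    apply induce_degree_poly
    intro w
    rw [Finset.mem_filter, SimpleGraph.mem_neighborFinset]
    exact ⟨fun h => ⟨h.1, h.2⟩, fun h => ⟨h.1, h.2⟩⟩
  have hcore2 : ∀ z, G.degree z = k →
      ((G.neighborFinset z).filter (fun w => G.degree w = k)).card ≤ 2 := by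
    intro z hz
    have h3 := hcore ⟨z, hz⟩
    rwa [hbridge z hz] at h3
  intro v
  obtain ⟨u₀, hu₀⟩ := v
  refine le_antisymm (hcore ⟨u₀, hu₀⟩) ?_
  by_contra hlt
  push_neg at hlt
  rw [hbridge u₀ hu₀] at hlt
  have hcd : ((G.neighborFinset u₀).filter (fun w => G.degree w = k)).card ≤ 1 := by omega
  -- a minimal non-k-colorable subgraph H of G
  obtain ⟨H, hHle, hHnc, hHdel⟩ := exists_minimal (k := k) hclass2b
  have hdegH : ∀ z, H.degree z ≤ k := fun z => (deg_mono hHle z).trans (G.degree_le_maxDegree z)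
  have FANH : ∀ {a b : V}, H.Adj a b → k + 1 ≤ H.degree b +
      ((H.neighborFinset a).filter (fun z => z ≠ b ∧ H.degree z = k)).card :=
    fun {a b} hab => fanVAL hdegH hab hHnc (hHdel _ ((SimpleGraph.mem_edgeSet _).mpr hab))
  have hSk : ∀ z, H.degree z = k → G.degree z = k := by
    intro z hz
    exact le_antisymm (G.degree_le_maxDegree z) (hz ▸ deg_mono hHle z)
  -- D1 : endpoints of H-edges have H-degree at least 2
  have D1 : ∀ {a b : V}, H.Adj a b → 2 ≤ H.degree b := by
    intro a b hab
    have h := FANH hab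
    have hbm : b ∈ H.neighborFinset a := by rwa [SimpleGraph.mem_neighborFinset]
    have hsub : (H.neighborFinset a).filter (fun z => z ≠ b ∧ H.degree z = k)
        ⊆ (H.neighborFinset a).erase b := by
      intro z hz
      rw [Finset.mem_filter] at hz
      rw [Finset.mem_erase]
      exact ⟨hz.2.1, hz.1⟩
    have hc1 := Finset.card_le_card hsub
    have hc2 : ((H.neighborFinset a).erase b).card + 1 = H.degree a := by
      rw [Finset.card_erase_of_mem hbm, SimpleGraph.card_neighborFinset_eq_degree]
      have : 0 < (H.neighborFinset a).card := Finset.card_pos.mpr ⟨b, hbm⟩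
      rw [SimpleGraph.card_neighborFinset_eq_degree] at this
      omega
    have hda := hdegH a
    omega
  -- D2 : any endpoint has a neighbor of H-degree k (besides the other endpoint)
  have D2 : ∀ {a b : V}, H.Adj a b → ∃ z, H.Adj a z ∧ z ≠ b ∧ H.degree z = k := by
    intro a b hab
    have h := FANH hab
    have hdb := hdegH b
    have hpos : 0 < ((H.neighborFinset a).filter (fun z => z ≠ b ∧ H.degree z = k)).card := by
      omega
    obtain ⟨z, hz⟩ := Finset.card_pos.mp hpos
    rw [Finset.mem_filter, SimpleGraph.mem_neighborFinset] at hz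
    exact ⟨z, hz.1, hz.2⟩
  -- D3 : endpoints of H-edges have H-degree at least k-1
  have D3 : ∀ {a b : V}, H.Adj a b → k ≤ H.degree b + 1 := by
    intro a b hab
    by_contra hcon
    push_neg at hcon
    obtain ⟨z, hbz, hza, hzk⟩ := D2 hab.symm
    have h := FANH hbz.symm
    have h3 : 3 ≤ ((H.neighborFinset z).filter (fun w => w ≠ b ∧ H.degree w = k)).card := by
      omega
    have hsub : (H.neighborFinset z).filter (fun w => w ≠ b ∧ H.degree w = k)
        ⊆ (G.neighborFinset z).filter (fun w => G.degree w = k) := by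
      intro w hw
      rw [Finset.mem_filter, SimpleGraph.mem_neighborFinset] at hw
      rw [Finset.mem_filter, SimpleGraph.mem_neighborFinset]
      exact ⟨hHle hw.1, hSk w hw.2.2⟩
    have hcc := Finset.card_le_card hsub
    have := hcore2 z (hSk z hzk)
    omega
  -- D4 : any endpoint has at least two neighbors of H-degree k
  have D4 : ∀ {a b : V}, H.Adj a b →
      2 ≤ ((H.neighborFinset a).filter (fun z => H.degree z = k)).card := by
    intro a b hab
    by_cases hsmall : ∃ w, H.Adj a w ∧ H.degree w < k
    · obtain ⟨w, hw, hwk⟩ := hsmall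
      have h := FANH hw
      have hsub : (H.neighborFinset a).filter (fun z => z ≠ w ∧ H.degree z = k)
          ⊆ (H.neighborFinset a).filter (fun z => H.degree z = k) := by
        intro z hz
        rw [Finset.mem_filter] at hz ⊢
        exact ⟨hz.1, hz.2.2⟩
      have hcc := Finset.card_le_card hsub
      omega
    · push_neg at hsmall
      have hall : ∀ z ∈ H.neighborFinset a, H.degree z = k := by
        intro z hz
        rw [SimpleGraph.mem_neighborFinset] at hz
        exact le_antisymm (hdegH z) (hsmall z hz)
      rw [Finset.filter_true_of_mem hall, SimpleGraph.card_neighborFinset_eq_degree]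
      exact D1 hab.symm
  -- D5 : u₀ is isolated in H
  have D5 : ∀ w, ¬ H.Adj u₀ w := by
    intro w hw
    have h2 := D4 hw
    have hsub : (H.neighborFinset u₀).filter (fun z => H.degree z = k)
        ⊆ (G.neighborFinset u₀).filter (fun w => G.degree w = k) := by
      intro z hz
      rw [Finset.mem_filter, SimpleGraph.mem_neighborFinset] at hz
      rw [Finset.mem_filter, SimpleGraph.mem_neighborFinset]
      exact ⟨hHle hz.1, hSk z hz.2⟩
    have hcc := Finset.card_le_card hsub
    omega
  -- H has an edge
  have hedge : ∃ a b, H.Adj a b := by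
    by_contra hcon
    push_neg at hcon
    exact hHnc (ec_of_no_edges hcon)
  obtain ⟨x₀, y₀, hx₀y₀⟩ := hedge
  have hx₀P : 0 < H.degree x₀ := by
    rw [← SimpleGraph.card_neighborFinset_eq_degree]
    exact Finset.card_pos.mpr ⟨y₀, by rwa [SimpleGraph.mem_neighborFinset]⟩
  have hu₀P : ¬ 0 < H.degree u₀ := by
    intro h
    rw [← SimpleGraph.card_neighborFinset_eq_degree, Finset.card_pos] at h
    obtain ⟨w, hw⟩ := h
    rw [SimpleGraph.mem_neighborFinset] at hw
    exact D5 w hw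
  -- cross the boundary of the support of H
  obtain ⟨wk⟩ := hconn.preconnected x₀ u₀
  obtain ⟨a, b, hab, haP, hbP⟩ :=
    cross_walk (Pr := fun z => 0 < H.degree z) wk hx₀P hu₀P
  have hbdeg : H.degree b = 0 := by omega
  have hnotHab : ¬ H.Adj a b := by
    intro h
    have hm : a ∈ H.neighborFinset b := by
      rw [SimpleGraph.mem_neighborFinset]
      exact h.symm
    have : 0 < (H.neighborFinset b).card := Finset.card_pos.mpr ⟨a, hm⟩
    rw [SimpleGraph.card_neighborFinset_eq_degree] at this
    omega
  obtain ⟨w₁, hw₁⟩ : ∃ w₁, H.Adj a w₁ := by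
    rw [← SimpleGraph.card_neighborFinset_eq_degree, Finset.card_pos] at haP
    obtain ⟨w₁, hw₁⟩ := haP
    rw [SimpleGraph.mem_neighborFinset] at hw₁
    exact ⟨w₁, hw₁⟩
  have hda_lb : k ≤ H.degree a + 1 := D3 hw₁.symm
  have hGa : H.degree a + 1 ≤ G.degree a := by
    have hsub : insert b (H.neighborFinset a) ⊆ G.neighborFinset a := by
      intro z hz
      rw [Finset.mem_insert] at hz
      rw [SimpleGraph.mem_neighborFinset]
      rcases hz with rfl | hz
      · exact hab
      · rw [SimpleGraph.mem_neighborFinset] at hz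
        exact hHle hz
    have hbni : b ∉ H.neighborFinset a := by
      rw [SimpleGraph.mem_neighborFinset]
      exact hnotHab
    have := Finset.card_le_card hsub
    rw [Finset.card_insert_of_notMem hbni, SimpleGraph.card_neighborFinset_eq_degree,
      SimpleGraph.card_neighborFinset_eq_degree] at this
    exact this
  have hGak : G.degree a ≤ k := G.degree_le_maxDegree a
  have hdaH : H.degree a + 1 = k := by omega
  have hdaG : G.degree a = k := by omega
  -- a has an H-neighbor z of H-degree k
  have h2 := D4 hw₁
  have hpos : 0 < ((H.neighborFinset a).filter (fun z => H.degree z = k)).card := by omega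
  obtain ⟨z, hz⟩ := Finset.card_pos.mp hpos
  rw [Finset.mem_filter, SimpleGraph.mem_neighborFinset] at hz
  obtain ⟨hza, hzk⟩ := hz
  -- now count core neighbors of z
  have h := FANH hza.symm
  have h3 : 2 ≤ ((H.neighborFinset z).filter (fun w => w ≠ a ∧ H.degree w = k)).card := by
    omega
  have hanotin : a ∉ (H.neighborFinset z).filter (fun w => w ≠ a ∧ H.degree w = k) := by
    rw [Finset.mem_filter]
    rintro ⟨-, hne, -⟩
    exact hne rfl
  have hsub : insert a ((H.neighborFinset z).filter (fun w => w ≠ a ∧ H.degree w = k))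
      ⊆ (G.neighborFinset z).filter (fun w => G.degree w = k) := by
    intro w hw
    rw [Finset.mem_insert] at hw
    rw [Finset.mem_filter, SimpleGraph.mem_neighborFinset]
    rcases hw with rfl | hw
    · exact ⟨hHle hza.symm, hdaG⟩
    · rw [Finset.mem_filter, SimpleGraph.mem_neighborFinset] at hw
      exact ⟨hHle hw.1, hSk w hw.2.2⟩
  have hcc := Finset.card_le_card hsub
  rw [Finset.card_insert_of_notMem hanotin] at hcc
  have hc2 := hcore2 z (hSk z hzk)
  omega
end

section
/- If G is an HZ-graph with maximum degree Δ ≥ 3, then the minimum degree of G equals Δ−1. -/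
open SimpleGraph

set_option linter.unusedSectionVars false
namespace HZaux
open Classical
variable {V : Type*} [Fintype V]

def pres (H : SimpleGraph V) (c : Sym2 V → ℕ) (v : V) (a : ℕ) : Prop :=
  ∃ e ∈ H.edgeSet, v ∈ e ∧ c e = a

noncomputable def missF (H : SimpleGraph V) (k : ℕ) (c : Sym2 V → ℕ) (v : V) : Finset ℕ :=
  (Finset.Icc 1 k).filter (fun a => ¬ pres H c v a)

lemma mem_missF {H : SimpleGraph V} {k : ℕ} {c : Sym2 V → ℕ} {v : V} {a : ℕ} :
    a ∈ missF H k c v ↔ a ∈ Finset.Icc 1 k ∧ ¬ pres H c v a := by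
  simp [missF]

lemma not_pres_of_missF {H : SimpleGraph V} {k : ℕ} {c : Sym2 V → ℕ} {v : V} {a : ℕ}
    (h : a ∈ missF H k c v) : ¬ pres H c v a := (mem_missF.mp h).2

lemma Icc_of_missF {H : SimpleGraph V} {k : ℕ} {c : Sym2 V → ℕ} {v : V} {a : ℕ}
    (h : a ∈ missF H k c v) : a ∈ Finset.Icc 1 k := (mem_missF.mp h).1

lemma proper_unique {H : SimpleGraph V} {k : ℕ} {c : Sym2 V → ℕ} (hc : IsProperEdgeColoring H k c)
    {e f : Sym2 V} (he : e ∈ H.edgeSet) (hf : f ∈ H.edgeSet) {v : V}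
    (hve : v ∈ e) (hvf : v ∈ f) (hcef : c e = c f) : e = f := by
  by_contra hne
  exact hc.2 e he f hf hne ⟨v, hve, hvf⟩ hcef

lemma pres_elim {H : SimpleGraph V} {c : Sym2 V → ℕ} {v : V} {a : ℕ} (h : pres H c v a) :
    ∃ w, H.Adj v w ∧ c s(v,w) = a := by
  obtain ⟨e, he, hv, hca⟩ := h
  induction e with
  | _ p q =>
    rcases Sym2.mem_iff.mp hv with rfl | rfl
    · exact ⟨q, H.mem_edgeSet.mp he, hca⟩
    · refine ⟨p, (H.mem_edgeSet.mp he).symm, ?_⟩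
      rwa [Sym2.eq_swap]

lemma pres_intro {H : SimpleGraph V} {c : Sym2 V → ℕ} {v w : V} (h : H.Adj v w) :
    pres H c v (c s(v,w)) := ⟨s(v,w), H.mem_edgeSet.mpr h, by simp, rfl⟩

lemma pres_of_not_missF {H : SimpleGraph V} {k : ℕ} {c : Sym2 V → ℕ} {v : V} {a : ℕ}
    (hIcc : a ∈ Finset.Icc 1 k) (h : a ∉ missF H k c v) : pres H c v a := by
  by_contra hnp
  exact h (mem_missF.mpr ⟨hIcc, hnp⟩)

lemma missF_card {H : SimpleGraph V} {k : ℕ} {c : Sym2 V → ℕ} (hc : IsProperEdgeColoring H k c)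
    (v : V) : k ≤ H.degree v + (missF H k c v).card := by
  classical
  have hsplit : ((Finset.Icc 1 k).filter (fun a => pres H c v a)).card + (missF H k c v).card
      = k := by
    have := Finset.card_filter_add_card_filter_not
      (s := Finset.Icc 1 k) (p := fun a => pres H c v a)
    simp only [Nat.card_Icc] at this
    simpa [missF] using this
  have hinj : ((Finset.Icc 1 k).filter (fun a => pres H c v a)).card ≤ H.degree v := by
    rw [← SimpleGraph.card_incidenceFinset_eq_degree]
    refine Finset.card_le_card_of_injOn
      (fun a => if h : pres H c v a then Exists.choose h else s(v,v)) ?_ ?_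
    · intro a ha
      rw [Finset.mem_coe, Finset.mem_filter] at ha
      simp only [dif_pos ha.2]
      have hspec := ha.2.choose_spec
      rw [Finset.mem_coe, SimpleGraph.mem_incidenceFinset]
      exact ⟨hspec.1, hspec.2.1⟩
    · intro a ha b hb hab
      rw [Finset.mem_coe, Finset.mem_filter] at ha hb
      simp only [dif_pos ha.2, dif_pos hb.2] at hab
      have h1 := ha.2.choose_spec
      have h2 := hb.2.choose_spec
      rw [← h1.2.2, ← h2.2.2, hab]
  omega

section update
variable {H : SimpleGraph V} {k : ℕ} {c : Sym2 V → ℕ} {e₀ : Sym2 V} {a : ℕ}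

lemma missF_update_not_mem {w : V} (hw : w ∉ e₀) :
    missF H k (Function.update c e₀ a) w = missF H k c w := by
  ext b
  simp only [mem_missF]
  constructor <;> rintro ⟨hI, hb⟩ <;> refine ⟨hI, fun hp => hb ?_⟩
  · obtain ⟨e, he, hwe, hce⟩ := hp
    have hne : e ≠ e₀ := by rintro rfl; exact hw hwe
    exact ⟨e, he, hwe, by rwa [Function.update_of_ne hne]⟩
  · obtain ⟨e, he, hwe, hce⟩ := hp
    have hne : e ≠ e₀ := by rintro rfl; exact hw hwe
    rw [Function.update_of_ne hne] at hce
    exact ⟨e, he, hwe, hce⟩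

lemma update_proper (hc : IsProperEdgeColoring H k c) {u v : V}
    (he₀ : e₀ ∈ H.edgeSet) (huv : e₀ = s(u,v))
    (hu : a ∈ missF H k c u) (hv : a ∈ missF H k c v) :
    IsProperEdgeColoring H k (Function.update c e₀ a) := by
  constructor
  · intro e he
    by_cases hee : e = e₀
    · subst hee; rw [Function.update_self]; exact Icc_of_missF hu
    · rw [Function.update_of_ne hee]; exact hc.1 e he
  · rintro e he f hf hef ⟨w, hwe, hwf⟩
    by_cases hee : e = e₀ <;> by_cases hff : f = e₀
    · subst hee; exact absurd hff.symm hef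
    · subst hee
      rw [Function.update_self, Function.update_of_ne hff]
      intro hcf
      have hw : w = u ∨ w = v := by rw [huv] at hwe; exact Sym2.mem_iff.mp hwe
      have hpres : pres H c w a := ⟨f, hf, hwf, hcf.symm⟩
      rcases hw with rfl | rfl
      · exact not_pres_of_missF hu hpres
      · exact not_pres_of_missF hv hpres
    · subst hff
      rw [Function.update_self, Function.update_of_ne hee]
      intro hce
      have hw : w = u ∨ w = v := by rw [huv] at hwf; exact Sym2.mem_iff.mp hwf
      have hpres : pres H c w a := ⟨e, he, hwe, hce⟩
      rcases hw with rfl | rfl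
      · exact not_pres_of_missF hu hpres
      · exact not_pres_of_missF hv hpres
    · rw [Function.update_of_ne hee, Function.update_of_ne hff]
      exact hc.2 e he f hf hef ⟨w, hwe, hwf⟩

lemma extend_colorable {u v : V} (huv : H.Adj u v)
    (hc : IsProperEdgeColoring (H.deleteEdges {s(u,v)}) k c)
    (hu : a ∈ missF (H.deleteEdges {s(u,v)}) k c u)
    (hv : a ∈ missF (H.deleteEdges {s(u,v)}) k c v) :
    EdgeColorable H k := by
  set H' := H.deleteEdges {s(u,v)} with hH'
  have hmem : ∀ e ∈ H.edgeSet, e ≠ s(u,v) → e ∈ H'.edgeSet := by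
    intro e he hne
    rw [hH', SimpleGraph.edgeSet_deleteEdges]
    exact ⟨he, by simpa using hne⟩
  refine ⟨Function.update c s(u,v) a, ?_, ?_⟩
  · intro e he
    by_cases hee : e = s(u,v)
    · subst hee; rw [Function.update_self]; exact Icc_of_missF hu
    · rw [Function.update_of_ne hee]; exact hc.1 e (hmem e he hee)
  · rintro e he f hf hef ⟨w, hwe, hwf⟩
    by_cases hee : e = s(u,v) <;> by_cases hff : f = s(u,v)
    · subst hee; exact absurd hff.symm hef
    · subst hee
      rw [Function.update_self, Function.update_of_ne hff]
      intro hcf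
      have hw : w = u ∨ w = v := Sym2.mem_iff.mp hwe
      have hpres : pres H' c w a := ⟨f, hmem f hf hff, hwf, hcf.symm⟩
      rcases hw with rfl | rfl
      · exact not_pres_of_missF hu hpres
      · exact not_pres_of_missF hv hpres
    · subst hff
      rw [Function.update_self, Function.update_of_ne hee]
      intro hce
      have hw : w = u ∨ w = v := Sym2.mem_iff.mp hwf
      have hpres : pres H' c w a := ⟨e, hmem e he hee, hwe, hce⟩
      rcases hw with rfl | rfl
      · exact not_pres_of_missF hu hpres
      · exact not_pres_of_missF hv hpres
    · rw [Function.update_of_ne hee, Function.update_of_ne hff]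
      exact hc.2 e (hmem e he hee) f (hmem f hf hff) hef ⟨w, hwe, hwf⟩

lemma old_color_missF (hc : IsProperEdgeColoring H k c) {w : V}
    (he₀ : e₀ ∈ H.edgeSet) (hw : w ∈ e₀) (hne : a ≠ c e₀) :
    c e₀ ∈ missF H k (Function.update c e₀ a) w := by
  refine mem_missF.mpr ⟨hc.1 e₀ he₀, ?_⟩
  rintro ⟨e, he, hwe, hce⟩
  by_cases hee : e = e₀
  · subst hee; rw [Function.update_self] at hce; exact hne hce
  · rw [Function.update_of_ne hee] at hce
    exact hee (proper_unique hc he he₀ hwe hw hce)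

lemma mem_missF_update_of_ne {w : V} {b : ℕ} (hb : b ∈ missF H k c w) (hba : b ≠ a) :
    b ∈ missF H k (Function.update c e₀ a) w := by
  refine mem_missF.mpr ⟨Icc_of_missF hb, ?_⟩
  rintro ⟨e, he, hwe, hce⟩
  by_cases hee : e = e₀
  · subst hee; rw [Function.update_self] at hce; exact hba hce.symm
  · rw [Function.update_of_ne hee] at hce
    exact not_pres_of_missF hb ⟨e, he, hwe, hce⟩

end update
inductive FanChain (H' : SimpleGraph V) (k : ℕ) (c : Sym2 V → ℕ) (x y₀ : V) : List V → Prop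
  | base : FanChain H' k c x y₀ [y₀]
  | step {z w : V} {L : List V} (hL : FanChain H' k c x y₀ L) (hw : w ∈ L)
      (hz : H'.Adj x z) (hcol : c s(x,z) ∈ missF H' k c w) : FanChain H' k c x y₀ (z :: L)

section fan
variable {H' : SimpleGraph V} {k : ℕ} {c : Sym2 V → ℕ} {x y₀ : V}

lemma fan_mem {M : List V} (hM : FanChain H' k c x y₀ M) {z : V} (hz : z ∈ M) :
    z = y₀ ∨ H'.Adj x z := by
  induction hM with
  | base => simp at hz; exact Or.inl hz
  | step hL hw hadj hcol ih =>
    rcases List.mem_cons.mp hz with rfl | hz'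
    · exact Or.inr hadj
    · exact ih hz'

lemma fan_not_x (hxy : x ≠ y₀) {M : List V} (hM : FanChain H' k c x y₀ M) : x ∉ M := by
  intro hx
  rcases fan_mem hM hx with h | h
  · exact hxy h
  · exact h.ne rfl

lemma fan_suffix {M : List V} (hM : FanChain H' k c x y₀ M) {u : V} (hu : u ∈ M) :
    ∃ T, FanChain H' k c x y₀ (u :: T) ∧ (u :: T).length ≤ M.length := by
  induction hM with
  | base =>
    simp at hu; subst hu
    exact ⟨[], FanChain.base, le_refl _⟩
  | step hL hw hadj hcol ih =>
    rcases List.mem_cons.mp hu with rfl | hu'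
    · exact ⟨_, FanChain.step hL hw hadj hcol, le_refl _⟩
    · obtain ⟨T, hT, hlen⟩ := ih hu'
      exact ⟨T, hT, hlen.trans (by simp)⟩

lemma fan_update {M : List V} {z₀ : V} {a : ℕ} (hxy : x ≠ y₀)
    (hM : FanChain H' k c x y₀ M) (hz₀ : z₀ ∉ M) :
    FanChain H' k (Function.update c s(x,z₀) a) x y₀ M := by
  induction hM with
  | base => exact FanChain.base
  | step hL hw hadj hcol ih =>
    rename_i z w L
    have hzz₀ : z ≠ z₀ := fun h => hz₀ (h ▸ (List.mem_cons_self (a := z) (l := L)))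
    have hz₀L : z₀ ∉ L := fun h => hz₀ (List.mem_cons_of_mem _ h)
    have hwx : w ≠ x := fun h => (fan_not_x hxy hL) (h ▸ hw)
    have hwz₀ : w ≠ z₀ := fun h => hz₀L (h ▸ hw)
    have hedge : s(x,z) ≠ s(x,z₀) := fun h => hzz₀ (Sym2.congr_right.mp h)
    have hwmem : w ∉ s(x,z₀) := by
      rw [Sym2.mem_iff]; rintro (h | h); exacts [hwx h, hwz₀ h]
    refine FanChain.step (ih hz₀L) hw hadj ?_
    rw [Function.update_of_ne hedge, missF_update_not_mem hwmem]
    exact hcol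
end fan

section L1
variable {H : SimpleGraph V} {k : ℕ} {x y₀ : V}

lemma fan_L1_aux (h1 : ¬ EdgeColorable H k) (hxy : H.Adj x y₀) :
    ∀ (n : ℕ) (c : Sym2 V → ℕ),
      IsProperEdgeColoring (H.deleteEdges {s(x,y₀)}) k c →
    ∀ (M : List V) (u : V) (T : List V), M = u :: T →
      FanChain (H.deleteEdges {s(x,y₀)}) k c x y₀ M → M.length ≤ n →
    ∀ a, a ∈ missF (H.deleteEdges {s(x,y₀)}) k c x →
      a ∈ missF (H.deleteEdges {s(x,y₀)}) k c u → False := by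
  have hxyne : x ≠ y₀ := hxy.ne
  intro n
  induction n with
  | zero =>
    intro c hc M u T hMeq hM hlen
    subst hMeq; simp at hlen
  | succ n ih =>
    intro c hc M u T hMeq hM hlen a hax hau
    subst hMeq
    cases hM with
    | base => exact h1 (extend_colorable hxy hc hax hau)
    | step hL hw hadj hcol =>
      rename_i w
      have hlenL : T.length ≤ n := by simpa using hlen
      by_cases hu : u ∈ T
      · obtain ⟨T', hT', hlen'⟩ := fan_suffix hL hu
        exact ih c hc _ u T' rfl hT' (hlen'.trans hlenL) a hax hau
      · have hxL : x ∉ T := fan_not_x hxyne hL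
        have hedge : s(x,u) ∈ (H.deleteEdges {s(x,y₀)}).edgeSet :=
          (H.deleteEdges {s(x,y₀)}).mem_edgeSet.mpr hadj
        have hne : a ≠ c s(x,u) := by
          intro h
          exact not_pres_of_missF hax (h ▸ pres_intro hadj)
        set c₁ := Function.update c s(x,u) a with hc₁def
        have hc₁ : IsProperEdgeColoring (H.deleteEdges {s(x,y₀)}) k c₁ :=
          update_proper hc hedge rfl hax hau
        have hβx : c s(x,u) ∈ missF (H.deleteEdges {s(x,y₀)}) k c₁ x :=
          old_color_missF hc hedge (Sym2.mem_mk_left x u) hne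
        have hwx : w ≠ x := fun h => hxL (h ▸ hw)
        have hwu : w ≠ u := fun h => hu (h ▸ hw)
        have hwmem : w ∉ s(x,u) := by
          rw [Sym2.mem_iff]; rintro (h | h); exacts [hwx h, hwu h]
        have hβw : c s(x,u) ∈ missF (H.deleteEdges {s(x,y₀)}) k c₁ w := by
          rw [hc₁def, missF_update_not_mem hwmem]
          exact hcol
        have hfan₁ : FanChain (H.deleteEdges {s(x,y₀)}) k c₁ x y₀ T :=
          fan_update hxyne hL hu
        obtain ⟨T'', hT'', hlen''⟩ := fan_suffix hfan₁ hw
        exact ih c₁ hc₁ _ w T'' rfl hT'' (hlen''.trans hlenL) (c s(x,u)) hβx hβw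

lemma fan_L1 (h1 : ¬ EdgeColorable H k) (hxy : H.Adj x y₀) {c : Sym2 V → ℕ}
    (hc : IsProperEdgeColoring (H.deleteEdges {s(x,y₀)}) k c)
    {u : V} {T : List V} (hM : FanChain (H.deleteEdges {s(x,y₀)}) k c x y₀ (u :: T))
    {a : ℕ} (hax : a ∈ missF (H.deleteEdges {s(x,y₀)}) k c x)
    (hau : a ∈ missF (H.deleteEdges {s(x,y₀)}) k c u) : False :=
  fan_L1_aux h1 hxy (u :: T).length c hc _ u T rfl hM (le_refl _) a hax hau

end L1
section kempe
variable {H' : SimpleGraph V} {k : ℕ} {c : Sym2 V → ℕ} {α γ : ℕ}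

noncomputable def swapfun (α γ : ℕ) (a : ℕ) : ℕ := if a = α then γ else if a = γ then α else a

lemma swapfun_invol (hαγ : α ≠ γ) : ∀ a, swapfun α γ (swapfun α γ a) = a := by
  intro a
  by_cases h1 : a = α
  · subst h1; simp [swapfun, hαγ.symm]
  · by_cases h2 : a = γ
    · subst h2; simp [swapfun, hαγ]
    · simp [swapfun, h1, h2]

lemma swapfun_inj (hαγ : α ≠ γ) : Function.Injective (swapfun α γ) := by
  intro a b hab
  rw [← swapfun_invol hαγ a, hab, swapfun_invol hαγ b]

lemma swapfun_gamma : swapfun α γ γ = α := by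
  by_cases h : γ = α
  · rw [swapfun, if_pos h, h]
  · rw [swapfun, if_neg h, if_pos rfl]

noncomputable def swapc (H' : SimpleGraph V) (c : Sym2 V → ℕ) (α γ : ℕ) (S : Set V)
    (f : Sym2 V) : ℕ :=
  if f ∈ H'.edgeSet ∧ (∃ w ∈ f, w ∈ S) then swapfun α γ (c f) else c f

variable {x₀ : V}

/-- The chain component, as a set of vertices. -/
def chainComp (H' : SimpleGraph V) (c : Sym2 V → ℕ) (α γ : ℕ) (x₀ : V) : Set V :=
  {z | (chainGraph H' c α γ).Reachable x₀ z}

lemma chainGraph_adj {p q : V} :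
    (chainGraph H' c α γ).Adj p q ↔
      (s(p,q) ∈ H'.edgeSet ∧ (c s(p,q) = α ∨ c s(p,q) = γ)) ∧ p ≠ q := by
  rw [chainGraph, SimpleGraph.fromEdgeSet_adj]
  simp only [Set.mem_setOf_eq, Set.mem_sep_iff]

lemma chain_edge_closure {e : Sym2 V} (he : e ∈ H'.edgeSet) (hce : c e = α ∨ c e = γ)
    {w w' : V} (hw : w ∈ e) (hwS : w ∈ chainComp H' c α γ x₀) (hw' : w' ∈ e) :
    w' ∈ chainComp H' c α γ x₀ := by
  induction e with
  | _ p q =>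
    have hadj : H'.Adj p q := H'.mem_edgeSet.mp he
    have hK : (chainGraph H' c α γ).Adj p q := chainGraph_adj.mpr ⟨⟨he, hce⟩, hadj.ne⟩
    rcases Sym2.mem_iff.mp hw with rfl | rfl <;> rcases Sym2.mem_iff.mp hw' with rfl | rfl
    · exact hwS
    · exact hwS.trans hK.reachable
    · exact hwS.trans hK.symm.reachable
    · exact hwS

lemma swapc_eq {f : Sym2 V} {z : V} (hf : f ∈ H'.edgeSet) (hz : z ∈ f)
    (hzS : z ∉ chainComp H' c α γ x₀) :
    swapc H' c α γ (chainComp H' c α γ x₀) f = c f := by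
  rw [swapc]
  split_ifs with h
  · obtain ⟨-, w, hwf, hwS⟩ := h
    by_cases hcf : c f = α ∨ c f = γ
    · exact absurd (chain_edge_closure hf hcf hwf hwS hz) hzS
    · push_neg at hcf
      rw [swapfun, if_neg hcf.1, if_neg hcf.2]
  · rfl

lemma swapc_val (S : Set V) (f : Sym2 V) :
    swapc H' c α γ S f = c f ∨ (c f = α ∧ swapc H' c α γ S f = γ)
      ∨ (c f = γ ∧ swapc H' c α γ S f = α) := by
  rw [swapc]
  split_ifs with h
  · by_cases h1 : c f = α
    · exact Or.inr (Or.inl ⟨h1, by rw [swapfun, if_pos h1]⟩)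
    · by_cases h2 : c f = γ
      · exact Or.inr (Or.inr ⟨h2, by rw [swapfun, if_neg h1, if_pos h2]⟩)
      · exact Or.inl (by rw [swapfun, if_neg h1, if_neg h2])
  · exact Or.inl rfl

lemma swapc_proper (hc : IsProperEdgeColoring H' k c) (hαγ : α ≠ γ)
    (hα : α ∈ Finset.Icc 1 k) (hγ : γ ∈ Finset.Icc 1 k) :
    IsProperEdgeColoring H' k (swapc H' c α γ (chainComp H' c α γ x₀)) := by
  set S := chainComp H' c α γ x₀ with hSdef
  constructor
  · intro e he
    rcases swapc_val (c := c) S e with h | ⟨-, h⟩ | ⟨-, h⟩ <;> rw [h]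
    · exact hc.1 e he
    · exact hγ
    · exact hα
  · rintro e he f hf hef ⟨w, hwe, hwf⟩
    have hcef : c e ≠ c f := hc.2 e he f hf hef ⟨w, hwe, hwf⟩
    by_cases he' : e ∈ H'.edgeSet ∧ (∃ u ∈ e, u ∈ S) <;>
      by_cases hf' : f ∈ H'.edgeSet ∧ (∃ u ∈ f, u ∈ S)
    · rw [swapc, if_pos he', swapc, if_pos hf']
      exact fun h => hcef (swapfun_inj hαγ h)
    · rw [swapc, if_pos he', swapc, if_neg hf']
      by_cases hce : c e = α ∨ c e = γ
      · exfalso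
        obtain ⟨-, u, hue, huS⟩ := he'
        have hwS : w ∈ S := chain_edge_closure he hce hue huS hwe
        exact hf' ⟨hf, w, hwf, hwS⟩
      · push_neg at hce
        rw [swapfun, if_neg hce.1, if_neg hce.2]
        exact hcef
    · rw [swapc, if_neg he', swapc, if_pos hf']
      by_cases hcf : c f = α ∨ c f = γ
      · exfalso
        obtain ⟨-, u, huf, huS⟩ := hf'
        have hwS : w ∈ S := chain_edge_closure hf hcf huf huS hwf
        exact he' ⟨he, w, hwe, hwS⟩
      · push_neg at hcf
        rw [swapfun, if_neg hcf.1, if_neg hcf.2]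
        exact hcef
    · rw [swapc, if_neg he', swapc, if_neg hf']
      exact hcef

lemma swapc_missF_of_not_mem {z : V} (hz : z ∉ chainComp H' c α γ x₀) :
    missF H' k (swapc H' c α γ (chainComp H' c α γ x₀)) z = missF H' k c z := by
  ext b
  simp only [mem_missF]
  have key : ∀ e ∈ H'.edgeSet, z ∈ e →
      swapc H' c α γ (chainComp H' c α γ x₀) e = c e :=
    fun e he hze => swapc_eq he hze hz
  constructor <;> rintro ⟨hI, hb⟩ <;> refine ⟨hI, fun hp => hb ?_⟩ <;>
    obtain ⟨e, he, hze, hce⟩ := hp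
  · exact ⟨e, he, hze, by rw [key e he hze]; exact hce⟩
  · rw [key e he hze] at hce
    exact ⟨e, he, hze, hce⟩

lemma swapc_missF_other {S : Set V} {z : V} {δ : ℕ} (hδα : δ ≠ α) (hδγ : δ ≠ γ)
    (hδ : δ ∈ missF H' k c z) : δ ∈ missF H' k (swapc H' c α γ S) z := by
  refine mem_missF.mpr ⟨Icc_of_missF hδ, ?_⟩
  rintro ⟨e, he, hze, hce⟩
  rcases swapc_val (c := c) S e with h | ⟨h1, h2⟩ | ⟨h1, h2⟩
  · rw [h] at hce
    exact not_pres_of_missF hδ ⟨e, he, hze, hce⟩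
  · rw [h2] at hce; exact hδγ hce.symm
  · rw [h2] at hce; exact hδα hce.symm

lemma swapc_missF_alpha (hc : IsProperEdgeColoring H' k c) (hαγ : α ≠ γ)
    (hα : α ∈ Finset.Icc 1 k) {z : V} (hzS : z ∈ chainComp H' c α γ x₀)
    (hγz : γ ∈ missF H' k c z) :
    α ∈ missF H' k (swapc H' c α γ (chainComp H' c α γ x₀)) z := by
  refine mem_missF.mpr ⟨hα, ?_⟩
  rintro ⟨e, he, hze, hce⟩
  have hcond : e ∈ H'.edgeSet ∧ (∃ w ∈ e, w ∈ chainComp H' c α γ x₀) := ⟨he, z, hze, hzS⟩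
  rw [swapc, if_pos hcond] at hce
  have : c e = γ := swapfun_inj hαγ (by rw [hce, swapfun_gamma])
  exact not_pres_of_missF hγz ⟨e, he, hze, this⟩

-- degree lemmas for the chain graph
lemma chain_deg_le_two (hc : IsProperEdgeColoring H' k c) (z : V) :
    (chainGraph H' c α γ).degree z ≤ 2 := by
  classical
  have h2 : ({α, γ} : Finset ℕ).card ≤ 2 := by
    refine le_trans (Finset.card_insert_le _ _) ?_
    simp
  refine le_trans ?_ h2
  rw [← SimpleGraph.card_neighborFinset_eq_degree]
  refine Finset.card_le_card_of_injOn (fun w => c s(z,w)) ?_ ?_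
  · intro w hw
    rw [Finset.mem_coe, SimpleGraph.mem_neighborFinset] at hw
    obtain ⟨⟨hmem, hcol⟩, -⟩ := chainGraph_adj.mp hw
    simpa using hcol
  · intro w hw w' hw' hcc
    rw [Finset.mem_coe, SimpleGraph.mem_neighborFinset] at hw hw'
    obtain ⟨⟨hmem, -⟩, -⟩ := chainGraph_adj.mp hw
    obtain ⟨⟨hmem', -⟩, -⟩ := chainGraph_adj.mp hw'
    have := proper_unique hc hmem hmem' (Sym2.mem_mk_left z w) (Sym2.mem_mk_left z w') hcc
    exact Sym2.congr_right.mp this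

lemma chain_deg_one (hc : IsProperEdgeColoring H' k c) {z : V} {a b : ℕ}
    (hab : (a = α ∧ b = γ) ∨ (a = γ ∧ b = α))
    (hma : a ∈ missF H' k c z) (hpb : pres H' c z b) :
    (chainGraph H' c α γ).degree z = 1 := by
  classical
  obtain ⟨w, hadj, hcw⟩ := pres_elim hpb
  have hcolw : c s(z,w) = α ∨ c s(z,w) = γ := by
    rcases hab with ⟨-, rfl⟩ | ⟨-, rfl⟩
    · exact Or.inr hcw
    · exact Or.inl hcw
  have hnbr : (chainGraph H' c α γ).neighborFinset z = {w} := by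
    ext w'
    rw [SimpleGraph.mem_neighborFinset, Finset.mem_singleton]
    constructor
    · intro hadj'
      obtain ⟨⟨hmem', hcol'⟩, -⟩ := chainGraph_adj.mp hadj'
      have hcb : c s(z,w') = b := by
        rcases hab with ⟨rfl, rfl⟩ | ⟨rfl, rfl⟩ <;> rcases hcol' with h | h <;>
          first
            | (exfalso; exact not_pres_of_missF hma ⟨s(z,w'), hmem', Sym2.mem_mk_left z w', h⟩)
            | exact h
      have := proper_unique hc hmem' (H'.mem_edgeSet.mpr hadj)
        (Sym2.mem_mk_left z w') (Sym2.mem_mk_left z w) (by rw [hcb, hcw])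
      exact Sym2.congr_right.mp this
    · rintro rfl
      exact chainGraph_adj.mpr ⟨⟨H'.mem_edgeSet.mpr hadj, hcolw⟩, hadj.ne⟩
  rw [← SimpleGraph.card_neighborFinset_eq_degree, hnbr, Finset.card_singleton]

end kempe
section ends
variable {K : SimpleGraph V}

lemma exists_parent {x z : V} (hr : K.Reachable x z) (hne : z ≠ x) :
    ∃ w, K.Adj w z ∧ K.dist x w + 1 = K.dist x z := by
  obtain ⟨p, hp⟩ := hr.exists_walk_length_eq_dist
  cases hpr : p.reverse with
  | nil => exact absurd rfl hne
  | cons hadj q =>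
    rename_i w
    refine ⟨w, hadj.symm, ?_⟩
    have hlen : q.length + 1 = K.dist x z := by
      have := p.length_reverse
      rw [hpr] at this
      simp only [SimpleGraph.Walk.length_cons] at this
      omega
    have hle1 : K.dist x w ≤ q.length := by
      have := SimpleGraph.dist_le q.reverse
      simpa using this
    have hle2 : K.dist x z ≤ K.dist x w + 1 := by
      have hrw : K.Reachable x w := ⟨q.reverse⟩
      obtain ⟨m, hm⟩ := hrw.exists_walk_length_eq_dist
      have := SimpleGraph.dist_le (m.concat hadj.symm)
      rwa [SimpleGraph.Walk.length_concat, hm] at this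
    omega

lemma three_ends (hdeg : ∀ z, K.degree z ≤ 2)
    {x a b : V} (hxa : a ≠ x) (hxb : b ≠ x) (hab : a ≠ b)
    (h1 : K.degree x = 1) (h2 : K.degree a = 1) (h3 : K.degree b = 1)
    (ra : K.Reachable x a) (rb : K.Reachable x b) : False := by
  classical
  set S : Finset V := Finset.univ.filter (fun z => K.Reachable x z) with hSdef
  have hmemS : ∀ z, z ∈ S ↔ K.Reachable x z := by
    intro z; simp [hSdef]
  have hxS : x ∈ S := (hmemS x).mpr ⟨SimpleGraph.Walk.nil⟩
  have haS : a ∈ S := (hmemS a).mpr ra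
  have hbS : b ∈ S := (hmemS b).mpr rb
  have hclos : ∀ z ∈ S, ∀ w, K.Adj z w → w ∈ S := by
    intro z hz w hzw
    exact (hmemS w).mpr (((hmemS z).mp hz).trans hzw.reachable)
  set ES : Finset (Sym2 V) := K.edgeFinset.filter (fun e => ∀ w ∈ e, w ∈ S) with hESdef
  -- the injection from S.erase x into ES
  have hcard1 : (S.erase x).card ≤ ES.card := by
    set f : V → Sym2 V := fun z =>
      if h : K.Reachable x z ∧ z ≠ x then s((exists_parent h.1 h.2).choose, z) else s(z,z)
      with hfdef
    refine Finset.card_le_card_of_injOn f ?_ ?_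
    · intro z hz
      rw [Finset.mem_coe, Finset.mem_erase] at hz
      have hcond : K.Reachable x z ∧ z ≠ x := ⟨(hmemS z).mp hz.2, hz.1⟩
      obtain ⟨hadj, -⟩ := (exists_parent hcond.1 hcond.2).choose_spec
      rw [hfdef]
      simp only [dif_pos hcond]
      rw [hESdef, Finset.mem_coe, Finset.mem_filter, SimpleGraph.mem_edgeFinset]
      refine ⟨K.mem_edgeSet.mpr hadj, ?_⟩
      intro u hu
      rcases Sym2.mem_iff.mp hu with h | h
      · subst h; exact hclos z hz.2 _ hadj.symm
      · subst h; exact hz.2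
    · intro z hz z' hz' hff
      rw [Finset.mem_coe, Finset.mem_erase] at hz hz'
      have hcond : K.Reachable x z ∧ z ≠ x := ⟨(hmemS z).mp hz.2, hz.1⟩
      have hcond' : K.Reachable x z' ∧ z' ≠ x := ⟨(hmemS z').mp hz'.2, hz'.1⟩
      obtain ⟨hadj, hdist⟩ := (exists_parent hcond.1 hcond.2).choose_spec
      obtain ⟨hadj', hdist'⟩ := (exists_parent hcond'.1 hcond'.2).choose_spec
      rw [hfdef] at hff
      simp only [dif_pos hcond, dif_pos hcond'] at hff
      rcases Sym2.eq_iff.mp hff with ⟨-, h⟩ | ⟨hh1, hh2⟩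
      · exact h
      · rw [hh1] at hdist
        rw [← hh2] at hdist'
        omega
  -- handshake
  have hhand : ∑ z ∈ S, K.degree z = 2 * ES.card := by
    have step1 : ∀ z, K.degree z = (K.edgeFinset.filter (fun e => z ∈ e)).card := by
      intro z
      rw [← SimpleGraph.card_incidenceFinset_eq_degree, SimpleGraph.incidenceFinset_eq_filter]
    calc ∑ z ∈ S, K.degree z
        = ∑ z ∈ S, ∑ e ∈ K.edgeFinset, (if z ∈ e then 1 else 0) := by
          refine Finset.sum_congr rfl fun z _ => ?_
          rw [step1, Finset.card_filter]
      _ = ∑ e ∈ K.edgeFinset, ∑ z ∈ S, (if z ∈ e then 1 else 0) := Finset.sum_comm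
      _ = ∑ e ∈ K.edgeFinset, (if (∀ w ∈ e, w ∈ S) then 2 else 0) := by
          refine Finset.sum_congr rfl fun e he => ?_
          rw [← Finset.card_filter]
          rw [SimpleGraph.mem_edgeFinset] at he
          induction e with
          | _ p q =>
            have hpq : p ≠ q := (K.mem_edgeSet.mp he).ne
            by_cases hall : ∀ w ∈ (s(p,q) : Sym2 V), w ∈ S
            · rw [if_pos hall]
              have : S.filter (fun z => z ∈ (s(p,q) : Sym2 V)) = {p, q} := by
                ext z
                rw [Finset.mem_filter, Finset.mem_insert, Finset.mem_singleton, Sym2.mem_iff]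
                constructor
                · rintro ⟨-, h⟩; exact h
                · rintro (h | h)
                  · subst h; exact ⟨hall z (by simp), Or.inl rfl⟩
                  · subst h; exact ⟨hall z (by simp), Or.inr rfl⟩
              rw [this, Finset.card_insert_of_notMem (by simpa using hpq),
                Finset.card_singleton]
            · rw [if_neg hall]
              have hnone : ∀ w ∈ (s(p,q) : Sym2 V), w ∉ S := by
                push_neg at hall
                obtain ⟨w₀, hw₀, hw₀S⟩ := hall
                intro w hw hwS
                apply hw₀S
                rcases Sym2.mem_iff.mp hw with rfl | rfl <;>
                  rcases Sym2.mem_iff.mp hw₀ with rfl | rfl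
                · exact hwS
                · exact hclos _ hwS _ (K.mem_edgeSet.mp he)
                · exact hclos _ hwS _ (K.mem_edgeSet.mp he).symm
                · exact hwS
              rw [Finset.card_eq_zero, Finset.filter_eq_empty_iff]
              intro z hz
              exact fun hmem => hnone z hmem hz
      _ = ∑ e ∈ ES, 2 := by rw [hESdef, Finset.sum_filter]
      _ = 2 * ES.card := by rw [Finset.sum_const, smul_eq_mul, mul_comm]
  -- degree sum upper bound
  have haS' : a ∈ S.erase x := Finset.mem_erase.mpr ⟨hxa, haS⟩
  have hbS' : b ∈ (S.erase x).erase a :=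
    Finset.mem_erase.mpr ⟨hab.symm, Finset.mem_erase.mpr ⟨hxb, hbS⟩⟩
  set S3 := ((S.erase x).erase a).erase b with hS3
  have hsum1 : K.degree x + ∑ z ∈ S.erase x, K.degree z = ∑ z ∈ S, K.degree z :=
    Finset.add_sum_erase S (fun z => K.degree z) hxS
  have hsum2 : K.degree a + ∑ z ∈ (S.erase x).erase a, K.degree z
      = ∑ z ∈ S.erase x, K.degree z :=
    Finset.add_sum_erase _ (fun z => K.degree z) haS'
  have hsum3 : K.degree b + ∑ z ∈ S3, K.degree z = ∑ z ∈ (S.erase x).erase a, K.degree z :=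
    Finset.add_sum_erase _ (fun z => K.degree z) hbS'
  have hrest : ∑ z ∈ S3, K.degree z ≤ S3.card * 2 := by
    have := Finset.sum_le_card_nsmul S3 (fun z => K.degree z) 2 (fun z _ => hdeg z)
    simpa [smul_eq_mul] using this
  have hc3 : S3.card = ((S.erase x).erase a).card - 1 := Finset.card_erase_of_mem hbS'
  have hc2 : ((S.erase x).erase a).card = (S.erase x).card - 1 := Finset.card_erase_of_mem haS'
  have hc1 : (S.erase x).card = S.card - 1 := Finset.card_erase_of_mem hxS
  have hpos3 : 0 < ((S.erase x).erase a).card := Finset.card_pos.mpr ⟨b, hbS'⟩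
  have hpos2 : 0 < (S.erase x).card := Finset.card_pos.mpr ⟨a, haS'⟩
  have hpos1 : 0 < S.card := Finset.card_pos.mpr ⟨x, hxS⟩
  omega

end ends
section L2
variable {H : SimpleGraph V} {k : ℕ} {x y₀ : V}

lemma fan_swap {c : Sym2 V → ℕ}
    (hc : IsProperEdgeColoring (H.deleteEdges {s(x,y₀)}) k c)
    {α γ : ℕ} (hαγ : α ≠ γ) (hα : α ∈ Finset.Icc 1 k) {v' : V}
    (hax : α ∈ missF (H.deleteEdges {s(x,y₀)}) k c x)
    (hxS : x ∉ chainComp (H.deleteEdges {s(x,y₀)}) c α γ v')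
    {M : List V} (hM : FanChain (H.deleteEdges {s(x,y₀)}) k c x y₀ M) :
    FanChain (H.deleteEdges {s(x,y₀)}) k
        (swapc (H.deleteEdges {s(x,y₀)}) c α γ (chainComp (H.deleteEdges {s(x,y₀)}) c α γ v'))
        x y₀ M
      ∨ ∃ (u : V) (T : List V),
          FanChain (H.deleteEdges {s(x,y₀)}) k
            (swapc (H.deleteEdges {s(x,y₀)}) c α γ
              (chainComp (H.deleteEdges {s(x,y₀)}) c α γ v')) x y₀ (u :: T)
          ∧ α ∈ missF (H.deleteEdges {s(x,y₀)}) k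
              (swapc (H.deleteEdges {s(x,y₀)}) c α γ
                (chainComp (H.deleteEdges {s(x,y₀)}) c α γ v')) u := by
  induction hM with
  | base => exact Or.inl FanChain.base
  | step hL hw hadj hcol ih =>
    rename_i z w L
    rcases ih with hL₁ | hright
    · have hzedge : s(x,z) ∈ (H.deleteEdges {s(x,y₀)}).edgeSet :=
        (H.deleteEdges {s(x,y₀)}).mem_edgeSet.mpr hadj
      have hc₁edge : swapc (H.deleteEdges {s(x,y₀)}) c α γ
          (chainComp (H.deleteEdges {s(x,y₀)}) c α γ v') s(x,z) = c s(x,z) :=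
        swapc_eq hzedge (Sym2.mem_mk_left x z) hxS
      by_cases hβγ : c s(x,z) = γ
      · by_cases hwS : w ∈ chainComp (H.deleteEdges {s(x,y₀)}) c α γ v'
        · have hγw : γ ∈ missF (H.deleteEdges {s(x,y₀)}) k c w := hβγ ▸ hcol
          have hαw := swapc_missF_alpha (k := k) hc hαγ hα hwS hγw
          obtain ⟨T, hT, -⟩ := fan_suffix hL₁ hw
          exact Or.inr ⟨w, T, hT, hαw⟩
        · have hmw := swapc_missF_of_not_mem (k := k) (c := c) (α := α) (γ := γ)
            (x₀ := v') hwS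
          exact Or.inl (FanChain.step hL₁ hw hadj (by rw [hc₁edge, hmw]; exact hcol))
      · by_cases hβα : c s(x,z) = α
        · exact absurd (hβα ▸ pres_intro hadj) (not_pres_of_missF hax)
        · exact Or.inl (FanChain.step hL₁ hw hadj
            (by rw [hc₁edge]; exact swapc_missF_other hβα hβγ hcol))
    · exact Or.inr hright

lemma fan_L2 (h1 : ¬ EdgeColorable H k) (hxy : H.Adj x y₀) {c : Sym2 V → ℕ}
    (hc : IsProperEdgeColoring (H.deleteEdges {s(x,y₀)}) k c)
    {u v : V} {Tu Tv : List V}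
    (hu : FanChain (H.deleteEdges {s(x,y₀)}) k c x y₀ (u :: Tu))
    (hv : FanChain (H.deleteEdges {s(x,y₀)}) k c x y₀ (v :: Tv)) (huv : u ≠ v)
    {γ α : ℕ} (hγu : γ ∈ missF (H.deleteEdges {s(x,y₀)}) k c u)
    (hγv : γ ∈ missF (H.deleteEdges {s(x,y₀)}) k c v)
    (hax : α ∈ missF (H.deleteEdges {s(x,y₀)}) k c x) : False := by
  have hαγ : α ≠ γ := fun h => fan_L1 h1 hxy hc hu hax (h ▸ hγu)
  have hγpx : pres (H.deleteEdges {s(x,y₀)}) c x γ :=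
    pres_of_not_missF (Icc_of_missF hγu) (fun h => fan_L1 h1 hxy hc hu h hγu)
  have hαpu : pres (H.deleteEdges {s(x,y₀)}) c u α :=
    pres_of_not_missF (Icc_of_missF hax) (fun h => fan_L1 h1 hxy hc hu hax h)
  have hαpv : pres (H.deleteEdges {s(x,y₀)}) c v α :=
    pres_of_not_missF (Icc_of_missF hax) (fun h => fan_L1 h1 hxy hc hv hax h)
  have hdeg2 := chain_deg_le_two (α := α) (γ := γ) hc
  have hdegx : (chainGraph (H.deleteEdges {s(x,y₀)}) c α γ).degree x = 1 :=
    chain_deg_one hc (Or.inl ⟨rfl, rfl⟩) hax hγpx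
  have hdegu : (chainGraph (H.deleteEdges {s(x,y₀)}) c α γ).degree u = 1 :=
    chain_deg_one hc (Or.inr ⟨rfl, rfl⟩) hγu hαpu
  have hdegv : (chainGraph (H.deleteEdges {s(x,y₀)}) c α γ).degree v = 1 :=
    chain_deg_one hc (Or.inr ⟨rfl, rfl⟩) hγv hαpv
  have hune : u ≠ x := by
    rcases fan_mem hu ((List.mem_cons_self (a := u) (l := Tu))) with rfl | h
    · exact hxy.ne'
    · exact h.ne'
  have hvne : v ≠ x := by
    rcases fan_mem hv ((List.mem_cons_self (a := v) (l := Tv))) with rfl | h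
    · exact hxy.ne'
    · exact h.ne'
  -- one of u, v is not reachable from x in the chain graph
  have key : ∀ (v' : V) (Tv' : List V),
      FanChain (H.deleteEdges {s(x,y₀)}) k c x y₀ (v' :: Tv') →
      γ ∈ missF (H.deleteEdges {s(x,y₀)}) k c v' →
      ¬ (chainGraph (H.deleteEdges {s(x,y₀)}) c α γ).Reachable x v' → False := by
    intro v' Tv' hv' hγv' hnr
    have hxS : x ∉ chainComp (H.deleteEdges {s(x,y₀)}) c α γ v' :=
      fun h => hnr h.symm
    have hv'S : v' ∈ chainComp (H.deleteEdges {s(x,y₀)}) c α γ v' :=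
      ⟨SimpleGraph.Walk.nil⟩
    have hc₁ : IsProperEdgeColoring (H.deleteEdges {s(x,y₀)}) k
        (swapc (H.deleteEdges {s(x,y₀)}) c α γ
          (chainComp (H.deleteEdges {s(x,y₀)}) c α γ v')) :=
      swapc_proper hc hαγ (Icc_of_missF hax) (Icc_of_missF hγv')
    have hαx₁ : α ∈ missF (H.deleteEdges {s(x,y₀)}) k
        (swapc (H.deleteEdges {s(x,y₀)}) c α γ
          (chainComp (H.deleteEdges {s(x,y₀)}) c α γ v')) x := by
      rw [swapc_missF_of_not_mem hxS]
      exact hax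
    rcases fan_swap hc hαγ (Icc_of_missF hax) hax hxS hv' with h | ⟨u', T', hT', hαu'⟩
    · exact fan_L1 h1 hxy hc₁ h hαx₁ (swapc_missF_alpha hc hαγ (Icc_of_missF hax) hv'S hγv')
    · exact fan_L1 h1 hxy hc₁ hT' hαx₁ hαu'
  by_cases hru : (chainGraph (H.deleteEdges {s(x,y₀)}) c α γ).Reachable x u
  · by_cases hrv : (chainGraph (H.deleteEdges {s(x,y₀)}) c α γ).Reachable x v
    · exact three_ends hdeg2 hune hvne huv hdegx hdegu hdegv hru hrv
    · exact key v Tv hv hγv hrv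
  · exact key u Tu hu hγu hru

end L2
section VAL
variable {H : SimpleGraph V} {k : ℕ} {x y₀ : V}

lemma fan_head {H' : SimpleGraph V} {c : Sym2 V → ℕ} {z : V} {T : List V}
    (h : FanChain H' k c x y₀ (z :: T)) : z = y₀ ∨ H'.Adj x z := by
  cases h with
  | base => exact Or.inl rfl
  | step _ _ hadj _ => exact Or.inr hadj

lemma deg_del_endpoint (hadj : H.Adj x y₀) :
    (H.deleteEdges {s(x,y₀)}).degree y₀ + 1 = H.degree y₀ := by
  classical
  have hnbr : (H.deleteEdges {s(x,y₀)}).neighborFinset y₀ = (H.neighborFinset y₀).erase x := by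
    ext w
    rw [SimpleGraph.mem_neighborFinset, Finset.mem_erase, SimpleGraph.mem_neighborFinset,
      SimpleGraph.deleteEdges_adj]
    constructor
    · rintro ⟨ha, hne⟩
      refine ⟨fun hwx => hne ?_, ha⟩
      subst hwx
      rw [Set.mem_singleton_iff, Sym2.eq_swap]
    · rintro ⟨hne, ha⟩
      refine ⟨ha, fun hmem => hne ?_⟩
      rw [Set.mem_singleton_iff] at hmem
      rcases Sym2.eq_iff.mp hmem with ⟨h1, -⟩ | ⟨-, h2⟩
      · exact absurd h1 hadj.ne'
      · exact h2
  rw [SimpleGraph.degree, SimpleGraph.degree, hnbr,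
    Finset.card_erase_of_mem ((H.mem_neighborFinset y₀ x).mpr hadj.symm)]
  have : 0 < (H.neighborFinset y₀).card :=
    Finset.card_pos.mpr ⟨x, (H.mem_neighborFinset y₀ x).mpr hadj.symm⟩
  omega

lemma deg_del_x (hadj : H.Adj x y₀) :
    (H.deleteEdges {s(x,y₀)}).degree x + 1 = H.degree x := by
  classical
  have hnbr : (H.deleteEdges {s(x,y₀)}).neighborFinset x = (H.neighborFinset x).erase y₀ := by
    ext w
    rw [SimpleGraph.mem_neighborFinset, Finset.mem_erase, SimpleGraph.mem_neighborFinset,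
      SimpleGraph.deleteEdges_adj]
    constructor
    · rintro ⟨ha, hne⟩
      refine ⟨fun hwy => hne ?_, ha⟩
      subst hwy
      rw [Set.mem_singleton_iff]
    · rintro ⟨hne, ha⟩
      refine ⟨ha, fun hmem => hne ?_⟩
      rw [Set.mem_singleton_iff] at hmem
      rcases Sym2.eq_iff.mp hmem with ⟨-, h2⟩ | ⟨h1, -⟩
      · exact h2
      · exact absurd h1 hadj.ne
  rw [SimpleGraph.degree, SimpleGraph.degree, hnbr,
    Finset.card_erase_of_mem ((H.mem_neighborFinset x y₀).mpr hadj)]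
  have : 0 < (H.neighborFinset x).card :=
    Finset.card_pos.mpr ⟨y₀, (H.mem_neighborFinset x y₀).mpr hadj⟩
  omega

lemma deg_del_other (hadj : H.Adj x y₀) {z : V} (hzx : z ≠ x) (hzy : z ≠ y₀) :
    (H.deleteEdges {s(x,y₀)}).degree z = H.degree z := by
  classical
  have hnbr : (H.deleteEdges {s(x,y₀)}).neighborFinset z = H.neighborFinset z := by
    ext w
    rw [SimpleGraph.mem_neighborFinset, SimpleGraph.mem_neighborFinset,
      SimpleGraph.deleteEdges_adj]
    constructor
    · rintro ⟨ha, -⟩; exact ha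
    · intro ha
      refine ⟨ha, fun hmem => ?_⟩
      rw [Set.mem_singleton_iff] at hmem
      rcases Sym2.eq_iff.mp hmem with ⟨h1, -⟩ | ⟨h1, -⟩
      · exact hzx h1
      · exact hzy h1
  rw [SimpleGraph.degree, SimpleGraph.degree, hnbr]

lemma VAL (h1 : ¬ EdgeColorable H k) (hdeg : ∀ v, H.degree v ≤ k) (hadj : H.Adj x y₀)
    (h2 : EdgeColorable (H.deleteEdges {s(x,y₀)}) k) :
    ∃ T : Finset V, (∀ z ∈ T, H.Adj x z ∧ z ≠ y₀ ∧ H.degree z = k)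
      ∧ k + 1 ≤ T.card + H.degree y₀ := by
  classical
  obtain ⟨c, hc⟩ := h2
  set Z : Finset V :=
    Finset.univ.filter (fun z => ∃ T, FanChain (H.deleteEdges {s(x,y₀)}) k c x y₀ (z :: T))
    with hZdef
  have hZmem : ∀ z, z ∈ Z ↔ ∃ T, FanChain (H.deleteEdges {s(x,y₀)}) k c x y₀ (z :: T) := by
    intro z; simp [hZdef]
  have hy₀Z : y₀ ∈ Z := (hZmem y₀).mpr ⟨[], FanChain.base⟩
  have hZadj : ∀ z ∈ Z, z ≠ y₀ → (H.deleteEdges {s(x,y₀)}).Adj x z := by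
    intro z hz hne
    obtain ⟨T, hT⟩ := (hZmem z).mp hz
    rcases fan_head hT with h | h
    · exact absurd h hne
    · exact h
  have hnotadj : ¬ (H.deleteEdges {s(x,y₀)}).Adj x y₀ := by
    rw [SimpleGraph.deleteEdges_adj]
    rintro ⟨-, hmem⟩
    exact hmem rfl
  -- the map from missing colors to fan vertices
  have hval : ∀ a ∈ Z.biUnion (fun u => missF (H.deleteEdges {s(x,y₀)}) k c u),
      ∃ z, (H.deleteEdges {s(x,y₀)}).Adj x z ∧ c s(x,z) = a ∧ z ∈ Z ∧ z ≠ y₀ := by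
    intro a ha
    rw [Finset.mem_biUnion] at ha
    obtain ⟨u, huZ, hau⟩ := ha
    obtain ⟨Tu, hTu⟩ := (hZmem u).mp huZ
    have hnmx : a ∉ missF (H.deleteEdges {s(x,y₀)}) k c x :=
      fun h => fan_L1 h1 hadj hc hTu h hau
    have hpx : pres (H.deleteEdges {s(x,y₀)}) c x a :=
      pres_of_not_missF (Icc_of_missF hau) hnmx
    obtain ⟨z, hzadj, hcz⟩ := pres_elim hpx
    have hzZ : z ∈ Z := (hZmem z).mpr ⟨u :: Tu,
      FanChain.step hTu ((List.mem_cons_self (a := u) (l := Tu))) hzadj (hcz ▸ hau)⟩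
    have hzy : z ≠ y₀ := by
      rintro rfl
      exact hnotadj hzadj
    exact ⟨z, hzadj, hcz, hzZ, hzy⟩
  have hdisj : ∀ u ∈ (Z : Set V), ∀ v ∈ (Z : Set V), u ≠ v →
      Disjoint (missF (H.deleteEdges {s(x,y₀)}) k c u)
        (missF (H.deleteEdges {s(x,y₀)}) k c v) := by
    intro u hu v hv huv
    rw [Finset.disjoint_left]
    intro γ hγu hγv
    obtain ⟨Tu, hTu⟩ := (hZmem u).mp hu
    obtain ⟨Tv, hTv⟩ := (hZmem v).mp hv
    -- α missing at x exists
    have hk1 : k ≤ (H.deleteEdges {s(x,y₀)}).degree x + (missF (H.deleteEdges {s(x,y₀)}) k c x).card := by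
      convert missF_card hc x
    have hdx := deg_del_x hadj
    have hxk := hdeg x
    have hpos : 0 < (missF (H.deleteEdges {s(x,y₀)}) k c x).card := by omega
    obtain ⟨α, hα⟩ := Finset.card_pos.mp hpos
    exact fan_L2 h1 hadj hc hTu hTv huv hγu hγv hα
  have hbi : (Z.biUnion (fun u => missF (H.deleteEdges {s(x,y₀)}) k c u)).card
      = ∑ u ∈ Z, (missF (H.deleteEdges {s(x,y₀)}) k c u).card :=
    Finset.card_biUnion (fun u hu v hv huv => hdisj u hu v hv huv)
  -- injection into Z.erase y₀
  have hinj : (Z.biUnion (fun u => missF (H.deleteEdges {s(x,y₀)}) k c u)).card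
      ≤ (Z.erase y₀).card := by
    set f : ℕ → V := fun a =>
      if h : ∃ z, (H.deleteEdges {s(x,y₀)}).Adj x z ∧ c s(x,z) = a ∧ z ∈ Z ∧ z ≠ y₀
      then h.choose else x
      with hfdef
    refine Finset.card_le_card_of_injOn f ?_ ?_
    · intro a ha
      have hex := hval a ha
      rw [hfdef]
      simp only [dif_pos hex]
      obtain ⟨-, -, hz1, hz2⟩ := hex.choose_spec
      exact Finset.mem_erase.mpr ⟨hz2, hz1⟩
    · intro a ha b hb hab
      have hexa := hval a (by simpa using ha)
      have hexb := hval b (by simpa using hb)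
      rw [hfdef] at hab
      simp only [dif_pos hexa, dif_pos hexb] at hab
      obtain ⟨ha1, ha2, -, -⟩ := hexa.choose_spec
      obtain ⟨hb1, hb2, -, -⟩ := hexb.choose_spec
      rw [← ha2, ← hb2, hab]
  -- partition of Z.erase y₀
  set T : Finset V := (Z.erase y₀).filter (fun z => H.degree z = k) with hTdef
  set R : Finset V := (Z.erase y₀).filter (fun z => ¬ H.degree z = k) with hRdef
  have hTR : T.card + R.card = (Z.erase y₀).card :=
    Finset.card_filter_add_card_filter_not (fun z => H.degree z = k)
  have hZc : (Z.erase y₀).card + 1 = Z.card := by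
    rw [Finset.card_erase_of_mem hy₀Z]
    have : 0 < Z.card := Finset.card_pos.mpr ⟨y₀, hy₀Z⟩
    omega
  -- lower bound for the sum
  have hy₀b : k + 1 ≤ H.degree y₀ + (missF (H.deleteEdges {s(x,y₀)}) k c y₀).card := by
    have : k ≤ (H.deleteEdges {s(x,y₀)}).degree y₀ + (missF (H.deleteEdges {s(x,y₀)}) k c y₀).card := by
      convert missF_card hc y₀
    have := deg_del_endpoint hadj
    omega
  have hRb : ∀ u ∈ R, 1 ≤ (missF (H.deleteEdges {s(x,y₀)}) k c u).card := by
    intro u hu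
    rw [hRdef, Finset.mem_filter, Finset.mem_erase] at hu
    obtain ⟨⟨huy, huZ⟩, hdu⟩ := hu
    have hadjxu := hZadj u huZ huy
    have hux : u ≠ x := hadjxu.ne'
    have hdeq := deg_del_other hadj hux huy
    have : k ≤ (H.deleteEdges {s(x,y₀)}).degree u + (missF (H.deleteEdges {s(x,y₀)}) k c u).card := by
      convert missF_card hc u
    have := hdeg u
    omega
  have hsum : (missF (H.deleteEdges {s(x,y₀)}) k c y₀).card + R.card
      ≤ ∑ u ∈ Z, (missF (H.deleteEdges {s(x,y₀)}) k c u).card := by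
    have hsplit : (missF (H.deleteEdges {s(x,y₀)}) k c y₀).card
        + ∑ u ∈ Z.erase y₀, (missF (H.deleteEdges {s(x,y₀)}) k c u).card
        = ∑ u ∈ Z, (missF (H.deleteEdges {s(x,y₀)}) k c u).card :=
      Finset.add_sum_erase Z (fun u => (missF (H.deleteEdges {s(x,y₀)}) k c u).card) hy₀Z
    have hsub : R ⊆ Z.erase y₀ := Finset.filter_subset _ _
    have h1' : ∑ u ∈ R, (missF (H.deleteEdges {s(x,y₀)}) k c u).card
        ≤ ∑ u ∈ Z.erase y₀, (missF (H.deleteEdges {s(x,y₀)}) k c u).card :=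
      Finset.sum_le_sum_of_subset hsub
    have h2' : R.card ≤ ∑ u ∈ R, (missF (H.deleteEdges {s(x,y₀)}) k c u).card := by
      have := Finset.card_nsmul_le_sum R
        (fun u => (missF (H.deleteEdges {s(x,y₀)}) k c u).card) 1 hRb
      simpa using this
    omega
  refine ⟨T, ?_, by omega⟩
  intro z hz
  rw [hTdef, Finset.mem_filter, Finset.mem_erase] at hz
  obtain ⟨⟨hzy, hzZ⟩, hdz⟩ := hz
  exact ⟨(SimpleGraph.deleteEdges_adj.mp (hZadj z hzZ hzy)).1, hzy, hdz⟩

end VAL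
section helpers

lemma degree_mono {H G : SimpleGraph V} (h : H ≤ G) (v : V) : H.degree v ≤ G.degree v := by
  classical
  rw [← SimpleGraph.card_neighborFinset_eq_degree, ← SimpleGraph.card_neighborFinset_eq_degree]
  refine Finset.card_le_card ?_
  intro w hw
  rw [SimpleGraph.mem_neighborFinset] at hw ⊢
  exact h hw

lemma degree_lt {H G : SimpleGraph V} (h : H ≤ G) {u v : V} (huv : G.Adj u v)
    (hnuv : ¬ H.Adj u v) : H.degree u + 1 ≤ G.degree u := by
  classical
  have hsub : H.neighborFinset u ⊆ (G.neighborFinset u).erase v := by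
    intro w hw
    have haw := (H.mem_neighborFinset u w).mp hw
    exact Finset.mem_erase.mpr
      ⟨fun hwv => hnuv (hwv ▸ haw), (G.mem_neighborFinset u w).mpr (h haw)⟩
  have hle := Finset.card_le_card hsub
  rw [Finset.card_erase_of_mem ((G.mem_neighborFinset u v).mpr huv)] at hle
  have hpos : 0 < (G.neighborFinset u).card :=
    Finset.card_pos.mpr ⟨v, (G.mem_neighborFinset u v).mpr huv⟩
  rw [← SimpleGraph.card_neighborFinset_eq_degree, ← SimpleGraph.card_neighborFinset_eq_degree]
  omega

lemma three_elems {s : Finset V} (h : 3 ≤ s.card) :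
    ∃ a b c, a ∈ s ∧ b ∈ s ∧ c ∈ s ∧ a ≠ b ∧ a ≠ c ∧ b ≠ c := by
  obtain ⟨a, ha⟩ := Finset.card_pos.mp (by omega : 0 < s.card)
  have h2 : 0 < (s.erase a).card := by rw [Finset.card_erase_of_mem ha]; omega
  obtain ⟨b, hb⟩ := Finset.card_pos.mp h2
  have h3 : 0 < ((s.erase a).erase b).card := by
    rw [Finset.card_erase_of_mem hb, Finset.card_erase_of_mem ha]; omega
  obtain ⟨c, hc⟩ := Finset.card_pos.mp h3
  obtain ⟨hcb, hc'⟩ := Finset.mem_erase.mp hc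
  obtain ⟨hca, hcs⟩ := Finset.mem_erase.mp hc'
  obtain ⟨hba, hbs⟩ := Finset.mem_erase.mp hb
  exact ⟨a, b, c, ha, hbs, hcs, fun hh => hba hh.symm, fun hh => hca hh.symm,
    fun hh => hcb hh.symm⟩

lemma two_elems {s : Finset V} (h : 2 ≤ s.card) :
    ∃ a b, a ∈ s ∧ b ∈ s ∧ a ≠ b := by
  obtain ⟨a, ha⟩ := Finset.card_pos.mp (by omega : 0 < s.card)
  have h2 : 0 < (s.erase a).card := by rw [Finset.card_erase_of_mem ha]; omega
  obtain ⟨b, hb⟩ := Finset.card_pos.mp h2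
  obtain ⟨hba, hbs⟩ := Finset.mem_erase.mp hb
  exact ⟨a, b, ha, hbs, fun hh => hba hh.symm⟩

lemma exists_critical (G : SimpleGraph V) (k : ℕ) (hG : ¬ EdgeColorable G k) :
    ∃ H : SimpleGraph V, H ≤ G ∧ ¬ EdgeColorable H k ∧
      ∀ x y, H.Adj x y → EdgeColorable (H.deleteEdges {s(x,y)}) k := by
  classical
  set P : Finset (Sym2 V) → Prop :=
    fun F => ↑F ⊆ G.edgeSet ∧ ¬ EdgeColorable (SimpleGraph.fromEdgeSet (↑F : Set (Sym2 V))) k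
    with hPdef
  have hPne : P G.edgeFinset := by
    constructor
    · rw [SimpleGraph.coe_edgeFinset]
    · rw [SimpleGraph.coe_edgeFinset, SimpleGraph.fromEdgeSet_edgeSet]
      exact hG
  obtain ⟨F, hFmem, hmin⟩ := Finset.exists_min_image (Finset.univ.filter P) Finset.card
    ⟨G.edgeFinset, Finset.mem_filter.mpr ⟨Finset.mem_univ _, hPne⟩⟩
  have hF : P F := (Finset.mem_filter.mp hFmem).2
  refine ⟨SimpleGraph.fromEdgeSet ↑F, ?_, hF.2, ?_⟩
  · calc SimpleGraph.fromEdgeSet (↑F : Set (Sym2 V))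
        ≤ SimpleGraph.fromEdgeSet G.edgeSet := SimpleGraph.fromEdgeSet_mono hF.1
      _ = G := SimpleGraph.fromEdgeSet_edgeSet G
  · intro x y hxy
    have hmem : s(x,y) ∈ F := by
      exact ((SimpleGraph.fromEdgeSet_adj _).mp hxy).1
    have hgraph : (SimpleGraph.fromEdgeSet (↑F : Set (Sym2 V))).deleteEdges {s(x,y)}
        = SimpleGraph.fromEdgeSet (↑(F.erase s(x,y)) : Set (Sym2 V)) := by
      ext p q
      rw [SimpleGraph.deleteEdges_adj, SimpleGraph.fromEdgeSet_adj,
        SimpleGraph.fromEdgeSet_adj]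
      constructor
      · rintro ⟨⟨hmem', hne⟩, hnotin⟩
        refine ⟨Finset.mem_coe.mpr (Finset.mem_erase.mpr ⟨?_, hmem'⟩), hne⟩
        intro hh
        exact hnotin (hh ▸ rfl)
      · rintro ⟨hmem', hne⟩
        obtain ⟨hne', hmem''⟩ := Finset.mem_erase.mp (Finset.mem_coe.mp hmem')
        exact ⟨⟨hmem'', hne⟩, fun hh => hne' (Set.mem_singleton_iff.mp hh)⟩
    rw [hgraph]
    by_contra hnc
    have hPerase : P (F.erase s(x,y)) := by
      constructor
      · exact le_trans (Finset.coe_subset.mpr (Finset.erase_subset _ _)) hF.1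
      · exact hnc
    have hle := hmin (F.erase s(x,y)) (Finset.mem_filter.mpr ⟨Finset.mem_univ _, hPerase⟩)
    rw [Finset.card_erase_of_mem hmem] at hle
    have : 0 < F.card := Finset.card_pos.mpr ⟨_, hmem⟩
    omega

lemma walk_findedge {G H : SimpleGraph V} :
    ∀ {p a : V} (_ : G.Walk p a), H.degree p = 0 → 1 ≤ H.degree a →
    ∃ u v, G.Adj u v ∧ ¬ H.Adj u v ∧ 1 ≤ H.degree v := by
  intro p a w
  induction w with
  | nil =>
    intro h0 h1
    omega
  | @cons p b a h q ih =>
    intro h0 h1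
    by_cases hd : 1 ≤ H.degree b
    · refine ⟨p, b, h, ?_, hd⟩
      intro hH
      have : 0 < (H.neighborFinset p).card :=
        Finset.card_pos.mpr ⟨b, (H.mem_neighborFinset p b).mpr hH⟩
      rw [SimpleGraph.card_neighborFinset_eq_degree] at this
      omega
    · exact ih (by omega) h1

lemma edgeSet_empty_colorable {H : SimpleGraph V} (k : ℕ) (hno : ∀ a b, ¬ H.Adj a b) :
    EdgeColorable H k := by
  have hempty : H.edgeSet = ∅ := by
    ext e
    induction e with
    | _ p q =>
      simp only [Set.mem_empty_iff_false, iff_false, SimpleGraph.mem_edgeSet]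
      exact hno p q
  refine ⟨fun _ => 1, ?_, ?_⟩
  · intro e he
    rw [hempty] at he
    exact absurd he (Set.notMem_empty e)
  · intro e he
    rw [hempty] at he
    exact absurd he (Set.notMem_empty e)

lemma induce_degree_ge_three {G : SimpleGraph V} {C : Set V} {x₀ : V} (hx₀ : x₀ ∈ C)
    {z₁ z₂ z₃ : V} (h1 : z₁ ∈ C) (h2 : z₂ ∈ C) (h3 : z₃ ∈ C)
    (a1 : G.Adj x₀ z₁) (a2 : G.Adj x₀ z₂) (a3 : G.Adj x₀ z₃)
    (d12 : z₁ ≠ z₂) (d13 : z₁ ≠ z₃) (d23 : z₂ ≠ z₃) :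
    3 ≤ (G.induce C).degree (⟨x₀, hx₀⟩ : C) := by
  classical
  rw [← SimpleGraph.card_neighborFinset_eq_degree]
  have hsub : ({⟨z₁,h1⟩, ⟨z₂,h2⟩, ⟨z₃,h3⟩} : Finset C)
      ⊆ (G.induce C).neighborFinset ⟨x₀,hx₀⟩ := by
    intro w hw
    rw [SimpleGraph.mem_neighborFinset]
    simp only [Finset.mem_insert, Finset.mem_singleton] at hw
    rcases hw with rfl | rfl | rfl
    · exact a1
    · exact a2
    · exact a3
  have hcard : ({⟨z₁,h1⟩, ⟨z₂,h2⟩, ⟨z₃,h3⟩} : Finset C).card = 3 := by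
    rw [Finset.card_insert_of_notMem, Finset.card_insert_of_notMem, Finset.card_singleton]
    · simp only [Finset.mem_singleton]
      exact fun hh => d23 (congrArg Subtype.val hh)
    · simp only [Finset.mem_insert, Finset.mem_singleton]
      rintro (hh | hh)
      · exact d12 (congrArg Subtype.val hh)
      · exact d13 (congrArg Subtype.val hh)
  calc (3 : ℕ) = ({⟨z₁,h1⟩, ⟨z₂,h2⟩, ⟨z₃,h3⟩} : Finset C).card := hcard.symm
    _ ≤ _ := Finset.card_le_card hsub

end helpers
end HZaux

-- If `G` is an HZ-graph (connected, class 2, core of maximum degree at most 2) with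
-- maximum degree `Δ ≥ 3`, then the minimum degree of `G` equals `Δ − 1`.
open Classical in
theorem stmt_6 {V : Type*} [Fintype V] (G : SimpleGraph V) (hconn : G.Connected)
    (hclass2a : EdgeColorable G (G.maxDegree + 1))
    (hclass2b : ¬ EdgeColorable G G.maxDegree)
    (hcore : ∀ v, (G.induce {v : V | G.degree v = G.maxDegree}).degree v ≤ 2)
    (hΔ : 3 ≤ G.maxDegree) :
    G.minDegree = G.maxDegree - 1 := by
  classical
  have hVne : Nonempty V := hconn.nonempty
  set k := G.maxDegree with hk
  obtain ⟨H, hHle, hH1, hHcrit⟩ := HZaux.exists_critical G k hclass2b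
  have hGdeg : ∀ v, G.degree v ≤ k := fun v => G.degree_le_maxDegree v
  have hHdeg : ∀ v, H.degree v ≤ k := fun v => le_trans (HZaux.degree_mono hHle v) (hGdeg v)
  have hGdegk : ∀ u, H.degree u = k → G.degree u = k := by
    intro u hu
    have h1 := HZaux.degree_mono hHle u
    have h2 := hGdeg u
    omega
  have hcore3 : ∀ x₀ z₁ z₂ z₃, G.degree x₀ = k → G.degree z₁ = k → G.degree z₂ = k →
      G.degree z₃ = k → G.Adj x₀ z₁ → G.Adj x₀ z₂ → G.Adj x₀ z₃ →
      z₁ ≠ z₂ → z₁ ≠ z₃ → z₂ ≠ z₃ → False := by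
    intro x₀ z₁ z₂ z₃ hx₀ h1 h2 h3 a1 a2 a3 d12 d13 d23
    have hmem : ∀ w, G.degree w = k → w ∈ {v : V | G.degree v = k} := by
      intro w hw
      exact hw
    have hge := HZaux.induce_degree_ge_three (G := G) (hmem x₀ hx₀) (hmem z₁ h1) (hmem z₂ h2)
      (hmem z₃ h3) a1 a2 a3 d12 d13 d23
    have hle := hcore ⟨x₀, hmem x₀ hx₀⟩
    have hge' : 3 ≤ (G.induce {v : V | G.degree v = k}).degree ⟨x₀, hmem x₀ hx₀⟩ := by
      convert hge using 2
    omega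
  have hstep1 : ∀ w z, H.Adj w z → k ≤ H.degree w + 1 := by
    intro w z hwz
    by_contra hbad
    push_neg at hbad
    obtain ⟨T, hTp, hTc⟩ := HZaux.VAL hH1 hHdeg hwz (hHcrit w z hwz)
    have hTpos : 0 < T.card := by have := hHdeg z; omega
    obtain ⟨x, hxT⟩ := Finset.card_pos.mp hTpos
    obtain ⟨hadjwx, -, hdegx⟩ := hTp x hxT
    obtain ⟨T', hT'p, hT'c⟩ := HZaux.VAL hH1 hHdeg hadjwx.symm (hHcrit x w hadjwx.symm)
    have hT3 : 3 ≤ T'.card := by omega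
    obtain ⟨z₁, z₂, z₃, h1T, h2T, h3T, d12, d13, d23⟩ := HZaux.three_elems hT3
    obtain ⟨a1, -, e1⟩ := hT'p z₁ h1T
    obtain ⟨a2, -, e2⟩ := hT'p z₂ h2T
    obtain ⟨a3, -, e3⟩ := hT'p z₃ h3T
    exact hcore3 x z₁ z₂ z₃ (hGdegk x hdegx) (hGdegk z₁ e1) (hGdegk z₂ e2) (hGdegk z₃ e3)
      (hHle a1) (hHle a2) (hHle a3) d12 d13 d23
  have hdegpos_adj : ∀ u, 1 ≤ H.degree u → ∃ z, H.Adj u z := by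
    intro u hu
    rw [← SimpleGraph.card_neighborFinset_eq_degree] at hu
    obtain ⟨z, hz⟩ := Finset.card_pos.mp hu
    exact ⟨z, (H.mem_neighborFinset u z).mp hz⟩
  have hcaseA : ∀ u v, G.Adj u v → ¬ H.Adj u v → 1 ≤ H.degree u → False := by
    intro u v huv hnuv hdu
    obtain ⟨z₀, hz₀⟩ := hdegpos_adj u hdu
    have hstep := hstep1 u z₀ hz₀
    have hlt := HZaux.degree_lt hHle huv hnuv
    have hGu := hGdeg u
    have hdHu : H.degree u + 1 = k := by omega
    have hdGu : G.degree u = k := by omega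
    obtain ⟨z₁, z₂, hz₁a, hz₂a, hz₁d, hz₂d, hz12⟩ :
        ∃ z₁ z₂, H.Adj u z₁ ∧ H.Adj u z₂ ∧ H.degree z₁ = k ∧ H.degree z₂ = k ∧ z₁ ≠ z₂ := by
      obtain ⟨T, hTp, hTc⟩ := HZaux.VAL hH1 hHdeg hz₀ (hHcrit u z₀ hz₀)
      by_cases hdz₀ : H.degree z₀ = k
      · have hTpos : 0 < T.card := by have := hHdeg z₀; omega
        obtain ⟨z₁, hz₁T⟩ := Finset.card_pos.mp hTpos
        obtain ⟨ha, hne, hd⟩ := hTp z₁ hz₁T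
        exact ⟨z₁, z₀, ha, hz₀, hd, hdz₀, hne⟩
      · have h2T : 2 ≤ T.card := by
          have := hHdeg z₀
          omega
        obtain ⟨z₁, z₂, h1T', h2T', h12⟩ := HZaux.two_elems h2T
        obtain ⟨ha1, -, hd1⟩ := hTp z₁ h1T'
        obtain ⟨ha2, -, hd2⟩ := hTp z₂ h2T'
        exact ⟨z₁, z₂, ha1, ha2, hd1, hd2, h12⟩
    obtain ⟨T', hT'p, hT'c⟩ := HZaux.VAL hH1 hHdeg hz₁a.symm (hHcrit z₁ u hz₁a.symm)
    have h2T' : 2 ≤ T'.card := by omega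
    obtain ⟨w₁, w₂, hw₁, hw₂, hw12⟩ := HZaux.two_elems h2T'
    obtain ⟨b1, hbu1, f1⟩ := hT'p w₁ hw₁
    obtain ⟨b2, hbu2, f2⟩ := hT'p w₂ hw₂
    exact hcore3 z₁ w₁ w₂ u (hGdegk z₁ hz₁d) (hGdegk w₁ f1) (hGdegk w₂ f2) hdGu
      (hHle b1) (hHle b2) (hHle hz₁a.symm) hw12 hbu1 hbu2
  have hHG : G ≤ H := by
    intro p q hpq
    by_contra hnpq
    by_cases hdp : 1 ≤ H.degree p
    · exact hcaseA p q hpq hnpq hdp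
    · by_cases hdq : 1 ≤ H.degree q
      · exact hcaseA q p hpq.symm (fun h => hnpq h.symm) hdq
      · have hEne : ∃ a b, H.Adj a b := by
          by_contra hno
          push_neg at hno
          exact hH1 (HZaux.edgeSet_empty_colorable k hno)
        obtain ⟨a, b, hab⟩ := hEne
        have hdega : 1 ≤ H.degree a := by
          rw [← SimpleGraph.card_neighborFinset_eq_degree]
          exact Finset.card_pos.mpr ⟨b, (H.mem_neighborFinset a b).mpr hab⟩
        obtain ⟨pw⟩ := hconn.preconnected p a
        obtain ⟨u', v', hGuv, hnHuv, hdv⟩ := HZaux.walk_findedge pw (by omega) hdega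
        exact hcaseA v' u' hGuv.symm (fun h => hnHuv h.symm) hdv
  have hHeq : H = G := le_antisymm hHle hHG
  subst hHeq
  have hGpos : ∀ v, 0 < H.degree v := by
    intro v
    obtain ⟨m, hm⟩ := H.exists_maximal_degree_vertex
    by_cases hvm : v = m
    · subst hvm
      rw [← hm]
      omega
    · obtain ⟨pw⟩ := hconn.preconnected v m
      cases pw with
      | nil => exact absurd rfl hvm
      | cons h q => exact (H.degree_pos_iff_exists_adj v).mpr ⟨_, h⟩
  have hlow : ∀ v, k ≤ H.degree v + 1 := by
    intro v
    obtain ⟨z, hz⟩ := (H.degree_pos_iff_exists_adj v).mp (hGpos v)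
    exact hstep1 v z hz
  obtain ⟨v, hv⟩ := H.exists_minimal_degree_vertex
  have hnotall : H.degree v ≠ k := by
    intro hvk'
    have hall : ∀ u, H.degree u = k := by
      intro u
      have h1 := H.minDegree_le_degree u
      have h2 := hGdeg u
      omega
    have h3 : 3 ≤ (H.neighborFinset v).card := by
      rw [SimpleGraph.card_neighborFinset_eq_degree]
      omega
    obtain ⟨z₁, z₂, z₃, m1, m2, m3, d12, d13, d23⟩ := HZaux.three_elems h3
    exact hcore3 v z₁ z₂ z₃ hvk' (hall z₁) (hall z₂) (hall z₃)
      ((H.mem_neighborFinset v z₁).mp m1) ((H.mem_neighborFinset v z₂).mp m2)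
      ((H.mem_neighborFinset v z₃).mp m3) d12 d13 d23
  have hfin : H.degree v + 1 = k := by
    have := hGdeg v
    have := hlow v
    omega
  omega
end

section
/- If G is an HZ-graph with maximum degree Δ ≥ 3, then every vertex of G has at least two neighbors of degree Δ. -/
open SimpleGraph

namespace HZaux
open scoped Classical
variable {V : Type*}

/-- `a` is a color present at `v`. -/
def Pres (H : SimpleGraph V) (c : Sym2 V → ℕ) (v : V) (a : ℕ) : Prop :=
  ∃ u, H.Adj v u ∧ c s(v, u) = a

lemma proper_iff {H : SimpleGraph V} {k : ℕ} {c : Sym2 V → ℕ} :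
    IsProperEdgeColoring H k c ↔
      ((∀ e ∈ H.edgeSet, c e ∈ Finset.Icc 1 k) ∧
        ∀ v a b, H.Adj v a → H.Adj v b → a ≠ b → c s(v, a) ≠ c s(v, b)) := by
  constructor
  · rintro ⟨hr, hp⟩
    refine ⟨hr, fun v a b ha hb hab => ?_⟩
    refine hp _ (by rwa [SimpleGraph.mem_edgeSet]) _ (by rwa [SimpleGraph.mem_edgeSet]) ?_
      ⟨v, by simp, by simp⟩
    exact fun h => hab (Sym2.congr_right.mp h)
  · rintro ⟨hr, hp⟩
    refine ⟨hr, fun e he f hf hef ⟨v, hve, hvf⟩ => ?_⟩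
    obtain ⟨a, rfl⟩ := Sym2.mem_iff_exists.1 hve
    obtain ⟨b, rfl⟩ := Sym2.mem_iff_exists.1 hvf
    exact hp v a b ((SimpleGraph.mem_edgeSet H).1 he) ((SimpleGraph.mem_edgeSet H).1 hf)
      (fun h => hef (by rw [h]))

/-- Color one uncolored edge. -/
lemma colorOne {H : SimpleGraph V} {k : ℕ} {c : Sym2 V → ℕ} {x y : V} {α : ℕ}
    (hxy : H.Adj x y)
    (hc : IsProperEdgeColoring (H.deleteEdges {s(x, y)}) k c)
    (hα : α ∈ Finset.Icc 1 k)
    (hx : ¬ Pres (H.deleteEdges {s(x, y)}) c x α)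
    (hy : ¬ Pres (H.deleteEdges {s(x, y)}) c y α) :
    IsProperEdgeColoring H k (fun e => if e = s(x, y) then α else c e) := by
  rw [proper_iff] at hc ⊢
  obtain ⟨hr, hp⟩ := hc
  set H' := H.deleteEdges {s(x, y)} with hH'
  have hH'adj : ∀ {a b : V}, H'.Adj a b ↔ H.Adj a b ∧ s(a, b) ≠ s(x, y) := by
    intro a b; rw [hH', SimpleGraph.deleteEdges_adj]; simp
  constructor
  · intro e he
    by_cases h : e = s(x, y)
    · simpa [h] using hα
    · have : e ∈ H'.edgeSet := by
        induction e with
        | h a b =>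
          rw [SimpleGraph.mem_edgeSet] at he ⊢
          exact hH'adj.2 ⟨he, h⟩
      simpa [h] using hr e this
  · intro v a b ha hb hab
    show (if s(v, a) = s(x, y) then α else c s(v, a)) ≠
      (if s(v, b) = s(x, y) then α else c s(v, b))
    by_cases h1 : s(v, a) = s(x, y) <;> by_cases h2 : s(v, b) = s(x, y)
    · exact absurd (h1.trans h2.symm) (fun h => hab (Sym2.congr_right.mp h))
    · rw [if_pos h1, if_neg h2]
      have hb' : H'.Adj v b := hH'adj.2 ⟨hb, h2⟩
      have hv : v = x ∨ v = y := by
        have : v ∈ s(x, y) := h1 ▸ Sym2.mem_mk_left v a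
        simpa using this
      intro hcb
      rcases hv with rfl | rfl
      · exact hx ⟨b, hb', hcb.symm⟩
      · exact hy ⟨b, hb', hcb.symm⟩
    · rw [if_neg h1, if_pos h2]
      have ha' : H'.Adj v a := hH'adj.2 ⟨ha, h1⟩
      have hv : v = x ∨ v = y := by
        have : v ∈ s(x, y) := h2 ▸ Sym2.mem_mk_left v b
        simpa using this
      intro hca
      rcases hv with rfl | rfl
      · exact hx ⟨a, ha', hca⟩
      · exact hy ⟨a, ha', hca⟩
    · rw [if_neg h1, if_neg h2]
      exact hp v a b (hH'adj.2 ⟨ha, h1⟩) (hH'adj.2 ⟨hb, h2⟩) hab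

end HZaux

namespace HZaux
open scoped Classical
variable {V : Type*}

/-- delete a single edge -/
def del (H : SimpleGraph V) (x y : V) : SimpleGraph V := H.deleteEdges {s(x, y)}

lemma del_adj {H : SimpleGraph V} {x y a b : V} :
    (del H x y).Adj a b ↔ H.Adj a b ∧ s(a, b) ≠ s(x, y) := by
  rw [del, SimpleGraph.deleteEdges_adj]; simp

lemma del_comm {H : SimpleGraph V} {x y : V} : del H x y = del H y x := by
  unfold del; rw [Sym2.eq_swap]

lemma del_le {H : SimpleGraph V} {x y : V} : del H x y ≤ H :=
  SimpleGraph.deleteEdges_le _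

lemma colorOne' {H : SimpleGraph V} {k : ℕ} {c : Sym2 V → ℕ} {x y : V} {α : ℕ}
    (hxy : H.Adj x y)
    (hc : IsProperEdgeColoring (del H x y) k c)
    (hα : α ∈ Finset.Icc 1 k)
    (hx : ¬ Pres (del H x y) c x α)
    (hy : ¬ Pres (del H x y) c y α) : EdgeColorable H k := by
  refine ⟨_, colorOne hxy ?_ hα hx hy⟩
  · exact hc

lemma rotate {H : SimpleGraph V} {k : ℕ} {c : Sym2 V → ℕ} {y a b : V}
    (hya : H.Adj y a) (hyb : H.Adj y b) (hab : a ≠ b)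
    (hc : IsProperEdgeColoring (del H y a) k c)
    (hg : ¬ Pres (del H y a) c a (c s(y, b))) :
    IsProperEdgeColoring (del H y b) k (fun e => if e = s(y, a) then c s(y, b) else c e) := by
  rw [proper_iff] at hc ⊢
  obtain ⟨hr, hp⟩ := hc
  have hyb' : (del H y a).Adj y b := del_adj.2 ⟨hyb, fun h => hab (Sym2.congr_right.mp h).symm⟩
  have hγr : c s(y, b) ∈ Finset.Icc 1 k := hr _ ((SimpleGraph.mem_edgeSet _).2 hyb')
  constructor
  · intro e he
    by_cases h : e = s(y, a)
    · simpa [h] using hγr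
    · have : e ∈ (del H y a).edgeSet := by
        induction e with
        | h p q =>
          rw [SimpleGraph.mem_edgeSet] at he ⊢
          exact del_adj.2 ⟨(del_adj.1 he).1, h⟩
      simpa [h] using hr e this
  · intro v p q hvp hvq hpq
    show (if s(v, p) = s(y, a) then c s(y, b) else c s(v, p)) ≠
      (if s(v, q) = s(y, a) then c s(y, b) else c s(v, q))
    -- helper: the "other" edge (not s(y,a)) at the shared vertex cannot be colored `c s(y,b)`
    have key : ∀ r : V, (del H y b).Adj v r → s(v, r) ≠ s(y, a) → (v = y ∨ v = a) →
        c s(v, r) ≠ c s(y, b) := by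
      intro r hvr hne hv hcr
      have hH : H.Adj v r := (del_adj.1 hvr).1
      have hnb : s(v, r) ≠ s(y, b) := (del_adj.1 hvr).2
      have hvr' : (del H y a).Adj v r := del_adj.2 ⟨hH, hne⟩
      rcases hv with rfl | rfl
      · exact hp v r b hvr' hyb' (fun h => hnb (by rw [h])) hcr
      · exact hg ⟨r, hvr', hcr⟩
    by_cases h1 : s(v, p) = s(y, a) <;> by_cases h2 : s(v, q) = s(y, a)
    · exact absurd (h1.trans h2.symm) (fun h => hpq (Sym2.congr_right.mp h))
    · rw [if_pos h1, if_neg h2]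
      have hv : v = y ∨ v = a := by
        have : v ∈ s(y, a) := h1 ▸ Sym2.mem_mk_left v p
        simpa using this
      exact fun h => key q hvq h2 hv h.symm
    · rw [if_neg h1, if_pos h2]
      have hv : v = y ∨ v = a := by
        have : v ∈ s(y, a) := h2 ▸ Sym2.mem_mk_left v q
        simpa using this
      exact fun h => key p hvp h1 hv h
    · rw [if_neg h1, if_neg h2]
      exact hp v p q (del_adj.2 ⟨(del_adj.1 hvp).1, h1⟩) (del_adj.2 ⟨(del_adj.1 hvq).1, h2⟩) hpq

end HZaux

namespace HZaux
open scoped Classical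
variable {V : Type*}

lemma shift {H : SimpleGraph V} {k : ℕ} {c : Sym2 V → ℕ} {x y : V}
    (hxy : H.Adj x y)
    (hc : IsProperEdgeColoring (del H x y) k c) :
    ∀ (m : ℕ) (w : ℕ → V), w 0 = x →
    (∀ l ≤ m, H.Adj y (w l)) →
    (∀ i ≤ m, ∀ j ≤ m, w i = w j → i = j) →
    (∀ l < m, ¬ Pres (del H x y) c (w l) (c s(y, w (l+1)))) →
    ∃ d, IsProperEdgeColoring (del H y (w m)) k d ∧
      (∀ a, Pres (del H y (w m)) d y a ↔ Pres (del H x y) c y a) ∧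
      (∀ a, Pres (del H y (w m)) d (w m) a → Pres (del H x y) c (w m) a) ∧
      (∀ e, (∀ l < m, e ≠ s(y, w l)) → d e = c e) := by
  intro m
  induction m with
  | zero =>
    intro w hw0 _ _ _
    have hgr : del H y (w 0) = del H x y := by rw [hw0, del_comm]
    rw [hgr]
    exact ⟨c, hc, fun a => Iff.rfl, fun a h => by rwa [hw0] at h ⊢, fun e _ => rfl⟩
  | succ m ih =>
    intro w hw0 hadj hinj hfan
    obtain ⟨d, hd, hdy, hdw, hde⟩ := ih w hw0 (fun l hl => hadj l (by omega))
      (fun i hi j hj => hinj i (by omega) j (by omega)) (fun l hl => hfan l (by omega))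
    have hwm1y : y ≠ w (m+1) := (hadj (m+1) le_rfl).ne
    have hwmy : y ≠ w m := (hadj m (by omega)).ne
    have hwne : w m ≠ w (m+1) := fun h => by
      have := hinj m (by omega) (m+1) (by omega) h; omega
    have hwm1x : w (m+1) ≠ x := fun h => by
      have := hinj (m+1) (by omega) 0 (by omega) (by rw [h, hw0]); omega
    -- colors of the edge y-(w (m+1)) agree under d and c
    have hval : d s(y, w (m+1)) = c s(y, w (m+1)) := by
      refine hde _ (fun l hl h => ?_)
      have := Sym2.congr_right.mp h
      have := hinj (m+1) (by omega) l (by omega) this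
      omega
    have hrot := rotate (hadj m (by omega)) (hadj (m+1) le_rfl) hwne hd
      (by
        rw [hval]
        intro hpres
        exact hfan m (by omega) (hdw _ hpres))
    set γ := d s(y, w (m+1)) with hγ
    refine ⟨fun e => if e = s(y, w m) then γ else d e, hrot, ?_, ?_, ?_⟩
    · -- colors present at y are unchanged
      intro a
      have step : Pres (del H y (w (m+1))) (fun e => if e = s(y, w m) then γ else d e) y a ↔
          Pres (del H y (w m)) d y a := by
        constructor
        · rintro ⟨u, hu, hcu⟩
          beta_reduce at hcu
          have huH : H.Adj y u := (del_adj.1 hu).1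
          have hune : s(y, u) ≠ s(y, w (m+1)) := (del_adj.1 hu).2
          by_cases h : s(y, u) = s(y, w m)
          · rw [if_pos h] at hcu
            refine ⟨w (m+1), del_adj.2 ⟨hadj (m+1) le_rfl, fun hh => ?_⟩, by rw [← hγ, hcu]⟩
            exact hwne (Sym2.congr_right.mp hh).symm
          · rw [if_neg h] at hcu
            exact ⟨u, del_adj.2 ⟨huH, h⟩, hcu⟩
        · rintro ⟨u, hu, hcu⟩
          have huH : H.Adj y u := (del_adj.1 hu).1
          have hune : s(y, u) ≠ s(y, w m) := (del_adj.1 hu).2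
          beta_reduce
          by_cases h : u = w (m+1)
          · subst h
            refine ⟨w m, del_adj.2 ⟨hadj m (by omega), fun hh => ?_⟩, ?_⟩
            · exact hwne (Sym2.congr_right.mp hh)
            · beta_reduce
              rw [if_pos rfl, hγ, hcu]
          · refine ⟨u, del_adj.2 ⟨huH, fun hh => h (Sym2.congr_right.mp hh)⟩, ?_⟩
            beta_reduce
            rw [if_neg hune, hcu]
      rw [step]; exact hdy a
    · -- colors present at w (m+1) only shrink w.r.t. c
      rintro a ⟨u, hu, hcu⟩
      beta_reduce at hcu
      have huH : H.Adj (w (m+1)) u := (del_adj.1 hu).1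
      have hne1 : s(w (m+1), u) ≠ s(y, w m) := by
        intro h
        rcases Sym2.eq_iff.1 h with ⟨h1, _⟩ | ⟨h1, _⟩
        · exact hwm1y h1.symm
        · exact hwne h1.symm
      rw [if_neg hne1] at hcu
      have hne2 : ∀ l < m, s(w (m+1), u) ≠ s(y, w l) := by
        intro l hl h
        rcases Sym2.eq_iff.1 h with ⟨h1, _⟩ | ⟨h1, _⟩
        · exact hwm1y h1.symm
        · have := hinj (m+1) (by omega) l (by omega) h1; omega
      rw [hde _ hne2] at hcu
      refine ⟨u, del_adj.2 ⟨huH, fun h => ?_⟩, hcu⟩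
      rcases Sym2.eq_iff.1 h with ⟨h1, _⟩ | ⟨h1, _⟩
      · exact hwm1x h1
      · exact hwm1y h1.symm
    · -- untouched edges keep their color
      intro e he
      beta_reduce
      rw [if_neg (he m (by omega)), hde _ (fun l hl => he l (by omega))]
end HZaux

namespace HZaux
open scoped Classical
variable {V : Type*}

lemma exists_mem_sym2 {P : V → Prop} {a b : V} : (∃ v ∈ s(a, b), P v) ↔ P a ∨ P b := by
  constructor
  · rintro ⟨v, hv, hP⟩
    rcases Sym2.mem_iff.1 hv with rfl | rfl
    · exact Or.inl hP
    · exact Or.inr hP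
  · rintro (h | h)
    · exact ⟨a, by simp, h⟩
    · exact ⟨b, by simp, h⟩

lemma cg_adj {H₀ : SimpleGraph V} {c : Sym2 V → ℕ} {α β : ℕ} {a b : V} :
    (chainGraph H₀ c α β).Adj a b ↔ H₀.Adj a b ∧ (c s(a, b) = α ∨ c s(a, b) = β) := by
  rw [chainGraph, SimpleGraph.fromEdgeSet_adj]
  constructor
  · rintro ⟨⟨he, hc⟩, _⟩
    exact ⟨(SimpleGraph.mem_edgeSet _).1 he, hc⟩
  · rintro ⟨ha, hc⟩
    exact ⟨⟨(SimpleGraph.mem_edgeSet _).2 ha, hc⟩, ha.ne⟩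

/-- The Kempe-swapped coloring: swap `α` and `β` on the `α/β`-component of `u₀`. -/
noncomputable def swapCol (H₀ : SimpleGraph V) (c : Sym2 V → ℕ) (α β : ℕ) (u₀ : V) :
    Sym2 V → ℕ :=
  fun e => if e ∈ H₀.edgeSet ∧ (c e = α ∨ c e = β) ∧
      (∃ v ∈ e, (chainGraph H₀ c α β).Reachable u₀ v)
    then (if c e = α then β else α) else c e

section swap
variable {H₀ : SimpleGraph V} {c : Sym2 V → ℕ} {α β : ℕ} {u₀ : V}

/-- edges at a non-reachable vertex are unchanged -/
lemma swap_eq_off {a b : V} (ha : ¬ (chainGraph H₀ c α β).Reachable u₀ a) :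
    swapCol H₀ c α β u₀ s(a, b) = c s(a, b) := by
  rw [swapCol]
  rw [if_neg]
  rintro ⟨he, hab, hv⟩
  rcases exists_mem_sym2.1 hv with h | h
  · exact ha h
  · refine ha (h.trans ?_)
    exact SimpleGraph.Adj.reachable (cg_adj.2 ⟨((SimpleGraph.mem_edgeSet _).1 he), hab⟩).symm

lemma swap_flip {a b : V} (ha : (chainGraph H₀ c α β).Reachable u₀ a) (hab : H₀.Adj a b)
    (hc : c s(a, b) = α ∨ c s(a, b) = β) :
    swapCol H₀ c α β u₀ s(a, b) = (if c s(a, b) = α then β else α) := by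
  rw [swapCol, if_pos]
  exact ⟨(SimpleGraph.mem_edgeSet _).2 hab, hc, exists_mem_sym2.2 (Or.inl ha)⟩

lemma swap_eq_of_ne {e : Sym2 V} (h : ¬ (c e = α ∨ c e = β)) :
    swapCol H₀ c α β u₀ e = c e := by
  rw [swapCol, if_neg]
  rintro ⟨_, hc, _⟩
  exact h hc

lemma swap_proper {k : ℕ} (hc : IsProperEdgeColoring H₀ k c)
    (hα : α ∈ Finset.Icc 1 k) (hβ : β ∈ Finset.Icc 1 k) (hne : α ≠ β) :
    IsProperEdgeColoring H₀ k (swapCol H₀ c α β u₀) := by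
  rw [proper_iff] at hc ⊢
  obtain ⟨hr, hp⟩ := hc
  have flipped_iff : ∀ e : Sym2 V, e ∈ H₀.edgeSet → (c e = α ∨ c e = β) →
      (∃ v ∈ e, (chainGraph H₀ c α β).Reachable u₀ v) →
      ∀ v ∈ e, (chainGraph H₀ c α β).Reachable u₀ v := by
    intro e
    induction e with
    | h a b =>
      intro he hcc hv v hvmem
      have hadj : (chainGraph H₀ c α β).Adj a b :=
        cg_adj.2 ⟨(SimpleGraph.mem_edgeSet _).1 he, hcc⟩
      rcases Sym2.mem_iff.1 hvmem with rfl | rfl <;>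
        rcases exists_mem_sym2.1 hv with h | h
      · exact h
      · exact h.trans hadj.symm.reachable
      · exact h.trans hadj.reachable
      · exact h
  constructor
  · intro e he
    rw [swapCol]
    split
    · split
      · exact hβ
      · exact hα
    · exact hr e he
  · intro v p q hvp hvq hpq
    -- case on flip-status of the two edges
    set F : Sym2 V → Prop := fun e => e ∈ H₀.edgeSet ∧ (c e = α ∨ c e = β) ∧
      (∃ w ∈ e, (chainGraph H₀ c α β).Reachable u₀ w) with hF
    have hsw : ∀ e, swapCol H₀ c α β u₀ e = if F e then (if c e = α then β else α) else c e :=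
      fun e => rfl
    rw [hsw, hsw]
    by_cases h1 : F s(v, p) <;> by_cases h2 : F s(v, q)
    · rw [if_pos h1, if_pos h2]
      intro h
      have : c s(v, p) = c s(v, q) := by
        rcases h1.2.1 with e1 | e1 <;> rcases h2.2.1 with e2 | e2 <;>
          rw [e1, e2] at h ⊢ <;> simp_all
      exact hp v p q hvp hvq hpq this
    · rw [if_pos h1, if_neg h2]
      -- s(v,q) would also be flipped: v is reachable
      intro h
      apply h2
      refine ⟨(SimpleGraph.mem_edgeSet _).2 hvq, ?_, ?_⟩
      · rcases h1.2.1 with e1 | e1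
        · rw [e1, if_pos rfl] at h
          exact Or.inr h.symm
        · rw [e1, if_neg (fun hh => hne hh.symm)] at h
          exact Or.inl h.symm
      · have hv : (chainGraph H₀ c α β).Reachable u₀ v :=
          flipped_iff _ h1.1 h1.2.1 h1.2.2 v (Sym2.mem_mk_left v p)
        exact exists_mem_sym2.2 (Or.inl hv)
    · rw [if_neg h1, if_pos h2]
      intro h
      apply h1
      refine ⟨(SimpleGraph.mem_edgeSet _).2 hvp, ?_, ?_⟩
      · rcases h2.2.1 with e2 | e2
        · rw [e2, if_pos rfl] at h
          exact Or.inr h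
        · rw [e2, if_neg (fun hh => hne hh.symm)] at h
          exact Or.inl h
      · have hv : (chainGraph H₀ c α β).Reachable u₀ v :=
          flipped_iff _ h2.1 h2.2.1 h2.2.2 v (Sym2.mem_mk_left v q)
        exact exists_mem_sym2.2 (Or.inl hv)
    · rw [if_neg h1, if_neg h2]
      exact hp v p q hvp hvq hpq
end swap
end HZaux

namespace HZaux
open scoped Classical
variable {V : Type*} {H₀ : SimpleGraph V} {c : Sym2 V → ℕ} {α β : ℕ} {u₀ : V}

lemma swap_pres_off {a : V} (ha : ¬ (chainGraph H₀ c α β).Reachable u₀ a) (γ : ℕ) :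
    Pres H₀ (swapCol H₀ c α β u₀) a γ ↔ Pres H₀ c a γ := by
  constructor
  · rintro ⟨u, hu, hval⟩
    exact ⟨u, hu, by rwa [swap_eq_off ha] at hval⟩
  · rintro ⟨u, hu, hval⟩
    exact ⟨u, hu, by rwa [swap_eq_off ha]⟩

lemma swap_pres_beta {a : V} (hne : α ≠ β) (ha : (chainGraph H₀ c α β).Reachable u₀ a) :
    Pres H₀ (swapCol H₀ c α β u₀) a β ↔ Pres H₀ c a α := by
  constructor
  · rintro ⟨u, hu, hval⟩
    by_cases h : c s(a, u) = α ∨ c s(a, u) = β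
    · rw [swap_flip ha hu h] at hval
      refine ⟨u, hu, ?_⟩
      by_cases h2 : c s(a, u) = α
      · exact h2
      · rw [if_neg h2] at hval; exact absurd hval hne
    · rw [swap_eq_of_ne h] at hval
      exact absurd (Or.inr hval) h
  · rintro ⟨u, hu, hval⟩
    refine ⟨u, hu, ?_⟩
    rw [swap_flip ha hu (Or.inl hval), if_pos hval]

lemma swap_pres_other {a : V} (γ : ℕ) (hγα : γ ≠ α) (hγβ : γ ≠ β) :
    Pres H₀ (swapCol H₀ c α β u₀) a γ ↔ Pres H₀ c a γ := by
  constructor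
  · rintro ⟨u, hu, hval⟩
    refine ⟨u, hu, ?_⟩
    rw [swapCol] at hval
    split at hval
    · rename_i hcond
      split at hval
      · exact absurd hval.symm hγβ
      · exact absurd hval.symm hγα
    · exact hval
  · rintro ⟨u, hu, hval⟩
    refine ⟨u, hu, ?_⟩
    rw [swap_eq_of_ne (by rw [hval]; rintro (h | h) <;> [exact hγα h; exact hγβ h])]
    exact hval
end HZaux

namespace HZaux
open scoped Classical
variable {V : Type*}

lemma interior_two_nbrs {C : SimpleGraph V} {a b v : V} (p : C.Walk a b)
    (hp : p.IsPath) (hv : v ∈ p.support) (hva : v ≠ a) (hvb : v ≠ b) :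
    ∃ u₁ u₂, u₁ ≠ u₂ ∧ C.Adj v u₁ ∧ C.Adj v u₂ ∧ u₁ ∈ p.support ∧ u₂ ∈ p.support := by
  classical
  set q₁ := p.takeUntil v hv with hq₁
  set q₂ := p.dropUntil v hv with hq₂
  have hsupp : p.support = q₁.support ++ q₂.support.tail := by
    rw [hq₁, hq₂, ← SimpleGraph.Walk.support_append, SimpleGraph.Walk.take_spec]
  have hnd : (q₁.support ++ q₂.support.tail).Nodup := by
    rw [← hsupp]; exact hp.support_nodup
  have hdisj := List.disjoint_of_nodup_append hnd
  obtain ⟨u₁, hadj1, hu1⟩ : ∃ u₁, C.Adj v u₁ ∧ u₁ ∈ q₁.support := by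
    have hnn : ¬ q₁.reverse.Nil := fun h => hva (SimpleGraph.Walk.Nil.eq h)
    obtain ⟨u, hadj, q, hq⟩ := SimpleGraph.Walk.not_nil_iff.1 hnn
    refine ⟨u, hadj, ?_⟩
    have : u ∈ q₁.reverse.support := by
      rw [hq, SimpleGraph.Walk.support_cons]
      exact List.mem_cons_of_mem _ q.start_mem_support
    rwa [SimpleGraph.Walk.support_reverse, List.mem_reverse] at this
  obtain ⟨u₂, hadj2, hu2⟩ : ∃ u₂, C.Adj v u₂ ∧ u₂ ∈ q₂.support.tail := by
    have hnn : ¬ q₂.Nil := fun h => hvb (SimpleGraph.Walk.Nil.eq h)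
    obtain ⟨u, hadj, q, hq⟩ := SimpleGraph.Walk.not_nil_iff.1 hnn
    refine ⟨u, hadj, ?_⟩
    rw [hq, SimpleGraph.Walk.support_cons]
    exact q.start_mem_support
  refine ⟨u₁, u₂, fun h => hdisj hu1 (h ▸ hu2), hadj1, hadj2,
    SimpleGraph.Walk.support_takeUntil_subset p hv hu1, ?_⟩
  have : u₂ ∈ q₂.support := List.mem_of_mem_tail hu2
  exact SimpleGraph.Walk.support_dropUntil_subset p hv this

/-- In a graph with maximum degree ≤ 2 there cannot be three distinct pairwise-reachable
vertices of degree ≤ 1. -/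
lemma three_leaves {C : SimpleGraph V}
    (hmax : ∀ v w₁ w₂ w₃, C.Adj v w₁ → C.Adj v w₂ → C.Adj v w₃ →
      w₁ = w₂ ∨ w₁ = w₃ ∨ w₂ = w₃)
    {a b d : V} (hab : a ≠ b) (had : a ≠ d) (hbd : b ≠ d)
    (la : ∀ w₁ w₂, C.Adj a w₁ → C.Adj a w₂ → w₁ = w₂)
    (lb : ∀ w₁ w₂, C.Adj b w₁ → C.Adj b w₂ → w₁ = w₂)
    (ld : ∀ w₁ w₂, C.Adj d w₁ → C.Adj d w₂ → w₁ = w₂)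
    (hrab : C.Reachable a b) (hrad : C.Reachable a d) : False := by
  classical
  obtain ⟨w⟩ := hrab
  set p := w.bypass with hpdef
  have hp : p.IsPath := w.bypass_isPath
  -- the support of p is closed under adjacency
  have hclosed : ∀ v ∈ p.support, ∀ u, C.Adj v u → u ∈ p.support := by
    intro v hv u hadj
    by_cases hva : v = a
    · subst hva
      have hnn : ¬ p.Nil := fun h => hab (SimpleGraph.Walk.Nil.eq h)
      obtain ⟨u', hadj', q, hq⟩ := SimpleGraph.Walk.not_nil_iff.1 hnn
      have : u = u' := la u u' hadj hadj'
      subst this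
      rw [hq, SimpleGraph.Walk.support_cons]
      exact List.mem_cons_of_mem _ q.start_mem_support
    · by_cases hvb : v = b
      · subst hvb
        have hnn : ¬ p.reverse.Nil := fun h => hab (SimpleGraph.Walk.Nil.eq h).symm
        obtain ⟨u', hadj', q, hq⟩ := SimpleGraph.Walk.not_nil_iff.1 hnn
        have : u = u' := lb u u' hadj hadj'
        subst this
        have : u ∈ p.reverse.support := by
          rw [hq, SimpleGraph.Walk.support_cons]
          exact List.mem_cons_of_mem _ q.start_mem_support
        rwa [SimpleGraph.Walk.support_reverse, List.mem_reverse] at this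
      · obtain ⟨u₁, u₂, h12, ha1, ha2, hm1, hm2⟩ := interior_two_nbrs p hp hv hva hvb
        rcases hmax v u u₁ u₂ hadj ha1 ha2 with rfl | rfl | h
        · exact hm1
        · exact hm2
        · exact absurd h h12
  -- every vertex reachable from a is on p
  have hreach : ∀ {t : V}, C.Reachable a t → t ∈ p.support := by
    intro t hr
    obtain ⟨w'⟩ := hr
    have : ∀ {s t : V} (w'' : C.Walk s t), s ∈ p.support → t ∈ p.support := by
      intro s t w''
      induction w'' with
      | nil => exact id
      | cons h q ih => exact fun hs => ih (hclosed _ hs _ h)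
    exact this w' p.start_mem_support
  have hd : d ∈ p.support := hreach hrad
  obtain ⟨u₁, u₂, h12, ha1, ha2, _, _⟩ :=
    interior_two_nbrs p hp hd (Ne.symm had) (Ne.symm hbd)
  exact h12 (ld u₁ u₂ ha1 ha2)

end HZaux

namespace HZaux
open scoped Classical
variable {V : Type*}

/-- `a` is a color of `[1,k]` missing at `v`. -/
def Mis (k : ℕ) (H₀ : SimpleGraph V) (c : Sym2 V → ℕ) (v : V) (a : ℕ) : Prop :=
  a ∈ Finset.Icc 1 k ∧ ¬ Pres H₀ c v a

/-- A multifan at `y` starting with `x = z 0`, with respect to a proper coloring `c`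
of `H − xy`. -/
def IsFan (H : SimpleGraph V) (k : ℕ) (c : Sym2 V → ℕ) (x y : V) (p : ℕ) (z : ℕ → V) : Prop :=
  z 0 = x ∧ (∀ i ≤ p, H.Adj y (z i)) ∧ (∀ i ≤ p, ∀ j ≤ p, z i = z j → i = j) ∧
    (∀ l, 1 ≤ l → l ≤ p → ∃ m < l, Mis k (del H x y) c (z m) (c s(y, z l)))

section degsec
variable [Fintype V]

lemma exists_missing {H₀ : SimpleGraph V} {k : ℕ} {c : Sym2 V → ℕ} {v : V}
    (hc : IsProperEdgeColoring H₀ k c) (hd : H₀.degree v < k) :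
    ∃ a, Mis k H₀ c v a := by
  classical
  have hsub : (Finset.Icc 1 k).filter (fun a => Pres H₀ c v a) ⊆
      (H₀.neighborFinset v).image (fun w => c s(v, w)) := by
    intro a ha
    obtain ⟨u, hu, hval⟩ := (Finset.mem_filter.1 ha).2
    exact Finset.mem_image.2 ⟨u, by simpa using hu, hval⟩
  have h1 : ((Finset.Icc 1 k).filter (fun a => Pres H₀ c v a)).card < k := by
    calc ((Finset.Icc 1 k).filter (fun a => Pres H₀ c v a)).card
        ≤ ((H₀.neighborFinset v).image (fun w => c s(v, w))).card := Finset.card_le_card hsub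
      _ ≤ (H₀.neighborFinset v).card := Finset.card_image_le
      _ = H₀.degree v := rfl
      _ < k := hd
  have h2 := Finset.card_filter_add_card_filter_not
    (s := Finset.Icc 1 k) (fun a => Pres H₀ c v a)
  rw [Nat.card_Icc] at h2
  have h3 : 0 < ((Finset.Icc 1 k).filter (fun a => ¬ Pres H₀ c v a)).card := by omega
  obtain ⟨a, ha⟩ := Finset.card_pos.1 h3
  exact ⟨a, (Finset.mem_filter.1 ha).1, (Finset.mem_filter.1 ha).2⟩

lemma nbr_del_y {H : SimpleGraph V} {x y : V} (hxy : H.Adj x y) :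
    (del H x y).neighborFinset y = (H.neighborFinset y).erase x := by
  ext u
  simp only [SimpleGraph.mem_neighborFinset, Finset.mem_erase, del_adj]
  constructor
  · rintro ⟨h, hne⟩
    refine ⟨fun h2 => hne ?_, h⟩
    rw [h2, Sym2.eq_swap]
  · rintro ⟨hne, h⟩
    refine ⟨h, fun h2 => hne ?_⟩
    rcases Sym2.eq_iff.1 h2 with ⟨h3, _⟩ | ⟨_, h3⟩
    · exact absurd h3 hxy.ne'
    · exact h3
lemma deg_del_y {H : SimpleGraph V} {x y : V} (hxy : H.Adj x y) :
    (del H x y).degree y = H.degree y - 1 := by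
  rw [SimpleGraph.degree, nbr_del_y hxy, Finset.card_erase_of_mem (by simpa using hxy.symm)]
  rfl

lemma deg_del_other_s7 {H : SimpleGraph V} {x y v : V} (hvx : v ≠ x) (hvy : v ≠ y) :
    (del H x y).degree v = H.degree v := by
  have : (del H x y).neighborFinset v = H.neighborFinset v := by
    ext u
    simp only [SimpleGraph.mem_neighborFinset, del_adj]
    constructor
    · exact fun h => h.1
    · intro h
      refine ⟨h, fun h2 => ?_⟩
      rcases Sym2.eq_iff.1 h2 with ⟨h3, _⟩ | ⟨h3, _⟩
      · exact hvx h3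
      · exact hvy h3
  rw [SimpleGraph.degree, this]; rfl
end degsec

section fan
variable {H : SimpleGraph V} {k : ℕ} {c : Sym2 V → ℕ} {x y : V}

lemma fan_chain (hc : IsProperEdgeColoring (del H x y) k c)
    {p : ℕ} {z : ℕ → V} (hfan : IsFan H k c x y p z) :
    ∀ i ≤ p, ∃ m : ℕ, ∃ w : ℕ → V, w 0 = x ∧ w m = z i ∧ (∀ l ≤ m, H.Adj y (w l)) ∧
      (∀ l ≤ m, ∀ l' ≤ m, w l = w l' → l = l') ∧
      (∀ l < m, ¬ Pres (del H x y) c (w l) (c s(y, w (l+1)))) ∧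
      (∀ l ≤ m, ∃ j, j ≤ i ∧ w l = z j) := by
  obtain ⟨hz0, hadj, hinj, hcond⟩ := hfan
  intro i
  induction i using Nat.strong_induction_on with
  | _ i ih =>
    intro hip
    rcases Nat.eq_zero_or_pos i with rfl | hi
    · exact ⟨0, fun _ => x, rfl, by rw [hz0], fun l hl => by
        simpa [Nat.le_zero.1 hl, hz0] using hadj 0 (by omega),
        fun l hl l' hl' _ => by omega, fun l hl => by omega, fun l hl => ⟨0, by omega, by
          simp [Nat.le_zero.1 hl, hz0]⟩⟩
    · obtain ⟨m', hm', hmis⟩ := hcond i hi hip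
      obtain ⟨m, w, hw0, hwm, hwadj, hwinj, hwfan, hwrange⟩ := ih m' hm' (by omega)
      refine ⟨m + 1, fun n => if n = m + 1 then z i else w n, by simp [hw0], by simp, ?_, ?_, ?_, ?_⟩
      · intro l hl
        by_cases h : l = m + 1
        · simpa [h] using hadj i hip
        · simpa [h] using hwadj l (by omega)
      · intro l hl l' hl' heq
        beta_reduce at heq
        by_cases h : l = m + 1 <;> by_cases h' : l' = m + 1
        · omega
        · exfalso
          rw [if_pos h, if_neg h'] at heq
          obtain ⟨j, hj, hwj⟩ := hwrange l' (by omega)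
          rw [hwj] at heq
          have := hinj i hip j (by omega) heq
          omega
        · exfalso
          rw [if_neg h, if_pos h'] at heq
          obtain ⟨j, hj, hwj⟩ := hwrange l (by omega)
          rw [hwj] at heq
          have := hinj j (by omega) i hip heq
          omega
        · rw [if_neg h, if_neg h'] at heq
          exact hwinj l (by omega) l' (by omega) heq
      · intro l hl
        beta_reduce
        by_cases h : l = m
        · subst h
          rw [if_neg (by omega : ¬ l = l + 1), if_pos rfl, hwm]
          exact hmis.2
        · have h1 : ¬ (l = m + 1) := by omega
          have h2 : ¬ (l + 1 = m + 1) := by omega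
          rw [if_neg h1, if_neg h2]
          exact hwfan l (by omega)
      · intro l hl
        by_cases h : l = m + 1
        · exact ⟨i, le_rfl, by beta_reduce; rw [if_pos h]⟩
        · obtain ⟨j, hj, hwj⟩ := hwrange l (by omega)
          exact ⟨j, by omega, by beta_reduce; rw [if_neg h]; exact hwj⟩

lemma fan_claimA (hxy : H.Adj x y) (hc : IsProperEdgeColoring (del H x y) k c)
    {p : ℕ} {z : ℕ → V} (hfan : IsFan H k c x y p z) {i : ℕ} (hip : i ≤ p)
    {α : ℕ} (hα : Mis k (del H x y) c (z i) α) (hαy : ¬ Pres (del H x y) c y α) :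
    EdgeColorable H k := by
  obtain ⟨m, w, hw0, hwm, hwadj, hwinj, hwfan, _⟩ := fan_chain hc hfan i hip
  obtain ⟨d, hd, hdy, hdw, _⟩ := shift hxy hc m w hw0 hwadj hwinj hwfan
  rw [hwm] at hd hdw
  refine colorOne' (hwm ▸ hwadj m le_rfl) hd hα.1 ?_ ?_
  · intro hpres
    exact hαy ((hdy α).1 (by rwa [hwm]))
  · intro hpres
    exact hα.2 (hdw α hpres)

end fan
end HZaux

namespace HZaux
open scoped Classical
variable {V : Type*}

lemma fan_prefix {H : SimpleGraph V} {k : ℕ} {c : Sym2 V → ℕ} {x y : V} {p q : ℕ} {z : ℕ → V}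
    (hfan : IsFan H k c x y p z) (hq : q ≤ p) : IsFan H k c x y q z := by
  obtain ⟨h0, h1, h2, h3⟩ := hfan
  exact ⟨h0, fun i hi => h1 i (le_trans hi hq),
    fun i hi j hj => h2 i (le_trans hi hq) j (le_trans hj hq),
    fun l hl1 hl2 => h3 l hl1 (le_trans hl2 hq)⟩

lemma fan_elem [Fintype V] {H : SimpleGraph V} {k : ℕ} {c : Sym2 V → ℕ} {x y : V}
    (hxy : H.Adj x y) (hc : IsProperEdgeColoring (del H x y) k c)
    (hdegy : H.degree y ≤ k) :
    ∀ (j : ℕ), ∀ (z : ℕ → V), IsFan H k c x y j z → ∀ t, t < j → ∀ α,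
      Mis k (del H x y) c (z t) α → Mis k (del H x y) c (z j) α → EdgeColorable H k := by
  intro j
  induction j using Nat.strong_induction_on with
  | _ j ih =>
  intro z hfan t htj α hα hαj
  by_contra hnc
  set H' := del H x y with hH'
  obtain ⟨hz0, hadj, hinj, hcond⟩ := hfan
  -- Claim A consequences: no color missing at a fan vertex is missing at y
  have hA : ∀ i, i ≤ j → ∀ a, Mis k H' c (z i) a → Pres H' c y a := by
    intro i hi a hmis
    by_contra hnp
    exact hnc (fan_claimA hxy hc ⟨hz0, hadj, hinj, hcond⟩ hi hmis hnp)
  -- uniqueness of indices where α is missing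
  have uniq : ∀ i, i ≤ j → Mis k H' c (z i) α → i = t ∨ i = j := by
    intro i hi hmis
    by_contra hcon
    push_neg at hcon
    obtain ⟨hit, hij⟩ := hcon
    have hilt : i < j := lt_of_le_of_ne hi hij
    rcases Nat.lt_or_ge i t with h | h
    · exact hnc (ih t htj z (fan_prefix ⟨hz0, hadj, hinj, hcond⟩ (le_of_lt htj)) i h α hmis hα)
    · have : t < i := lt_of_le_of_ne h (Ne.symm hit)
      exact hnc (ih i hilt z (fan_prefix ⟨hz0, hadj, hinj, hcond⟩ (le_of_lt hilt)) t this α hα hmis)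
  -- a color missing at y
  have hdy1 : 1 ≤ H.degree y := by
    rw [← SimpleGraph.card_neighborFinset_eq_degree]
    exact Finset.card_pos.2 ⟨x, by simpa using hxy.symm⟩
  have hdy : H'.degree y < k := by
    rw [hH', deg_del_y hxy]
    omega
  obtain ⟨β, hβ⟩ := exists_missing hc hdy
  have hαβ : α ≠ β := by
    rintro rfl
    exact hβ.2 (hA t (le_of_lt htj) α hα)
  set CG := chainGraph H' c α β with hCG
  -- max degree ≤ 2 for the chain graph
  have hprop := proper_iff.1 hc
  have hsame : ∀ v w₁ w₂, H'.Adj v w₁ → H'.Adj v w₂ → c s(v, w₁) = c s(v, w₂) → w₁ = w₂ := by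
    intro v w₁ w₂ h1 h2 heq
    by_contra hne
    exact hprop.2 v w₁ w₂ h1 h2 hne heq
  have hmax : ∀ v w₁ w₂ w₃, CG.Adj v w₁ → CG.Adj v w₂ → CG.Adj v w₃ →
      w₁ = w₂ ∨ w₁ = w₃ ∨ w₂ = w₃ := by
    intro v w₁ w₂ w₃ h1 h2 h3
    obtain ⟨h1a, h1c⟩ := cg_adj.1 h1
    obtain ⟨h2a, h2c⟩ := cg_adj.1 h2
    obtain ⟨h3a, h3c⟩ := cg_adj.1 h3
    rcases h1c with e1 | e1 <;> rcases h2c with e2 | e2 <;> rcases h3c with e3 | e3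
    · exact Or.inl (hsame v w₁ w₂ h1a h2a (e1.trans e2.symm))
    · exact Or.inl (hsame v w₁ w₂ h1a h2a (e1.trans e2.symm))
    · exact Or.inr (Or.inl (hsame v w₁ w₃ h1a h3a (e1.trans e3.symm)))
    · exact Or.inr (Or.inr (hsame v w₂ w₃ h2a h3a (e2.trans e3.symm)))
    · exact Or.inr (Or.inr (hsame v w₂ w₃ h2a h3a (e2.trans e3.symm)))
    · exact Or.inr (Or.inl (hsame v w₁ w₃ h1a h3a (e1.trans e3.symm)))
    · exact Or.inl (hsame v w₁ w₂ h1a h2a (e1.trans e2.symm))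
    · exact Or.inl (hsame v w₁ w₂ h1a h2a (e1.trans e2.symm))
  -- leaf property for vertices missing α resp. β
  have hleafα : ∀ v, ¬ Pres H' c v α → ∀ w₁ w₂, CG.Adj v w₁ → CG.Adj v w₂ → w₁ = w₂ := by
    intro v hv w₁ w₂ h1 h2
    obtain ⟨h1a, h1c⟩ := cg_adj.1 h1
    obtain ⟨h2a, h2c⟩ := cg_adj.1 h2
    rcases h1c with e1 | e1
    · exact absurd ⟨w₁, h1a, e1⟩ hv
    · rcases h2c with e2 | e2
      · exact absurd ⟨w₂, h2a, e2⟩ hv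
      · exact hsame v w₁ w₂ h1a h2a (e1.trans e2.symm)
  have hleafy : ∀ w₁ w₂, CG.Adj y w₁ → CG.Adj y w₂ → w₁ = w₂ := by
    intro w₁ w₂ h1 h2
    obtain ⟨h1a, h1c⟩ := cg_adj.1 h1
    obtain ⟨h2a, h2c⟩ := cg_adj.1 h2
    rcases h1c with e1 | e1
    · rcases h2c with e2 | e2
      · exact hsame y w₁ w₂ h1a h2a (e1.trans e2.symm)
      · exact absurd ⟨w₂, h2a, e2⟩ hβ.2
    · exact absurd ⟨w₁, h1a, e1⟩ hβ.2
  -- distinctness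
  have hyzt : y ≠ z t := (hadj t (le_of_lt htj)).ne
  have hyzj : y ≠ z j := (hadj j le_rfl).ne
  have hztzj : z t ≠ z j := fun h => by
    have := hinj t (le_of_lt htj) j le_rfl h; omega
  -- the main construction: swap the chain at z h and recolor
  have main : ∀ h, h ≤ j → ¬ Pres H' c (z h) α →
      ¬ CG.Reachable (z h) y →
      (∀ m, m < h → Mis k H' c (z m) α → ¬ CG.Reachable (z h) (z m)) → False := by
    intro h hhj hhα hhy hhm
    set c' := swapCol H' c α β (z h) with hc'
    have hc'p : IsProperEdgeColoring H' k c' := swap_proper hc hα.1 hβ.1 hαβ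
    have hyoff : ∀ a, Pres H' c' y a ↔ Pres H' c y a := swap_pres_off hhy
    have hβh : Mis k H' c' (z h) β := by
      refine ⟨hβ.1, ?_⟩
      rw [swap_pres_beta hαβ (SimpleGraph.Reachable.refl _)]
      exact hhα
    -- the prefix of length h is a fan for c'
    have hfan' : IsFan H k c' x y h z := by
      refine ⟨hz0, fun i hi => hadj i (le_trans hi hhj),
        fun i hi j' hj' => hinj i (le_trans hi hhj) j' (le_trans hj' hhj), ?_⟩
      intro l hl1 hl2
      obtain ⟨m, hml, hmis⟩ := hcond l hl1 (le_trans hl2 hhj)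
      have hzlx : z l ≠ x := by
        intro he
        have := hinj l (le_trans hl2 hhj) 0 (by omega) (by rw [he, hz0])
        omega
      have hedge : H'.Adj y (z l) := by
        rw [hH', del_adj]
        refine ⟨hadj l (le_trans hl2 hhj), fun he => ?_⟩
        rcases Sym2.eq_iff.1 he with ⟨h1, _⟩ | ⟨_, h2⟩
        · exact hxy.ne' h1
        · exact hzlx h2
      have hval : c' s(y, z l) = c s(y, z l) := swap_eq_off hhy
      rw [hval]
      refine ⟨m, hml, hmis.1, ?_⟩
      set γ := c s(y, z l) with hγ
      by_cases hmK : CG.Reachable (z h) (z m)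
      · -- z m is on the swapped component
        by_cases hγα : γ = α
        · exact absurd hmK (hhm m (by omega) (hγα ▸ hmis))
        · by_cases hγβ : γ = β
          · exact absurd ⟨z l, hedge, (hγβ ▸ rfl : c s(y, z l) = β)⟩ hβ.2
          · rw [swap_pres_other γ hγα hγβ]
            exact hmis.2
      · rw [swap_pres_off hmK]
        exact hmis.2
    exact hnc (fan_claimA hxy hc'p hfan' le_rfl hβh (fun hp => hβ.2 ((hyoff β).1 hp)))
  -- now choose h according to reachability
  by_cases hR : CG.Reachable y (z t)
  · -- then z j is not reachable from y, use h := j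
    have hnr : ¬ CG.Reachable y (z j) := by
      intro hR2
      exact three_leaves hmax hyzt hyzj hztzj hleafy (hleafα (z t) hα.2) (hleafα (z j) hαj.2)
        hR hR2
    refine main j le_rfl hαj.2 (fun hr => hnr hr.symm) ?_
    intro m hm hmis hr
    rcases uniq m (by omega) hmis with rfl | rfl
    · exact hnr (hR.trans hr.symm)
    · omega
  · refine main t (le_of_lt htj) hα.2 (fun hr => hR hr.symm) ?_
    intro m hm hmis hr
    rcases uniq m (by omega) hmis with rfl | rfl
    · omega
    · omega

end HZaux

namespace HZaux
open scoped Classical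
variable {V : Type*} [Fintype V]

lemma VAL_s7 {H : SimpleGraph V} {k : ℕ} {x y : V}
    (hxy : H.Adj x y) (hcol : EdgeColorable (del H x y) k)
    (hnc : ¬ EdgeColorable H k) (hdeg : ∀ v, H.degree v ≤ k) :
    k + 1 ≤ H.degree x +
      (Finset.univ.filter fun u => H.Adj y u ∧ u ≠ x ∧ H.degree u = k).card := by
  classical
  obtain ⟨c, hc⟩ := hcol
  set H' := del H x y with hH'
  -- maximal fan
  set P : ℕ → Prop := fun p => ∃ z, IsFan H k c x y p z with hP
  have hP0 : P 0 := by
    refine ⟨fun _ => x, rfl, fun i hi => ?_, fun i hi j hj _ => by omega, fun l hl1 hl2 => by omega⟩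
    exact hxy.symm
  have hbound : ∀ p, P p → p ≤ Fintype.card V := by
    rintro p ⟨z, hz0, hadj, hinj, _⟩
    have : Function.Injective (fun i : Fin (p+1) => z i) := by
      intro i j hij
      exact Fin.ext (hinj i (by omega) j (by omega) hij)
    have h2 := Fintype.card_le_of_injective _ this
    simp only [Fintype.card_fin] at h2
    omega
  set p₀ := Nat.findGreatest P (Fintype.card V) with hp₀def
  have hp₀ : P p₀ := Nat.findGreatest_spec (Nat.zero_le _) hP0
  have hmax : ∀ q, P q → q ≤ p₀ := fun q hq => Nat.le_findGreatest (hbound q hq) hq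
  obtain ⟨z, hfan⟩ := hp₀
  obtain ⟨hz0, hadj, hinj, hcond⟩ := hfan
  have hprop := proper_iff.1 hc
  -- basic facts about fan vertices
  have hzx : ∀ l, 1 ≤ l → l ≤ p₀ → z l ≠ x := by
    intro l h1 h2 he
    have := hinj l h2 0 (by omega) (by rw [he, hz0])
    omega
  have hedge : ∀ l, 1 ≤ l → l ≤ p₀ → H'.Adj y (z l) := by
    intro l h1 h2
    rw [hH', del_adj]
    refine ⟨hadj l h2, fun he => ?_⟩
    rcases Sym2.eq_iff.1 he with ⟨ha, _⟩ | ⟨_, hb⟩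
    · exact hxy.ne' ha
    · exact hzx l h1 h2 hb
  -- claim A
  have hAy : ∀ i, i ≤ p₀ → ∀ a, Mis k H' c (z i) a → Pres H' c y a := by
    intro i hi a hmis
    by_contra hnp
    exact hnc (fan_claimA hxy hc ⟨hz0, hadj, hinj, hcond⟩ hi hmis hnp)
  -- claim B (elementarity)
  have hdisj : ∀ i, i ≤ p₀ → ∀ j, j ≤ p₀ → i ≠ j → ∀ a,
      Mis k H' c (z i) a → Mis k H' c (z j) a → False := by
    intro i hi j hj hij a hmi hmj
    rcases Nat.lt_or_ge i j with h | h
    · exact hnc (fan_elem hxy hc (hdeg y) j z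
        (fan_prefix ⟨hz0, hadj, hinj, hcond⟩ hj) i h a hmi hmj)
    · have h' : j < i := lt_of_le_of_ne h (Ne.symm hij)
      exact hnc (fan_elem hxy hc (hdeg y) i z
        (fan_prefix ⟨hz0, hadj, hinj, hcond⟩ hi) j h' a hmj hmi)
  -- claim C (maximality): every color missing at a fan vertex is a fan color
  have hC : ∀ i, i ≤ p₀ → ∀ a, Mis k H' c (z i) a →
      ∃ l, 1 ≤ l ∧ l ≤ p₀ ∧ c s(y, z l) = a := by
    intro i hi a hmis
    obtain ⟨w, hw, hval⟩ := hAy i hi a hmis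
    have hwx : w ≠ x := by
      intro he
      apply (del_adj.1 (hH' ▸ hw)).2
      rw [he, Sym2.eq_swap]
    have hwz : ∃ l, l ≤ p₀ ∧ z l = w := by
      by_contra hno
      push_neg at hno
      have hPext : P (p₀ + 1) := by
        refine ⟨fun n => if n = p₀ + 1 then w else z n, by simp [hz0], ?_, ?_, ?_⟩
        · intro i' hi'
          by_cases h : i' = p₀ + 1
          · have : H.Adj y w := (del_adj.1 (hH' ▸ hw)).1
            simpa [h] using this
          · simpa [h] using hadj i' (by omega)
        · intro i' hi' j' hj' he
          beta_reduce at he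
          by_cases h : i' = p₀ + 1 <;> by_cases h' : j' = p₀ + 1
          · omega
          · rw [if_pos h, if_neg h'] at he
            exact absurd he.symm (hno j' (by omega))
          · rw [if_neg h, if_pos h'] at he
            exact absurd he (hno i' (by omega))
          · rw [if_neg h, if_neg h'] at he
            exact hinj i' (by omega) j' (by omega) he
        · intro l hl1 hl2
          by_cases h : l = p₀ + 1
          · refine ⟨i, by omega, ?_⟩
            beta_reduce
            rw [if_pos h, if_neg (by omega : ¬ i = p₀ + 1)]
            rwa [hval]
          · obtain ⟨m, hm, hmis'⟩ := hcond l hl1 (by omega)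
            refine ⟨m, hm, ?_⟩
            beta_reduce
            rw [if_neg h, if_neg (by omega : ¬ m = p₀ + 1)]
            exact hmis'
      have := hmax _ hPext
      omega
    obtain ⟨l, hl, hzl⟩ := hwz
    have hl1 : 1 ≤ l := by
      rcases Nat.eq_zero_or_pos l with rfl | h
      · exact absurd (hz0 ▸ hzl : x = w) (Ne.symm hwx)
      · exact h
    exact ⟨l, hl1, hl, by rw [hzl]; exact hval⟩
  -- counting
  set T : Finset ℕ := (Finset.Icc 1 p₀).image (fun l => c s(y, z l)) with hT
  have hinjOn : Set.InjOn (fun l => c s(y, z l)) (Finset.Icc 1 p₀) := by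
    intro l hl l' hl' he
    simp only [Finset.coe_Icc, Set.mem_Icc] at hl hl'
    have : z l = z l' := by
      by_contra hne
      exact hprop.2 y (z l) (z l') (hedge l hl.1 hl.2) (hedge l' hl'.1 hl'.2) hne he
    exact hinj l hl.2 l' hl'.2 this
  have hTcard : T.card = p₀ := by
    rw [hT, Finset.card_image_of_injOn hinjOn, Nat.card_Icc]
    omega
  set M : ℕ → Finset ℕ := fun i => (Finset.Icc 1 k).filter (fun a => ¬ Pres H' c (z i) a)
    with hM
  have hMis : ∀ i a, a ∈ M i ↔ Mis k H' c (z i) a := by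
    intro i a
    rw [hM]
    simp only [Finset.mem_filter]
    rfl
  have hMT : ∀ i, i ≤ p₀ → M i ⊆ T := by
    intro i hi a ha
    obtain ⟨l, hl1, hl2, hval⟩ := hC i hi a ((hMis i a).1 ha)
    rw [hT]
    exact Finset.mem_image.2 ⟨l, Finset.mem_Icc.2 ⟨hl1, hl2⟩, hval⟩
  -- the presence count at a vertex is at most its degree in H'
  have hpres_card : ∀ v : V, ((Finset.Icc 1 k).filter (fun a => Pres H' c v a)).card ≤
      H'.degree v := by
    intro v
    have hsub : (Finset.Icc 1 k).filter (fun a => Pres H' c v a) ⊆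
        (H'.neighborFinset v).image (fun w => c s(v, w)) := by
      intro a ha
      obtain ⟨u, hu, hval⟩ := (Finset.mem_filter.1 ha).2
      exact Finset.mem_image.2 ⟨u, by simpa using hu, hval⟩
    calc ((Finset.Icc 1 k).filter (fun a => Pres H' c v a)).card
        ≤ ((H'.neighborFinset v).image (fun w => c s(v, w))).card := Finset.card_le_card hsub
      _ ≤ (H'.neighborFinset v).card := Finset.card_image_le
      _ = H'.degree v := rfl
  have hsplit : ∀ v : V, ((Finset.Icc 1 k).filter (fun a => Pres H' c v a)).card +
      ((Finset.Icc 1 k).filter (fun a => ¬ Pres H' c v a)).card = k := by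
    intro v
    rw [Finset.card_filter_add_card_filter_not, Nat.card_Icc]
    omega
  have hMcard : ∀ i, (M i).card = ((Finset.Icc 1 k).filter
      (fun a => ¬ Pres H' c (z i) a)).card := fun i => by rw [hM]
  have hdx : H'.degree x = H.degree x - 1 := by
    rw [hH', del_comm]
    exact deg_del_y hxy.symm
  have hdx1 : 1 ≤ H.degree x := by
    rw [← SimpleGraph.card_neighborFinset_eq_degree]
    exact Finset.card_pos.2 ⟨y, by simpa using hxy⟩
  have hM0 : k + 1 ≤ (M 0).card + H.degree x := by
    have h1 := hsplit x
    have h2 := hpres_card x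
    have h3 : (M 0).card = ((Finset.Icc 1 k).filter (fun a => ¬ Pres H' c x a)).card := by
      rw [hMcard 0, hz0]
    omega
  have hMi : ∀ i, 1 ≤ i → i ≤ p₀ → H.degree (z i) ≠ k → 1 ≤ (M i).card := by
    intro i h1 h2 h3
    have hdi : H'.degree (z i) = H.degree (z i) := by
      rw [hH']
      exact deg_del_other_s7 (hzx i h1 h2) (hadj i h2).ne'
    have h4 := hsplit (z i)
    have h5 := hpres_card (z i)
    have h6 := hdeg (z i)
    have h7 := hMcard i
    omega
  set N := (Finset.Icc 1 p₀).filter (fun l => ¬ H.degree (z l) = k) with hN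
  set B := (Finset.Icc 1 p₀).filter (fun l => H.degree (z l) = k) with hB
  have hBN : B.card + N.card = p₀ := by
    rw [hB, hN, Finset.card_filter_add_card_filter_not, Nat.card_Icc]
    omega
  have h0N : (0 : ℕ) ∉ N := by
    rw [hN]
    simp
  have hSle : ∀ i ∈ insert 0 N, i ≤ p₀ := by
    intro i hi
    rcases Finset.mem_insert.1 hi with rfl | hi
    · omega
    · rw [hN] at hi
      have := (Finset.mem_filter.1 hi).1
      simp only [Finset.mem_Icc] at this
      omega
  have hdisjS : ∀ i ∈ insert 0 N, ∀ j ∈ insert 0 N, i ≠ j → Disjoint (M i) (M j) := by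
    intro i hi j hj hij
    rw [Finset.disjoint_left]
    intro a hai haj
    exact hdisj i (hSle i hi) j (hSle j hj) hij a ((hMis i a).1 hai) ((hMis j a).1 haj)
  have hsum : ∑ i ∈ insert 0 N, (M i).card ≤ p₀ := by
    rw [← Finset.card_biUnion hdisjS]
    calc ((insert 0 N).biUnion M).card ≤ T.card := by
          apply Finset.card_le_card
          intro a ha
          obtain ⟨i, hi, hai⟩ := Finset.mem_biUnion.1 ha
          exact hMT i (hSle i hi) hai
      _ = p₀ := hTcard
  have hsum2 : (M 0).card + N.card ≤ ∑ i ∈ insert 0 N, (M i).card := by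
    rw [Finset.sum_insert h0N]
    have hle : N.card ≤ ∑ i ∈ N, (M i).card := by
      calc N.card = ∑ _i ∈ N, 1 := by rw [Finset.sum_const, smul_eq_mul, mul_one]
        _ ≤ ∑ i ∈ N, (M i).card := by
            refine Finset.sum_le_sum (fun i hi => ?_)
            rw [hN] at hi
            have h1 := (Finset.mem_filter.1 hi).2
            have h2 := (Finset.mem_filter.1 hi).1
            simp only [Finset.mem_Icc] at h2
            exact hMi i h2.1 h2.2 h1
    omega
  have hBcard : B.card ≤
      (Finset.univ.filter fun u => H.Adj y u ∧ u ≠ x ∧ H.degree u = k).card := by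
    have hinj2 : Set.InjOn z ↑B := by
      intro l hl l' hl' he
      rw [hB] at hl hl'
      simp only [Finset.coe_filter, Set.mem_setOf_eq, Finset.mem_Icc] at hl hl'
      exact hinj l hl.1.2 l' hl'.1.2 he
    calc B.card = (B.image z).card := (Finset.card_image_of_injOn hinj2).symm
      _ ≤ _ := by
          apply Finset.card_le_card
          intro u hu
          obtain ⟨l, hl, rfl⟩ := Finset.mem_image.1 hu
          rw [hB] at hl
          have h1 := (Finset.mem_filter.1 hl).2
          have h2 := (Finset.mem_filter.1 hl).1
          simp only [Finset.mem_Icc] at h2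
          exact Finset.mem_filter.2 ⟨Finset.mem_univ _, hadj l h2.2, hzx l h2.1 h2.2, h1⟩
  omega

end HZaux

namespace HZaux
open scoped Classical
variable {V : Type*} [Fintype V]

lemma col_mono {H' H : SimpleGraph V} {k : ℕ} (hle : H' ≤ H) (h : EdgeColorable H k) :
    EdgeColorable H' k := by
  obtain ⟨c, hr, hp⟩ := h
  have hsub : H'.edgeSet ⊆ H.edgeSet := SimpleGraph.edgeSet_mono hle
  exact ⟨c, fun e he => hr e (hsub he),
    fun e he f hf => hp e (hsub he) f (hsub hf)⟩

lemma col_of_no_edges {H : SimpleGraph V} {k : ℕ} (h : ∀ x y : V, ¬ H.Adj x y) :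
    EdgeColorable H k := by
  refine ⟨fun _ => 1, fun e he => ?_, fun e he => ?_⟩ <;>
  · exfalso
    induction e with
    | h a b => exact h a b ((SimpleGraph.mem_edgeSet _).1 he)

lemma exists_min {k : ℕ} : ∀ (n : ℕ) (H : SimpleGraph V), H.edgeFinset.card ≤ n →
    ¬ EdgeColorable H k → ∃ H', H' ≤ H ∧ ¬ EdgeColorable H' k ∧
      ∀ x y, H'.Adj x y → EdgeColorable (del H' x y) k := by
  intro n
  induction n with
  | zero =>
    intro H hcard hnc
    exfalso
    apply hnc
    apply col_of_no_edges
    intro x y hadj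
    have : s(x, y) ∈ H.edgeFinset := SimpleGraph.mem_edgeFinset.2 ((SimpleGraph.mem_edgeSet _).2 hadj)
    have := Finset.card_pos.2 ⟨_, this⟩
    omega
  | succ n ih =>
    intro H hcard hnc
    by_cases hall : ∀ x y, H.Adj x y → EdgeColorable (del H x y) k
    · exact ⟨H, le_rfl, hnc, hall⟩
    · push_neg at hall
      obtain ⟨x, y, hxy, hncd⟩ := hall
      have hsub : (del H x y).edgeFinset ⊂ H.edgeFinset := by
        refine ⟨SimpleGraph.edgeFinset_mono del_le, fun hss => ?_⟩
        have : s(x, y) ∈ (del H x y).edgeFinset :=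
          hss (SimpleGraph.mem_edgeFinset.2 ((SimpleGraph.mem_edgeSet _).2 hxy))
        have h2 := (del_adj.1 ((SimpleGraph.mem_edgeSet _).1 (SimpleGraph.mem_edgeFinset.1 this))).2
        exact h2 rfl
      have hlt := Finset.card_lt_card hsub
      obtain ⟨H', h1, h2, h3⟩ := ih (del H x y) (by omega) hncd
      exact ⟨H', le_trans h1 del_le, h2, h3⟩

lemma deg_mono {H G : SimpleGraph V} (hle : H ≤ G) (v : V) : H.degree v ≤ G.degree v := by
  rw [← SimpleGraph.card_neighborFinset_eq_degree, ← SimpleGraph.card_neighborFinset_eq_degree]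
  apply Finset.card_le_card
  intro u hu
  rw [SimpleGraph.mem_neighborFinset] at hu ⊢
  exact hle hu

end HZaux

-- If `G` is an HZ-graph (connected, class 2, core of maximum degree at most 2) with
-- maximum degree `Δ ≥ 3`, then every vertex of `G` has at least two neighbors of degree `Δ`.
open Classical in
theorem stmt_7 {V : Type*} [Fintype V] (G : SimpleGraph V) (hconn : G.Connected)
    (hclass2a : EdgeColorable G (G.maxDegree + 1))
    (hclass2b : ¬ EdgeColorable G G.maxDegree)
    (hcore : ∀ v, (G.induce {v : V | G.degree v = G.maxDegree}).degree v ≤ 2)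
    (hΔ : 3 ≤ G.maxDegree) :
    ∀ v : V, 2 ≤ ((G.neighborFinset v).filter fun w => G.degree w = G.maxDegree).card := by
  classical
  intro v
  obtain ⟨H, hHG, hHnc, hHmin⟩ := HZaux.exists_min G.edgeFinset.card G le_rfl hclass2b
  have hdegH : ∀ u, H.degree u ≤ G.maxDegree :=
    fun u => le_trans (HZaux.deg_mono hHG u) (G.degree_le_maxDegree u)
  have hGdeg : ∀ u, G.degree u ≤ G.maxDegree := G.degree_le_maxDegree
  have hval : ∀ x y, H.Adj x y → G.maxDegree + 1 ≤ H.degree x +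
      (Finset.univ.filter fun u => H.Adj y u ∧ u ≠ x ∧ H.degree u = G.maxDegree).card :=
    fun x y hxy => HZaux.VAL_s7 hxy (hHmin x y hxy) hHnc hdegH
  have hHGadj : ∀ {a b : V}, H.Adj a b → G.Adj a b := fun h => hHG h
  have kH2kG : ∀ u, H.degree u = G.maxDegree → G.degree u = G.maxDegree := by
    intro u h
    have h1 := HZaux.deg_mono hHG u
    have h2 := hGdeg u
    omega
  -- hcore in counting form
  have hGcount : ∀ u, G.degree u = G.maxDegree →
      (Finset.univ.filter fun w => G.Adj u w ∧ G.degree w = G.maxDegree).card ≤ 2 := by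
    intro u hu
    set S := {v : V | G.degree v = G.maxDegree} with hS
    have huS : u ∈ S := hu
    have hbound := hcore ⟨u, huS⟩
    refine le_trans ?_ hbound
    rw [← SimpleGraph.card_neighborFinset_eq_degree]
    refine Finset.card_le_card_of_injOn
      (fun w => if h : w ∈ S then (⟨w, h⟩ : ↥S) else ⟨u, huS⟩) ?_ ?_
    · intro w hw
      rw [Finset.mem_coe, Finset.mem_filter] at hw
      have hwS : w ∈ S := hw.2.2
      beta_reduce
      rw [dif_pos hwS, Finset.mem_coe, SimpleGraph.mem_neighborFinset]
      exact hw.2.1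
    · intro w hw w' hw' he
      simp only [Finset.coe_filter, Set.mem_setOf_eq] at hw hw'
      beta_reduce at he
      rw [dif_pos (show w ∈ S from hw.2.2), dif_pos (show w' ∈ S from hw'.2.2)] at he
      exact congrArg Subtype.val he
  -- every vertex with an H-edge has two H-neighbors of max degree
  have two : ∀ u w, H.Adj u w → ∃ n₁ n₂, n₁ ≠ n₂ ∧ H.Adj u n₁ ∧ H.Adj u n₂ ∧
      H.degree n₁ = G.maxDegree ∧ H.degree n₂ = G.maxDegree := by
    intro u w huw
    have h1 := hval w u huw.symm
    by_cases hdw : H.degree w = G.maxDegree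
    · have hC : 1 ≤ (Finset.univ.filter fun z => H.Adj u z ∧ z ≠ w ∧
          H.degree z = G.maxDegree).card := by
        have := hdegH w
        omega
      obtain ⟨n₁, hn₁⟩ := Finset.card_pos.1 hC
      rw [Finset.mem_filter] at hn₁
      exact ⟨n₁, w, hn₁.2.2.1, hn₁.2.1, huw, hn₁.2.2.2, hdw⟩
    · have hdw' : H.degree w < G.maxDegree := lt_of_le_of_ne (hdegH w) hdw
      have hC : 1 < (Finset.univ.filter fun z => H.Adj u z ∧ z ≠ w ∧
          H.degree z = G.maxDegree).card := by omega
      obtain ⟨n₁, hn₁, n₂, hn₂, hne⟩ := Finset.one_lt_card.1 hC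
      rw [Finset.mem_filter] at hn₁ hn₂
      exact ⟨n₁, n₂, hne, hn₁.2.1, hn₂.2.1, hn₁.2.2.2, hn₂.2.2.2⟩
  -- closure: G-edges at a vertex with an H-edge are H-edges
  have hclosed : ∀ u, (∃ w0, H.Adj u w0) → ∀ w, G.Adj u w → H.Adj u w := by
    intro u hu w hGuw
    by_contra hnH
    obtain ⟨w0, hw0⟩ := hu
    obtain ⟨n₁, n₂, hne, ha1, ha2, hd1, hd2⟩ := two u w0 hw0
    have hlt : H.degree u < G.degree u := by
      rw [← SimpleGraph.card_neighborFinset_eq_degree, ← SimpleGraph.card_neighborFinset_eq_degree]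
      apply Finset.card_lt_card
      constructor
      · intro a ha
        rw [SimpleGraph.mem_neighborFinset] at ha ⊢
        exact hHGadj ha
      · intro hss
        have := hss ((SimpleGraph.mem_neighborFinset _ _ _).2 hGuw)
        rw [SimpleGraph.mem_neighborFinset] at this
        exact hnH this
    have hn₁G : G.degree n₁ = G.maxDegree := kH2kG n₁ hd1
    have h2 := hval u n₁ ha1
    have hF₁sub : (Finset.univ.filter fun z => H.Adj n₁ z ∧ z ≠ u ∧
        H.degree z = G.maxDegree) ⊆
        (Finset.univ.filter fun z => G.Adj n₁ z ∧ G.degree z = G.maxDegree) := by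
      intro z hz
      rw [Finset.mem_filter] at hz ⊢
      exact ⟨Finset.mem_univ _, hHGadj hz.2.1, kH2kG z hz.2.2.2⟩
    have hF₁le : (Finset.univ.filter fun z => H.Adj n₁ z ∧ z ≠ u ∧
        H.degree z = G.maxDegree).card ≤ 2 :=
      le_trans (Finset.card_le_card hF₁sub) (hGcount n₁ hn₁G)
    have hGu : G.degree u = G.maxDegree := by
      have := hGdeg u
      omega
    have huF₁ : u ∉ (Finset.univ.filter fun z => H.Adj n₁ z ∧ z ≠ u ∧
        H.degree z = G.maxDegree) := by
      rw [Finset.mem_filter]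
      rintro ⟨-, -, h, -⟩
      exact h rfl
    have hins : insert u (Finset.univ.filter fun z => H.Adj n₁ z ∧ z ≠ u ∧
        H.degree z = G.maxDegree) ⊆
        (Finset.univ.filter fun z => G.Adj n₁ z ∧ G.degree z = G.maxDegree) := by
      intro z hz
      rcases Finset.mem_insert.1 hz with rfl | hz
      · exact Finset.mem_filter.2 ⟨Finset.mem_univ _, (hHGadj ha1).symm, hGu⟩
      · exact hF₁sub hz
    have h3 : 3 ≤ (Finset.univ.filter fun z => G.Adj n₁ z ∧
        G.degree z = G.maxDegree).card := by
      have hcardins := Finset.card_insert_of_notMem huF₁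
      have := Finset.card_le_card hins
      omega
    have := hGcount n₁ hn₁G
    omega
  -- H has an edge
  obtain ⟨x₀, y₀, hx₀⟩ : ∃ a b, H.Adj a b := by
    by_contra hno
    push_neg at hno
    exact hHnc (HZaux.col_of_no_edges hno)
  -- by connectivity every vertex has an H-edge
  have hall : ∀ u, ∃ w, H.Adj u w := by
    intro u
    obtain ⟨p⟩ := hconn.preconnected x₀ u
    have key : ∀ {a b : V} (q : G.Walk a b), (∃ w, H.Adj a w) → ∃ w, H.Adj b w := by
      intro a b q
      induction q with
      | nil => exact id
      | cons hadj q ih =>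
        intro h
        exact ih ⟨_, (hclosed _ h _ hadj).symm⟩
    exact key p ⟨y₀, hx₀⟩
  obtain ⟨w, hw⟩ := hall v
  obtain ⟨n₁, n₂, hne, ha1, ha2, hd1, hd2⟩ := two v w hw
  refine Finset.one_lt_card.2 ⟨n₁, ?_, n₂, ?_, hne⟩
  · exact Finset.mem_filter.2 ⟨(SimpleGraph.mem_neighborFinset _ _ _).2 (hHGadj ha1), kH2kG _ hd1⟩
  · exact Finset.mem_filter.2 ⟨(SimpleGraph.mem_neighborFinset _ _ _).2 (hHGadj ha2), kH2kG _ hd2⟩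
end
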